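/- arXiv:2109.14309 — 12 statements merged into one kernel-verified Lean document; each statement's English description precedes it below -/
import Mathlib

section
/- The square loss λ(f,ω) = (f-ω)^2 with f ∈ [0,1] and ω ∈ {0,1} is η-mixable for every 0 < η ≤ 2: for any probability vector (q_1,…,q_N) and forecasts f_1,…,f_N ∈ [0,1], there exists f ∈ [0,1] such that exp(-η(f-ω)^2) ≥ Σ_i q_i exp(-η(f_i-ω)^2) for both ω = 0 and ω = 1. -/
open Finset

private lemma phi_mono {η : ℝ} (hη2 : η ≤ 2) :
    MonotoneOn (fun t : ℝ => Real.log t - Real.log (1 - t) - 2*η*t) (Set.Ioo (0:ℝ) 1) := by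
  have hderiv : ∀ t ∈ Set.Ioo (0:ℝ) 1,
      HasDerivAt (fun t : ℝ => Real.log t - Real.log (1 - t) - 2*η*t)
        (1/t + 1/(1-t) - 2*η) t := by
    intro t ht
    obtain ⟨ht0, ht1⟩ := ht
    have h1t : (1:ℝ) - t ≠ 0 := by linarith
    have hl1 : HasDerivAt Real.log t⁻¹ t := Real.hasDerivAt_log (ne_of_gt ht0)
    have hsub : HasDerivAt (fun t : ℝ => 1 - t) (-1) t := (hasDerivAt_id t).const_sub 1
    have hl2 : HasDerivAt (fun t : ℝ => Real.log (1 - t)) ((1-t)⁻¹ * (-1)) t :=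
      (Real.hasDerivAt_log h1t).comp t hsub
    have hlin : HasDerivAt (fun t : ℝ => 2*η*t) (2*η) t := by
      simpa using (hasDerivAt_id t).const_mul (2*η)
    have h := (hl1.sub hl2).sub hlin
    refine h.congr_deriv ?_
    ring
  apply monotoneOn_of_deriv_nonneg (convex_Ioo 0 1)
  · exact fun t ht => ((hderiv t ht).continuousAt).continuousWithinAt
  · rw [interior_Ioo]
    exact fun t ht => ((hderiv t ht).differentiableAt).differentiableWithinAt
  · rw [interior_Ioo]
    intro t ht
    rw [(hderiv t ht).deriv]
    obtain ⟨ht0, ht1⟩ := ht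
    have h1t : (0:ℝ) < 1 - t := by linarith
    have hq : t * (1-t) ≤ 1/4 := by nlinarith [sq_nonneg (t - 1/2)]
    have hpos : 0 < t * (1-t) := by positivity
    have e1 : 1/t + 1/(1-t) = 1/(t*(1-t)) := by field_simp; ring
    have e2 : (4:ℝ) ≤ 1/(t*(1-t)) := by
      rw [le_div_iff₀ hpos]; nlinarith
    linarith

private lemma key {η u a : ℝ} (hη0 : 0 < η) (hη2 : η ≤ 2)
    (hu0 : 0 ≤ u) (ha1 : a ≤ 1) (h : u ≤ a) :
    (1-a) * u * Real.exp (2*η*(a-u)) ≤ a * (1-u) := by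
  rcases eq_or_lt_of_le hu0 with h0 | hu0'
  · rw [← h0]
    simp
    nlinarith
  rcases eq_or_lt_of_le ha1 with h1 | ha1'
  · rw [h1]
    simp
    nlinarith
  have ha0' : 0 < a := lt_of_lt_of_le hu0' h
  have hu1' : u < 1 := lt_of_le_of_lt h ha1'
  have hmono := phi_mono hη2 (Set.mem_Ioo.mpr ⟨hu0', hu1'⟩) (Set.mem_Ioo.mpr ⟨ha0', ha1'⟩) h
  simp only at hmono
  have hlog : Real.log (1-a) + Real.log u + 2*η*(a-u) ≤ Real.log a + Real.log (1-u) := by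
    linarith
  have h1a : (0:ℝ) < 1 - a := by linarith
  have h1u : (0:ℝ) < 1 - u := by linarith
  calc (1-a) * u * Real.exp (2*η*(a-u))
      = Real.exp (Real.log (1-a) + Real.log u + 2*η*(a-u)) := by
        rw [Real.exp_add, Real.exp_add, Real.exp_log h1a, Real.exp_log hu0']
    _ ≤ Real.exp (Real.log a + Real.log (1-u)) := Real.exp_le_exp.mpr hlog
    _ = a * (1-u) := by rw [Real.exp_add, Real.exp_log ha0', Real.exp_log h1u]

private lemma tangent {η a : ℝ} (hη0 : 0 < η) (hη2 : η ≤ 2) (ha0 : 0 < a) (ha1 : a ≤ 1)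
    {u : ℝ} (hu : u ∈ Set.Icc (0:ℝ) 1) :
    Real.exp (-η*(1-u)^2) + ((1-a)/a * Real.exp (η*(2*a-1))) * Real.exp (-η*u^2)
    ≤ Real.exp (-η*(1-a)^2) + ((1-a)/a * Real.exp (η*(2*a-1))) * Real.exp (-η*a^2) := by
  set K := (1-a)/a * Real.exp (η*(2*a-1)) with hK
  set F := fun u : ℝ => Real.exp (-η*(1-u)^2) + K * Real.exp (-η*u^2) with hF
  have hder : ∀ x : ℝ, HasDerivAt F
      (2*η*(1-x)*Real.exp (-η*(1-x)^2) - K*(2*η*x)*Real.exp (-η*x^2)) x := by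
    intro x
    have h1 : HasDerivAt (fun u : ℝ => -η*(1-u)^2) (2*η*(1-x)) x := by
      have h1a : HasDerivAt (fun u : ℝ => (1-u)^2) (2*(1-x)^1*(-1)) x :=
        ((hasDerivAt_id x).const_sub 1).pow 2
      have := h1a.const_mul (-η)
      exact this.congr_deriv (by ring)
    have h2 : HasDerivAt (fun u : ℝ => -η*u^2) (-η*(2*x)) x := by
      have h2a : HasDerivAt (fun u : ℝ => u^2) (2*x^1*1) x := (hasDerivAt_id x).pow 2
      have := h2a.const_mul (-η)
      exact this.congr_deriv (by ring)
    have := (h1.exp).add ((h2.exp).const_mul K)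
    exact this.congr_deriv (by ring)
  have hkey1 : ∀ x : ℝ, 0 ≤ x → x ≤ a →
      K * x * Real.exp (-η*x^2) ≤ (1-x) * Real.exp (-η*(1-x)^2) := by
    intro x hx0 hxa
    have hk := key hη0 hη2 hx0 ha1 hxa
    have hE : Real.exp (η*(2*a-1)) * Real.exp (-η*x^2)
        = Real.exp (2*η*(a-x)) * Real.exp (-η*(1-x)^2) := by
      rw [← Real.exp_add, ← Real.exp_add]; ring_nf
    rw [hK]
    have heq : (1-a)/a * Real.exp (η*(2*a-1)) * x * Real.exp (-η*x^2)
        = ((1-a)*x*Real.exp (2*η*(a-x))) * Real.exp (-η*(1-x)^2) / a := by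
      calc (1-a)/a * Real.exp (η*(2*a-1)) * x * Real.exp (-η*x^2)
          = (1-a)/a * x * (Real.exp (η*(2*a-1)) * Real.exp (-η*x^2)) := by ring
        _ = (1-a)/a * x * (Real.exp (2*η*(a-x)) * Real.exp (-η*(1-x)^2)) := by rw [hE]
        _ = ((1-a)*x*Real.exp (2*η*(a-x))) * Real.exp (-η*(1-x)^2) / a := by ring
    rw [heq, div_le_iff₀ ha0]
    have := mul_le_mul_of_nonneg_right hk (Real.exp_pos (-η*(1-x)^2)).le
    linarith
  have hkey2 : ∀ x : ℝ, a ≤ x → x ≤ 1 →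
      (1-x) * Real.exp (-η*(1-x)^2) ≤ K * x * Real.exp (-η*x^2) := by
    intro x hax hx1
    have hk := key hη0 hη2 ha0.le hx1 hax
    have hmul := mul_le_mul_of_nonneg_right hk (Real.exp_pos (2*η*(a-x))).le
    have hE0 : Real.exp (2*η*(x-a)) * Real.exp (2*η*(a-x)) = 1 := by
      rw [← Real.exp_add, show 2*η*(x-a)+2*η*(a-x) = 0 by ring, Real.exp_zero]
    have hk2 : a*(1-x) ≤ (1-a)*x*Real.exp (2*η*(a-x)) := by
      calc a*(1-x) = (1-x)*a*(Real.exp (2*η*(x-a)) * Real.exp (2*η*(a-x))) := by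
            rw [hE0]; ring
        _ = (1-x)*a*Real.exp (2*η*(x-a)) * Real.exp (2*η*(a-x)) := by ring
        _ ≤ (1-a)*x*Real.exp (2*η*(a-x)) := by
            have h5 : (1-x)*a*Real.exp (2*η*(x-a)) ≤ x*(1-a) := by linarith [hk]
            have h6 := mul_le_mul_of_nonneg_right h5 (Real.exp_pos (2*η*(a-x))).le
            linarith [h6]
    have hE : Real.exp (η*(2*a-1)) * Real.exp (-η*x^2)
        = Real.exp (2*η*(a-x)) * Real.exp (-η*(1-x)^2) := by
      rw [← Real.exp_add, ← Real.exp_add]; ring_nf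
    rw [hK]
    have heq : (1-a)/a * Real.exp (η*(2*a-1)) * x * Real.exp (-η*x^2)
        = ((1-a)*x*Real.exp (2*η*(a-x))) * Real.exp (-η*(1-x)^2) / a := by
      calc (1-a)/a * Real.exp (η*(2*a-1)) * x * Real.exp (-η*x^2)
          = (1-a)/a * x * (Real.exp (η*(2*a-1)) * Real.exp (-η*x^2)) := by ring
        _ = (1-a)/a * x * (Real.exp (2*η*(a-x)) * Real.exp (-η*(1-x)^2)) := by rw [hE]
        _ = ((1-a)*x*Real.exp (2*η*(a-x))) * Real.exp (-η*(1-x)^2) / a := by ring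
    rw [heq, le_div_iff₀ ha0]
    have := mul_le_mul_of_nonneg_right hk2 (Real.exp_pos (-η*(1-x)^2)).le
    linarith
  have hmono : MonotoneOn F (Set.Icc 0 a) := by
    apply monotoneOn_of_deriv_nonneg (convex_Icc 0 a)
    · exact fun x _ => (hder x).continuousAt.continuousWithinAt
    · exact fun x _ => (hder x).differentiableAt.differentiableWithinAt
    · intro x hx
      rw [interior_Icc] at hx
      rw [(hder x).deriv]
      have h1 := hkey1 x hx.1.le hx.2.le
      nlinarith [h1, hη0]
  have hanti : AntitoneOn F (Set.Icc a 1) := by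
    apply antitoneOn_of_deriv_nonpos (convex_Icc a 1)
    · exact fun x _ => (hder x).continuousAt.continuousWithinAt
    · exact fun x _ => (hder x).differentiableAt.differentiableWithinAt
    · intro x hx
      rw [interior_Icc] at hx
      rw [(hder x).deriv]
      have h1 := hkey2 x hx.1.le hx.2.le
      nlinarith [h1, hη0]
  show F u ≤ F a
  rcases le_total u a with h | h
  · exact hmono ⟨hu.1, h⟩ ⟨ha0.le, le_refl a⟩ h
  · exact hanti ⟨le_refl a, ha1⟩ ⟨h, hu.2⟩ h

/-- The square loss (f-ω)² on [0,1]×{0,1} is η-mixable for every 0 < η ≤ 2. -/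
theorem square_loss_mixable (η : ℝ) (hη0 : 0 < η) (hη2 : η ≤ 2)
    (N : ℕ) (q : Fin N → ℝ) (hq0 : ∀ i, 0 ≤ q i) (hq1 : ∑ i, q i = 1)
    (f : Fin N → ℝ) (hf : ∀ i, f i ∈ Set.Icc (0:ℝ) 1) :
    ∃ g ∈ Set.Icc (0:ℝ) 1, ∀ ω ∈ ({0, 1} : Set ℝ),
      ∑ i, q i * Real.exp (-η * (f i - ω) ^ 2) ≤ Real.exp (-η * (g - ω) ^ 2) := by
  have hterm_le : ∀ i, q i * Real.exp (-η * (f i) ^ 2) ≤ q i := by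
    intro i
    have h1 : Real.exp (-η * (f i) ^ 2) ≤ 1 := Real.exp_le_one_iff.mpr (by nlinarith [sq_nonneg (f i)])
    nlinarith [hq0 i]
  have hS0le1 : ∑ i, q i * Real.exp (-η * (f i) ^ 2) ≤ 1 := by
    rw [← hq1]; exact Finset.sum_le_sum (fun i _ => hterm_le i)
  have hterm_ge : ∀ i, q i * Real.exp (-η) ≤ q i * Real.exp (-η * (f i) ^ 2) := by
    intro i
    apply mul_le_mul_of_nonneg_left _ (hq0 i)
    apply Real.exp_le_exp.mpr
    obtain ⟨h0, h1⟩ := hf i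
    have hsq : f i ^ 2 ≤ 1 := by nlinarith
    nlinarith [mul_nonneg hη0.le (by linarith : (0:ℝ) ≤ 1 - f i ^ 2)]
  have hS0ge : Real.exp (-η) ≤ ∑ i, q i * Real.exp (-η * (f i) ^ 2) := by
    calc Real.exp (-η) = ∑ i, q i * Real.exp (-η) := by rw [← Finset.sum_mul, hq1, one_mul]
      _ ≤ _ := Finset.sum_le_sum (fun i _ => hterm_ge i)
  have hS0pos : 0 < ∑ i, q i * Real.exp (-η * (f i) ^ 2) :=
    lt_of_lt_of_le (Real.exp_pos _) hS0ge
  rcases eq_or_lt_of_le hS0le1 with hS0eq | hS0lt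
  · -- boundary case: the mixture at ω = 0 equals 1, so all forecasts with positive weight are 0
    refine ⟨0, ⟨le_refl 0, zero_le_one⟩, ?_⟩
    intro ω hω
    have hzero : ∀ i ∈ Finset.univ, q i - q i * Real.exp (-η * (f i) ^ 2) = 0 := by
      rw [← Finset.sum_eq_zero_iff_of_nonneg (fun i _ => by linarith [hterm_le i])]
      rw [Finset.sum_sub_distrib, hq1]
      linarith
    have hfi : ∀ i, q i * Real.exp (-η * (f i - 1) ^ 2) = q i * Real.exp (-η) := by
      intro i
      rcases eq_or_lt_of_le (hq0 i) with hqi | hqi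
      · rw [← hqi]; ring
      · have h1 := hzero i (Finset.mem_univ i)
        have h2 : q i * Real.exp (-η * (f i) ^ 2) = q i * 1 := by rw [mul_one]; linarith
        have h3 : Real.exp (-η * (f i) ^ 2) = 1 := mul_left_cancel₀ (ne_of_gt hqi) h2
        have h4 : -η * (f i) ^ 2 = 0 := (Real.exp_eq_one_iff _).mp h3
        have h5 : f i = 0 := by
          have h6 : (f i) ^ 2 = 0 := by
            rcases mul_eq_zero.mp h4 with h | h
            · exfalso; simp at h; exact absurd h (ne_of_gt hη0)
            · exact h
          exact pow_eq_zero_iff (n := 2) (by norm_num) |>.mp h6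
        rw [h5]; norm_num
    simp only [Set.mem_insert_iff, Set.mem_singleton_iff] at hω
    rcases hω with rfl | rfl
    · simp only [sub_zero]
      rw [hS0eq]
      norm_num
    · calc ∑ i, q i * Real.exp (-η * (f i - 1) ^ 2)
          = ∑ i, q i * Real.exp (-η) := Finset.sum_congr rfl (fun i _ => hfi i)
        _ = Real.exp (-η) := by rw [← Finset.sum_mul, hq1, one_mul]
        _ ≤ Real.exp (-η * ((0:ℝ) - 1) ^ 2) := by norm_num
  · -- main case
    have hlog : Real.log (∑ i, q i * Real.exp (-η * (f i) ^ 2)) < 0 :=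
      Real.log_neg hS0pos hS0lt
    set L := Real.log (∑ i, q i * Real.exp (-η * (f i) ^ 2)) with hL
    have harg0 : 0 ≤ -L / η := div_nonneg (by linarith) hη0.le
    have harg1 : -L / η ≤ 1 := by
      rw [div_le_one hη0]
      have := (Real.le_log_iff_exp_le hS0pos).mpr hS0ge
      rw [← hL] at this
      linarith
    set a := Real.sqrt (-L / η) with ha
    have ha2 : a ^ 2 = -L / η := Real.sq_sqrt harg0
    have ha0 : 0 < a := Real.sqrt_pos.mpr (div_pos (by linarith) hη0)
    have ha1 : a ≤ 1 := Real.sqrt_le_one.mpr harg1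
    have heS0 : Real.exp (-η * a ^ 2) = ∑ i, q i * Real.exp (-η * (f i) ^ 2) := by
      rw [ha2, show -η * (-L / η) = L by field_simp, hL]
      exact Real.exp_log hS0pos
    refine ⟨a, ⟨ha0.le, ha1⟩, ?_⟩
    intro ω hω
    simp only [Set.mem_insert_iff, Set.mem_singleton_iff] at hω
    rcases hω with rfl | rfl
    · simp only [sub_zero]
      rw [heS0]
    · set K := (1 - a) / a * Real.exp (η * (2 * a - 1)) with hKdef
      have htan : ∀ i, Real.exp (-η * (1 - f i) ^ 2) + K * Real.exp (-η * (f i) ^ 2)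
          ≤ Real.exp (-η * (1 - a) ^ 2) + K * Real.exp (-η * a ^ 2) :=
        fun i => tangent hη0 hη2 ha0 ha1 (hf i)
      have step : ∀ i, q i * Real.exp (-η * (f i - 1) ^ 2)
          ≤ q i * (Real.exp (-η * (1 - a) ^ 2) + K * Real.exp (-η * a ^ 2)
              - K * Real.exp (-η * (f i) ^ 2)) := by
        intro i
        rw [show (f i - 1) ^ 2 = (1 - f i) ^ 2 by ring]
        exact mul_le_mul_of_nonneg_left (by linarith [htan i]) (hq0 i)
      have hsum := Finset.sum_le_sum (fun i (_ : i ∈ Finset.univ) => step i)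
      have hC : ∑ i, q i * (Real.exp (-η * (1 - a) ^ 2) + K * Real.exp (-η * a ^ 2)
              - K * Real.exp (-η * (f i) ^ 2))
          = Real.exp (-η * (1 - a) ^ 2) := by
        calc ∑ i, q i * (Real.exp (-η * (1 - a) ^ 2) + K * Real.exp (-η * a ^ 2)
              - K * Real.exp (-η * (f i) ^ 2))
            = (Real.exp (-η * (1 - a) ^ 2) + K * Real.exp (-η * a ^ 2)) * (∑ i, q i)
              - K * (∑ i, q i * Real.exp (-η * (f i) ^ 2)) := by
              rw [Finset.mul_sum, Finset.mul_sum, ← Finset.sum_sub_distrib]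
              exact Finset.sum_congr rfl (fun i _ => by ring)
          _ = Real.exp (-η * (1 - a) ^ 2) := by
              rw [hq1, ← heS0]; ring
      rw [show (a - 1) ^ 2 = (1 - a) ^ 2 by ring]
      calc ∑ i, q i * Real.exp (-η * (f i - 1) ^ 2) ≤ _ := hsum
        _ = Real.exp (-η * (1 - a) ^ 2) := hC
end

section
/- For 0 < η ≤ 2, the substitution function f = 1/2 - (1/(2η)) · ln( (Σ_i q_i e^{-η f_i^2}) / (Σ_i q_i e^{-η(1-f_i)^2}) ) satisfies exp(-η(f-ω)^2) ≥ Σ_i q_i exp(-η(f_i-ω)^2) for ω ∈ {0,1}, given any probability vector (q_1,…,q_N) and forecasts f_1,…,f_N ∈ [0,1]. -/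
open Finset

/-- Hoeffding's lemma (scalar form): the mgf of a centered two-point distribution. -/
lemma hoeffding_scalar (p : ℝ) (hp0 : 0 ≤ p) (hp1 : p ≤ 1) (t : ℝ) :
    (1 - p) * Real.exp (-p * t) + p * Real.exp ((1 - p) * t) ≤ Real.exp (t ^ 2 / 8) := by
  rcases eq_or_lt_of_le hp0 with h0 | h0
  · rw [← h0]
    simp
    positivity
  rcases eq_or_lt_of_le hp1 with h1 | h1
  · rw [h1]
    simp
    positivity
  have hp1' : 0 < 1 - p := by linarith
  set D : ℝ → ℝ := fun s => (1 - p) * Real.exp (-p * s) + p * Real.exp ((1 - p) * s) with hDdef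
  have hDpos : ∀ s, 0 < D s := by
    intro s
    have := Real.exp_pos (-p * s)
    have := Real.exp_pos ((1 - p) * s)
    simp only [hDdef]
    positivity
  set D1 : ℝ → ℝ := fun s => p * (1 - p) * (Real.exp ((1 - p) * s) - Real.exp (-p * s)) with hD1def
  set D2 : ℝ → ℝ := fun s =>
    p * (1 - p) * ((1 - p) * Real.exp ((1 - p) * s) + p * Real.exp (-p * s)) with hD2def
  have hasD : ∀ s, HasDerivAt D (D1 s) s := by
    intro s
    have e1 : HasDerivAt (fun s : ℝ => Real.exp (-p * s)) (Real.exp (-p * s) * (-p * 1)) s :=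
      ((hasDerivAt_id s).const_mul (-p)).exp
    have e2 : HasDerivAt (fun s : ℝ => Real.exp ((1 - p) * s))
        (Real.exp ((1 - p) * s) * ((1 - p) * 1)) s :=
      ((hasDerivAt_id s).const_mul (1 - p)).exp
    have := (e1.const_mul (1 - p)).add (e2.const_mul p)
    refine this.congr_deriv ?_
    simp only [hD1def]
    ring
  have hasD1 : ∀ s, HasDerivAt D1 (D2 s) s := by
    intro s
    have e1 : HasDerivAt (fun s : ℝ => Real.exp (-p * s)) (Real.exp (-p * s) * (-p * 1)) s :=
      ((hasDerivAt_id s).const_mul (-p)).exp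
    have e2 : HasDerivAt (fun s : ℝ => Real.exp ((1 - p) * s))
        (Real.exp ((1 - p) * s) * ((1 - p) * 1)) s :=
      ((hasDerivAt_id s).const_mul (1 - p)).exp
    have := (e2.sub e1).const_mul (p * (1 - p))
    refine this.congr_deriv ?_
    simp only [hD2def]
    ring
  set L1 : ℝ → ℝ := fun s => D1 s / D s with hL1def
  have hasL : ∀ s, HasDerivAt (fun s => Real.log (D s)) (L1 s) s := by
    intro s
    exact (hasD s).log (hDpos s).ne'
  have hasL1 : ∀ s, HasDerivAt L1 ((D2 s * D s - D1 s * D1 s) / (D s) ^ 2) s := by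
    intro s
    exact (hasD1 s).div (hasD s) (hDpos s).ne'
  have hL2le : ∀ s, (D2 s * D s - D1 s * D1 s) / (D s) ^ 2 ≤ 1 / 4 := by
    intro s
    rw [div_le_iff₀ (by positivity)]
    have hx := Real.exp_pos (-p * s)
    have hy := Real.exp_pos ((1 - p) * s)
    simp only [hDdef, hD1def, hD2def]
    nlinarith [sq_nonneg ((1 - p) * Real.exp (-p * s) - p * Real.exp ((1 - p) * s)),
      mul_pos hx hy, mul_pos (mul_pos h0 hp1') (mul_pos hx hy)]
  -- h s = s^2/8 - log (D s)
  set h : ℝ → ℝ := fun s => s ^ 2 / 8 - Real.log (D s) with hhdef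
  set h1 : ℝ → ℝ := fun s => s / 4 - L1 s with hh1def
  have hasH : ∀ s, HasDerivAt h (h1 s) s := by
    intro s
    have e : HasDerivAt (fun s : ℝ => s ^ 2 / 8) (s / 4) s := by
      have := (hasDerivAt_pow 2 s).div_const 8
      refine this.congr_deriv ?_
      ring
    exact e.sub (hasL s)
  have hasH1 : ∀ s, HasDerivAt h1 (1 / 4 - (D2 s * D s - D1 s * D1 s) / (D s) ^ 2) s := by
    intro s
    have e : HasDerivAt (fun s : ℝ => s / 4) (1 / 4) s := by
      have := (hasDerivAt_id s).div_const 4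
      exact this
    exact e.sub (hasL1 s)
  have hmono : Monotone h1 := by
    apply monotone_of_deriv_nonneg
    · exact fun s => (hasH1 s).differentiableAt
    · intro s
      rw [(hasH1 s).deriv]
      linarith [hL2le s]
  have hD0 : D 0 = 1 := by simp [hDdef]
  have hL10 : h1 0 = 0 := by
    norm_num [hh1def, hL1def, hD1def]
  have hh0 : h 0 = 0 := by simp [hhdef, hD0]
  have hkey : 0 ≤ h t := by
    rcases le_total 0 t with ht | ht
    · have hm : MonotoneOn h (Set.Ici 0) := by
        apply monotoneOn_of_deriv_nonneg (convex_Ici 0)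
        · exact (Differentiable.continuous (fun s => (hasH s).differentiableAt)).continuousOn
        · exact fun s _ => (hasH s).differentiableAt.differentiableWithinAt
        · intro s hs
          rw [interior_Ici] at hs
          rw [(hasH s).deriv]
          have := hmono (le_of_lt hs)
          simp only [hL10] at this
          linarith
      have := hm (Set.self_mem_Ici) (Set.mem_Ici.2 ht) ht
      linarith [hh0 ▸ this]
    · have hm : AntitoneOn h (Set.Iic 0) := by
        apply antitoneOn_of_deriv_nonpos (convex_Iic 0)
        · exact (Differentiable.continuous (fun s => (hasH s).differentiableAt)).continuousOn
        · exact fun s _ => (hasH s).differentiableAt.differentiableWithinAt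
        · intro s hs
          rw [interior_Iic] at hs
          rw [(hasH s).deriv]
          have := hmono (le_of_lt hs)
          simp only [hL10] at this
          linarith
      have := hm (Set.mem_Iic.2 ht) (Set.self_mem_Iic) ht
      linarith [hh0 ▸ this]
  have : Real.log (D t) ≤ t ^ 2 / 8 := by
    simp only [hhdef] at hkey
    linarith
  calc D t = Real.exp (Real.log (D t)) := (Real.exp_log (hDpos t)).symm
    _ ≤ Real.exp (t ^ 2 / 8) := Real.exp_le_exp.2 this

/-- Pointwise tangent inequality for the square-loss curve. -/
lemma pointwise_tangent (η p x : ℝ) (hη0 : 0 < η) (hη2 : η ≤ 2)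
    (hp0 : 0 ≤ p) (hp1 : p ≤ 1) :
    (1 - p) * Real.exp (-η * (1 - p) ^ 2) * Real.exp (-η * x ^ 2) +
      p * Real.exp (-η * p ^ 2) * Real.exp (-η * (1 - x) ^ 2) ≤
      Real.exp (-η * p ^ 2) * Real.exp (-η * (1 - p) ^ 2) := by
  have K := hoeffding_scalar p hp0 hp1 (2 * η * (x - p))
  have hstep : (1 - p) * Real.exp (-p * (2 * η * (x - p))) +
      p * Real.exp ((1 - p) * (2 * η * (x - p))) ≤ Real.exp (η * (x - p) ^ 2) := by
    refine K.trans (Real.exp_le_exp.2 ?_)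
    nlinarith [sq_nonneg (x - p), mul_nonneg (mul_nonneg hη0.le (by linarith : (0:ℝ) ≤ 2 - η)) (sq_nonneg (x - p))]
  have hE : (0:ℝ) < Real.exp (-η * (x - p) ^ 2) := Real.exp_pos _
  have hmul := mul_le_mul_of_nonneg_left hstep hE.le
  calc (1 - p) * Real.exp (-η * (1 - p) ^ 2) * Real.exp (-η * x ^ 2) +
      p * Real.exp (-η * p ^ 2) * Real.exp (-η * (1 - x) ^ 2)
      = (Real.exp (-η * p ^ 2) * Real.exp (-η * (1 - p) ^ 2)) *
        (Real.exp (-η * (x - p) ^ 2) *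
          ((1 - p) * Real.exp (-p * (2 * η * (x - p))) +
            p * Real.exp ((1 - p) * (2 * η * (x - p))))) := by
        rw [mul_add, mul_add]
        congr 1
        · rw [show Real.exp (-η * p ^ 2) * Real.exp (-η * (1 - p) ^ 2) *
              (Real.exp (-η * (x - p) ^ 2) * ((1 - p) * Real.exp (-p * (2 * η * (x - p))))) =
              (1 - p) * (Real.exp (-η * (1 - p) ^ 2) *
                (Real.exp (-η * p ^ 2) * Real.exp (-η * (x - p) ^ 2) *
                  Real.exp (-p * (2 * η * (x - p))))) by ring]
          rw [← Real.exp_add, ← Real.exp_add]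
          rw [show -η * p ^ 2 + -η * (x - p) ^ 2 + -p * (2 * η * (x - p)) = -η * x ^ 2 by ring]
          ring
        · rw [show Real.exp (-η * p ^ 2) * Real.exp (-η * (1 - p) ^ 2) *
              (Real.exp (-η * (x - p) ^ 2) * (p * Real.exp ((1 - p) * (2 * η * (x - p))))) =
              p * (Real.exp (-η * p ^ 2) *
                (Real.exp (-η * (1 - p) ^ 2) *
                  Real.exp (-η * (x - p) ^ 2) * Real.exp ((1 - p) * (2 * η * (x - p))))) by ring]
          rw [← Real.exp_add, ← Real.exp_add]
          rw [show -η * (1 - p) ^ 2 + -η * (x - p) ^ 2 + (1 - p) * (2 * η * (x - p)) =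
            -η * (1 - x) ^ 2 by ring]
          ring
    _ ≤ (Real.exp (-η * p ^ 2) * Real.exp (-η * (1 - p) ^ 2)) *
        (Real.exp (-η * (x - p) ^ 2) * Real.exp (η * (x - p) ^ 2)) := by
        apply mul_le_mul_of_nonneg_left _ (by positivity)
        exact hmul
    _ = Real.exp (-η * p ^ 2) * Real.exp (-η * (1 - p) ^ 2) := by
        simp only [← Real.exp_add]
        congr 1
        ring

/-- The explicit substitution function for the square loss realizes η-mixability
for 0 < η ≤ 2. -/
theorem square_loss_subst (η : ℝ) (hη0 : 0 < η) (hη2 : η ≤ 2)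
    (N : ℕ) (q : Fin N → ℝ) (hq0 : ∀ i, 0 ≤ q i) (hq1 : ∑ i, q i = 1)
    (f : Fin N → ℝ) (hf : ∀ i, f i ∈ Set.Icc (0:ℝ) 1) :
    ∀ ω ∈ ({0, 1} : Set ℝ),
      ∑ i, q i * Real.exp (-η * (f i - ω) ^ 2) ≤
        Real.exp (-η * ((1/2 - (1/(2*η)) *
          Real.log ((∑ i, q i * Real.exp (-η * (f i) ^ 2)) /
            (∑ i, q i * Real.exp (-η * (1 - f i) ^ 2)))) - ω) ^ 2) := by
  set A := ∑ i, q i * Real.exp (-η * (f i) ^ 2) with hAdef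
  set B := ∑ i, q i * Real.exp (-η * (1 - f i) ^ 2) with hBdef
  set F := 1/2 - (1/(2*η)) * Real.log (A / B) with hFdef
  have hfi0 : ∀ i, 0 ≤ f i := fun i => (hf i).1
  have hfi1 : ∀ i, f i ≤ 1 := fun i => (hf i).2
  -- positivity of A and B
  have hA0 : 0 < A := by
    have : Real.exp (-η) ≤ A := by
      calc Real.exp (-η) = ∑ i, q i * Real.exp (-η) := by
            rw [← Finset.sum_mul, hq1, one_mul]
        _ ≤ A := by
            apply Finset.sum_le_sum
            intro i _
            apply mul_le_mul_of_nonneg_left _ (hq0 i)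
            apply Real.exp_le_exp.2
            have h2 : f i ^ 2 ≤ 1 := by nlinarith [hfi0 i, hfi1 i]
            nlinarith [mul_le_mul_of_nonneg_left h2 hη0.le]
    linarith [Real.exp_pos (-η)]
  have hB0 : 0 < B := by
    have : Real.exp (-η) ≤ B := by
      calc Real.exp (-η) = ∑ i, q i * Real.exp (-η) := by
            rw [← Finset.sum_mul, hq1, one_mul]
        _ ≤ B := by
            apply Finset.sum_le_sum
            intro i _
            apply mul_le_mul_of_nonneg_left _ (hq0 i)
            apply Real.exp_le_exp.2
            have h2 : (1 - f i) ^ 2 ≤ 1 := by nlinarith [hfi0 i, hfi1 i]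
            nlinarith [mul_le_mul_of_nonneg_left h2 hη0.le]
    linarith [Real.exp_pos (-η)]
  -- bounds on log (A/B)
  have hABle : A ≤ Real.exp η * B := by
    calc A ≤ ∑ i, q i * (Real.exp η * Real.exp (-η * (1 - f i) ^ 2)) := by
          apply Finset.sum_le_sum
          intro i _
          apply mul_le_mul_of_nonneg_left _ (hq0 i)
          rw [← Real.exp_add]
          apply Real.exp_le_exp.2
          nlinarith [hfi0 i]
      _ = Real.exp η * B := by
          rw [hBdef, Finset.mul_sum]
          apply Finset.sum_congr rfl
          intro i _
          ring
  have hBAle : B ≤ Real.exp η * A := by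
    calc B ≤ ∑ i, q i * (Real.exp η * Real.exp (-η * (f i) ^ 2)) := by
          apply Finset.sum_le_sum
          intro i _
          apply mul_le_mul_of_nonneg_left _ (hq0 i)
          rw [← Real.exp_add]
          apply Real.exp_le_exp.2
          nlinarith [hfi1 i]
      _ = Real.exp η * A := by
          rw [hAdef, Finset.mul_sum]
          apply Finset.sum_congr rfl
          intro i _
          ring
  have hlogAB : Real.log (A / B) = Real.log A - Real.log B :=
    Real.log_div hA0.ne' hB0.ne'
  have hlog_le : Real.log A - Real.log B ≤ η := by
    have := Real.log_le_log hA0 hABle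
    rw [Real.log_mul (Real.exp_pos η).ne' hB0.ne', Real.log_exp] at this
    linarith
  have hlog_ge : -η ≤ Real.log A - Real.log B := by
    have := Real.log_le_log hB0 hBAle
    rw [Real.log_mul (Real.exp_pos η).ne' hA0.ne', Real.log_exp] at this
    linarith
  -- F ∈ [0,1]
  have hη2pos : (0:ℝ) ≤ 1/(2*η) := by positivity
  have hF0 : 0 ≤ F := by
    rw [hFdef, hlogAB]
    have e : (1/(2*η)) * η = 1/2 := by field_simp
    have := mul_le_mul_of_nonneg_left hlog_le hη2pos
    rw [e] at this
    linarith
  have hF1 : F ≤ 1 := by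
    rw [hFdef, hlogAB]
    have e : (1/(2*η)) * (-η) = -(1/2) := by field_simp
    have := mul_le_mul_of_nonneg_left hlog_ge hη2pos
    rw [e] at this
    linarith
  -- key identity: exp(-ηF²) * B = exp(-η(1-F)²) * A
  set α := Real.exp (-η * F ^ 2) with hαdef
  set β := Real.exp (-η * (1 - F) ^ 2) with hβdef
  have hαpos : 0 < α := Real.exp_pos _
  have hβpos : 0 < β := Real.exp_pos _
  have hratio : α * B = β * A := by
    have hB' : B = Real.exp (Real.log B) := (Real.exp_log hB0).symm
    have hA' : A = Real.exp (Real.log A) := (Real.exp_log hA0).symm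
    rw [hαdef, hβdef]
    nth_rewrite 1 [hB']
    nth_rewrite 1 [hA']
    rw [← Real.exp_add, ← Real.exp_add]
    congr 1
    have hident : η * (1 - 2 * F) = Real.log A - Real.log B := by
      rw [hFdef, hlogAB]
      field_simp
      ring
    nlinarith [hident]
  -- the tangent sum inequality
  have hsum : (1 - F) * (β * A) + F * (α * B) ≤ α * β := by
    have expand : (1 - F) * (β * A) + F * (α * B) =
        ∑ i, ((1 - F) * β * (q i * Real.exp (-η * (f i) ^ 2)) +
          F * α * (q i * Real.exp (-η * (1 - f i) ^ 2))) := by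
      rw [Finset.sum_add_distrib, ← Finset.mul_sum, ← Finset.mul_sum, hAdef, hBdef]
      ring
    rw [expand]
    calc ∑ i, ((1 - F) * β * (q i * Real.exp (-η * (f i) ^ 2)) +
          F * α * (q i * Real.exp (-η * (1 - f i) ^ 2)))
        ≤ ∑ i, q i * (α * β) := by
          apply Finset.sum_le_sum
          intro i _
          have hpt := pointwise_tangent η F (f i) hη0 hη2 hF0 hF1
          calc (1 - F) * β * (q i * Real.exp (-η * (f i) ^ 2)) +
              F * α * (q i * Real.exp (-η * (1 - f i) ^ 2))
              = q i * ((1 - F) * β * Real.exp (-η * (f i) ^ 2) +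
                F * α * Real.exp (-η * (1 - f i) ^ 2)) := by ring
            _ ≤ q i * (α * β) := mul_le_mul_of_nonneg_left hpt (hq0 i)
      _ = α * β := by rw [← Finset.sum_mul, hq1, one_mul]
  -- conclude A ≤ α and B ≤ β
  have hAα : A ≤ α := by
    rw [hratio] at hsum
    have : β * A ≤ α * β := by nlinarith
    have := (mul_le_mul_iff_right₀ hβpos).1 (by linarith [this] : β * A ≤ β * α)
    exact this
  have hBβ : B ≤ β := by
    have : α * B = β * A := hratio
    nlinarith
  -- finish by cases on ω
  intro ω hω
  simp only [Set.mem_insert_iff, Set.mem_singleton_iff] at hω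
  rcases hω with rfl | rfl
  · simp only [sub_zero]
    exact hAα
  · have hsq : ∀ x : ℝ, (x - 1) ^ 2 = (1 - x) ^ 2 := by intro x; ring
    simp only [hsq]
    exact hBβ
end

section
/- The function f ↦ exp(-η(f-ω)^2) is concave on [0,1] for each fixed ω ∈ {0,1} whenever 0 < η ≤ 1/2; hence the square loss on [0,1]×{0,1} is η-exponentially concave for 0 < η ≤ 1/2. -/
/-- For 0 < η ≤ 1/2 the map f ↦ exp(-η(f-ω)²) is concave on [0,1] for each
ω ∈ {0, 1}; i.e. the square loss is η-exponentially concave. -/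
theorem square_loss_exp_concave (η : ℝ) (hη0 : 0 < η) (hη : η ≤ 1/2) :
    ∀ ω ∈ ({0, 1} : Set ℝ),
      ConcaveOn ℝ (Set.Icc (0:ℝ) 1) (fun f => Real.exp (-η * (f - ω) ^ 2)) := by
  intro ω hω
  have hd1 : ∀ x : ℝ, HasDerivAt (fun f => Real.exp (-η * (f - ω) ^ 2))
      (Real.exp (-η * (x - ω) ^ 2) * (-η * (2 * (x - ω)))) x := by
    intro x
    have h1 : HasDerivAt (fun f : ℝ => (f - ω) ^ 2) (2 * (x - ω)) x := by
      have := ((hasDerivAt_id x).sub_const ω).pow 2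
      simpa [Pi.pow_def] using this
    have h2 : HasDerivAt (fun f : ℝ => -η * (f - ω) ^ 2) (-η * (2 * (x - ω))) x :=
      h1.const_mul (-η)
    exact h2.exp
  have hd2 : ∀ x : ℝ, HasDerivAt (fun f => Real.exp (-η * (f - ω) ^ 2) * (-η * (2 * (f - ω))))
      (Real.exp (-η * (x - ω) ^ 2) * (4 * η ^ 2 * (x - ω) ^ 2 - 2 * η)) x := by
    intro x
    have h3 : HasDerivAt (fun f : ℝ => -η * (2 * (f - ω))) (-η * 2) x := by
      have := (((hasDerivAt_id x).sub_const ω).const_mul (2:ℝ)).const_mul (-η)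
      simpa using this
    have : HasDerivAt (fun f => Real.exp (-η * (f - ω) ^ 2) * (-η * (2 * (f - ω)))) _ x :=
      (hd1 x).mul h3
    convert this using 1
    ring
  refine concaveOn_of_hasDerivWithinAt2_nonpos (convex_Icc 0 1)
    (Real.continuous_exp.comp (by continuity)).continuousOn
    (fun x _ => (hd1 x).hasDerivWithinAt) (fun x _ => (hd2 x).hasDerivWithinAt) ?_
  intro x hx
  rw [interior_Icc] at hx
  have hsq : (x - ω) ^ 2 ≤ 1 := by
    rcases hω with h | h <;> subst h <;> nlinarith [hx.1, hx.2]
  have key : 4 * η ^ 2 * (x - ω) ^ 2 - 2 * η ≤ 0 := by nlinarith [sq_nonneg (x - ω)]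
  exact mul_nonpos_of_nonneg_of_nonpos (Real.exp_pos _).le key
end

section
/- If the source loss λ(f,y) is η-mixable, then the generalized d-dimensional loss λ(𝐟,𝐲) = Σ_{s=1}^d λ(f^s, y^s) is (η/d)-mixable: given experts' vector forecasts 𝐜_1,…,𝐜_N ∈ Γ^d and a probability vector p, applying the substitution coordinatewise yields 𝐟 with exp(-(η/d) λ(𝐟,𝐲)) ≥ Σ_i p_i exp(-(η/d) λ(𝐜_i,𝐲)) for all 𝐲 ∈ Ω^d. -/
open Finset

/-- If the source loss λ is η-mixable via a substitution function, then the
d-dimensional sum loss is (η/d)-mixable, realized by coordinatewise substitution. -/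
theorem generalized_loss_mixable {Γ Ω : Type*} (L : Γ → Ω → ℝ) (η : ℝ) (hη : 0 < η)
    (d N : ℕ) (hd : 0 < d)
    (Subst : (Fin N → Γ) → (Fin N → ℝ) → Γ)
    (hSubst : ∀ (e : Fin N → Γ) (p : Fin N → ℝ), (∀ i, 0 ≤ p i) → ∑ i, p i = 1 →
      ∀ y : Ω, ∑ i, p i * Real.exp (-η * L (e i) y) ≤ Real.exp (-η * L (Subst e p) y))
    (c : Fin N → Fin d → Γ) (p : Fin N → ℝ)
    (hp0 : ∀ i, 0 ≤ p i) (hp1 : ∑ i, p i = 1) :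
    ∀ Y : Fin d → Ω,
      ∑ i, p i * Real.exp (-(η / d) * ∑ s, L (c i s) (Y s)) ≤
        Real.exp (-(η / d) * ∑ s, L (Subst (fun i => c i s) p) (Y s)) := by
  intro Y
  set a : Fin N → Fin d → ℝ := fun i s => Real.exp (-η * L (c i s) (Y s)) with ha
  have hapos : ∀ i s, 0 < a i s := fun i s => Real.exp_pos _
  set S : Fin d → ℝ := fun s => ∑ i, p i * a i s with hSdef
  have hSpos : ∀ s, 0 < S s := by
    intro s
    have hex : ∃ i, 0 < p i := by
      by_contra h
      push_neg at h
      have : ∑ i, p i = 0 := Finset.sum_eq_zero fun i _ => le_antisymm (h i) (hp0 i)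
      rw [hp1] at this; norm_num at this
    obtain ⟨i0, hi0⟩ := hex
    have : 0 < p i0 * a i0 s := mul_pos hi0 (hapos i0 s)
    exact lt_of_lt_of_le this
      (Finset.single_le_sum (fun i _ => mul_nonneg (hp0 i) (hapos i s).le) (Finset.mem_univ i0))
  have hdpos : (0:ℝ) < d := by exact_mod_cast hd
  have hsum1 : ∑ _s : Fin d, (d:ℝ)⁻¹ = 1 := by
    rw [Finset.sum_const, Finset.card_univ, Fintype.card_fin, nsmul_eq_mul,
      mul_inv_cancel₀ hdpos.ne']
  -- rewrite exp of sums as products of rpow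
  have hexp : ∀ (g : Fin d → ℝ), Real.exp (-(η / d) * ∑ s, g s)
      = ∏ s : Fin d, Real.exp (-η * g s) ^ ((d:ℝ)⁻¹) := by
    intro g
    simp_rw [← Real.exp_mul]
    rw [← Real.exp_sum]
    congr 1
    rw [Finset.mul_sum]
    exact Finset.sum_congr rfl fun s _ => by field_simp
  -- Hölder step
  have holder : ∑ i, p i * ∏ s : Fin d, a i s ^ ((d:ℝ)⁻¹)
      ≤ ∏ s : Fin d, S s ^ ((d:ℝ)⁻¹) := by
    have hSprod : (0:ℝ) ≤ ∏ s : Fin d, S s ^ ((d:ℝ)⁻¹) :=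
      Finset.prod_nonneg fun s _ => Real.rpow_nonneg (hSpos s).le _
    have key : ∀ i, ∏ s : Fin d, (a i s / S s) ^ ((d:ℝ)⁻¹)
        ≤ ∑ s : Fin d, (d:ℝ)⁻¹ * (a i s / S s) := by
      intro i
      exact Real.geom_mean_le_arith_mean_weighted Finset.univ _ _
        (fun s _ => by positivity) hsum1
        (fun s _ => div_nonneg (hapos i s).le (hSpos s).le)
    have hsplit : ∀ i, ∏ s : Fin d, a i s ^ ((d:ℝ)⁻¹)
        = (∏ s : Fin d, (a i s / S s) ^ ((d:ℝ)⁻¹)) * ∏ s : Fin d, S s ^ ((d:ℝ)⁻¹) := by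
      intro i
      rw [← Finset.prod_mul_distrib]
      refine Finset.prod_congr rfl fun s _ => ?_
      rw [← Real.mul_rpow (div_nonneg (hapos i s).le (hSpos s).le) (hSpos s).le,
        div_mul_cancel₀]
      exact (hSpos s).ne'
    calc ∑ i, p i * ∏ s : Fin d, a i s ^ ((d:ℝ)⁻¹)
        = (∑ i, p i * ∏ s : Fin d, (a i s / S s) ^ ((d:ℝ)⁻¹))
            * ∏ s : Fin d, S s ^ ((d:ℝ)⁻¹) := by
          rw [Finset.sum_mul]
          exact Finset.sum_congr rfl fun i _ => by rw [hsplit i, mul_assoc]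
      _ ≤ 1 * ∏ s : Fin d, S s ^ ((d:ℝ)⁻¹) := by
          refine mul_le_mul_of_nonneg_right ?_ hSprod
          calc ∑ i, p i * ∏ s : Fin d, (a i s / S s) ^ ((d:ℝ)⁻¹)
              ≤ ∑ i, p i * ∑ s : Fin d, (d:ℝ)⁻¹ * (a i s / S s) :=
                Finset.sum_le_sum fun i _ => mul_le_mul_of_nonneg_left (key i) (hp0 i)
            _ = ∑ s : Fin d, (d:ℝ)⁻¹ := by
                simp_rw [Finset.mul_sum]
                rw [Finset.sum_comm]
                refine Finset.sum_congr rfl fun s _ => ?_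
                rw [show ∑ i, p i * ((d:ℝ)⁻¹ * (a i s / S s))
                    = (d:ℝ)⁻¹ * ((∑ i, p i * a i s) / S s) by
                  rw [Finset.sum_div, Finset.mul_sum]
                  exact Finset.sum_congr rfl fun i _ => by ring]
                have hSs : (∑ i, p i * a i s) = S s := rfl
                rw [hSs, div_self (hSpos s).ne', mul_one]
            _ = 1 := hsum1
      _ = ∏ s : Fin d, S s ^ ((d:ℝ)⁻¹) := one_mul _
  calc ∑ i, p i * Real.exp (-(η / d) * ∑ s, L (c i s) (Y s))
      = ∑ i, p i * ∏ s : Fin d, a i s ^ ((d:ℝ)⁻¹) := by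
        refine Finset.sum_congr rfl fun i _ => ?_
        rw [hexp]
    _ ≤ ∏ s : Fin d, S s ^ ((d:ℝ)⁻¹) := holder
    _ ≤ ∏ s : Fin d, Real.exp (-η * L (Subst (fun i => c i s) p) (Y s)) ^ ((d:ℝ)⁻¹) := by
        refine Finset.prod_le_prod (fun s _ => Real.rpow_nonneg (hSpos s).le _) fun s _ => ?_
        exact Real.rpow_le_rpow (hSpos s).le (hSubst (fun i => c i s) p hp0 hp1 (Y s))
          (by positivity)
    _ = Real.exp (-(η / d) * ∑ s, L (Subst (fun i => c i s) p) (Y s)) := (hexp _).symm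
end

section
/- Regret bound for the Aggregating Algorithm: suppose λ is η-mixable and at every step t the learner's forecast f_t satisfies exp(-η λ(f_t, y_t)) ≥ Σ_i w*_{i,t} exp(-η λ(f_{i,t}, y_t)), where weights start at w_{i,1} = 1/N, are updated by w_{i,t+1} = w_{i,t} e^{-η λ(f_{i,t}, y_t)}, and w*_{i,t} = w_{i,t}/Σ_j w_{j,t}. Then for every T and every expert i, Σ_{t=1}^T λ(f_t,y_t) ≤ Σ_{t=1}^T λ(f_{i,t},y_t) + (ln N)/η. -/
open Finset

/-- Regret bound for the Aggregating Algorithm: the learner's cumulative loss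
exceeds each expert's cumulative loss by at most (ln N)/η. -/
theorem aa_regret_bound {Γ Ω : Type*} (L : Γ → Ω → ℝ) (hL : ∀ f y, 0 ≤ L f y)
    (η : ℝ) (hη : 0 < η) (N : ℕ) (hN : 0 < N)
    (f : Fin N → ℕ → Γ) (g : ℕ → Γ) (y : ℕ → Ω) (w : ℕ → Fin N → ℝ)
    (hw0 : ∀ i, w 0 i = 1 / N)
    (hwt : ∀ t i, w (t + 1) i = w t i * Real.exp (-η * L (f i t) (y t)))
    (hmix : ∀ t, ∑ i, (w t i / ∑ j, w t j) * Real.exp (-η * L (f i t) (y t)) ≤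
      Real.exp (-η * L (g t) (y t))) :
    ∀ (T : ℕ) (i : Fin N),
      ∑ t ∈ Finset.range T, L (g t) (y t) ≤
        ∑ t ∈ Finset.range T, L (f i t) (y t) + Real.log N / η := by
  have hNpos : (0:ℝ) < N := Nat.cast_pos.mpr hN
  -- closed form for weights
  have hwform : ∀ t i, w t i =
      (1 / N) * Real.exp (-η * ∑ s ∈ Finset.range t, L (f i s) (y s)) := by
    intro t
    induction t with
    | zero => intro i; simp [hw0]
    | succ t ih =>
      intro i
      rw [hwt, ih, Finset.sum_range_succ, mul_add, Real.exp_add, mul_assoc]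
  have hwpos : ∀ t i, 0 < w t i := by
    intro t i
    rw [hwform]
    positivity
  -- potential
  set W : ℕ → ℝ := fun t => ∑ j, w t j with hW
  have hWpos : ∀ t, 0 < W t := fun t =>
    Finset.sum_pos (fun j _ => hwpos t j) ⟨⟨0, hN⟩, Finset.mem_univ _⟩
  have hstep : ∀ t, W (t + 1) ≤ W t * Real.exp (-η * L (g t) (y t)) := by
    intro t
    have h := mul_le_mul_of_nonneg_left (hmix t) (le_of_lt (hWpos t))
    calc W (t + 1) = ∑ i, w t i * Real.exp (-η * L (f i t) (y t)) := by
          simp [hW, hwt]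
      _ = W t * ∑ i, (w t i / W t) * Real.exp (-η * L (f i t) (y t)) := by
          rw [Finset.mul_sum]
          refine Finset.sum_congr rfl fun i _ => ?_
          rw [div_mul_eq_mul_div, ← mul_div_assoc, mul_div_cancel_left₀ _ (hWpos t).ne']
      _ ≤ W t * Real.exp (-η * L (g t) (y t)) := h
  have hWbound : ∀ T, W T ≤ Real.exp (-η * ∑ t ∈ Finset.range T, L (g t) (y t)) := by
    intro T
    induction T with
    | zero =>
      simp only [hW, hw0, Finset.sum_const, Finset.card_univ, Fintype.card_fin,
        Finset.range_zero, Finset.sum_empty, mul_zero, Real.exp_zero]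
      rw [nsmul_eq_mul]
      field_simp
      exact le_rfl
    | succ T ih =>
      calc W (T + 1) ≤ W T * Real.exp (-η * L (g T) (y T)) := hstep T
        _ ≤ Real.exp (-η * ∑ t ∈ Finset.range T, L (g t) (y t)) *
            Real.exp (-η * L (g T) (y T)) :=
            mul_le_mul_of_nonneg_right ih (Real.exp_pos _).le
        _ = Real.exp (-η * ∑ t ∈ Finset.range (T + 1), L (g t) (y t)) := by
            rw [← Real.exp_add, Finset.sum_range_succ, mul_add]
  intro T i
  have hle : w T i ≤ W T :=
    Finset.single_le_sum (fun j _ => (hwpos T j).le) (Finset.mem_univ i)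
  have key : (1 / N) * Real.exp (-η * ∑ s ∈ Finset.range T, L (f i s) (y s)) ≤
      Real.exp (-η * ∑ t ∈ Finset.range T, L (g t) (y t)) := by
    rw [← hwform]; exact hle.trans (hWbound T)
  have hlog := Real.log_le_log (by positivity) key
  rw [Real.log_mul (by positivity) (Real.exp_ne_zero _), Real.log_exp, Real.log_exp,
    one_div, Real.log_inv] at hlog
  rw [← sub_le_iff_le_add', le_div_iff₀ hη]
  nlinarith [hlog]
end

section
/- Discounted regret bound for AA with confidence: suppose λ is η-mixable, confidence levels p_{i,t} ∈ [0,1], weights w_{i,1} = 1/N updated by w_{i,t+1} = w_{i,t} exp(-η(p_{i,t} l_{i,t} + (1-p_{i,t}) h_t)) where l_{i,t} = λ(f_{i,t},y_t), h_t = λ(f_t,y_t), and the learner's forecast f_t satisfies exp(-η h_t) ≥ Σ_i w^p_{i,t} exp(-η l_{i,t}) with w^p_{i,t} = p_{i,t} w_{i,t} / Σ_j p_{j,t} w_{j,t}. Then for every expert i and every T, Σ_{t=1}^T p_{i,t}(h_t - l_{i,t}) ≤ (ln N)/η. -/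
open Finset

/-- Discounted regret bound for AA with confidence levels:
Σₜ p_{i,t}(hₜ - l_{i,t}) ≤ (ln N)/η for every expert i. -/
theorem aa_confidence_regret {Γ Ω : Type*} (L : Γ → Ω → ℝ) (hL : ∀ f y, 0 ≤ L f y)
    (η : ℝ) (hη : 0 < η) (N : ℕ) (hN : 0 < N)
    (f : Fin N → ℕ → Γ) (g : ℕ → Γ) (y : ℕ → Ω)
    (p : Fin N → ℕ → ℝ) (hp : ∀ i t, p i t ∈ Set.Icc (0:ℝ) 1)
    (w : ℕ → Fin N → ℝ)
    (hw0 : ∀ i, w 0 i = 1 / N)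
    (hwt : ∀ t i, w (t + 1) i = w t i *
      Real.exp (-η * (p i t * L (f i t) (y t) + (1 - p i t) * L (g t) (y t))))
    (hpos : ∀ t, 0 < ∑ j, p j t * w t j)
    (hmix : ∀ t, ∑ i, (p i t * w t i / ∑ j, p j t * w t j) *
        Real.exp (-η * L (f i t) (y t)) ≤ Real.exp (-η * L (g t) (y t))) :
    ∀ (T : ℕ) (i : Fin N),
      ∑ t ∈ Finset.range T, p i t * (L (g t) (y t) - L (f i t) (y t)) ≤
        Real.log N / η := by
  intro T i
  have hNpos : (0:ℝ) < N := Nat.cast_pos.mpr hN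
  have wpos : ∀ t j, 0 < w t j := by
    intro t
    induction t with
    | zero => intro j; rw [hw0]; positivity
    | succ t ih => intro j; rw [hwt]; exact mul_pos (ih j) (Real.exp_pos _)
  -- closed form for w T i
  have hclosed : ∀ t, w t i = (1 / N) * Real.exp (-η *
      ∑ s ∈ range t, (p i s * L (f i s) (y s) + (1 - p i s) * L (g s) (y s))) := by
    intro t
    induction t with
    | zero => simp [hw0]
    | succ t ih =>
      rw [hwt, ih, sum_range_succ, mul_assoc, ← Real.exp_add]
      congr 2
      ring
  -- total weight decreases by factor exp(-η h_t)
  have hsum : ∀ t, ∑ j, w t j ≤ Real.exp (-η * ∑ s ∈ range t, L (g s) (y s)) := by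
    intro t
    induction t with
    | zero =>
      simp [hw0]
      rw [mul_inv_cancel₀ (ne_of_gt hNpos)]
    | succ t ih =>
      have step1 : ∀ j, w (t + 1) j ≤
          p j t * w t j * Real.exp (-η * L (f j t) (y t)) +
          (1 - p j t) * w t j * Real.exp (-η * L (g t) (y t)) := by
        intro j
        rw [hwt]
        have hpj := hp j t
        have h1 : (0:ℝ) ≤ 1 - p j t := by linarith [hpj.2]
        have h2 : p j t + (1 - p j t) = 1 := by ring
        have hcvx : Real.exp (-η * (p j t * L (f j t) (y t) + (1 - p j t) * L (g t) (y t)))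
            ≤ p j t * Real.exp (-η * L (f j t) (y t)) +
              (1 - p j t) * Real.exp (-η * L (g t) (y t)) := by
          have := convexOn_exp.2 (Set.mem_univ (-η * L (f j t) (y t)))
            (Set.mem_univ (-η * L (g t) (y t))) hpj.1 h1 h2
          simp only [smul_eq_mul] at this
          have harg : p j t * (-η * L (f j t) (y t)) + (1 - p j t) * (-η * L (g t) (y t)) =
              -η * (p j t * L (f j t) (y t) + (1 - p j t) * L (g t) (y t)) := by ring
          rwa [harg] at this
        calc w t j * Real.exp (-η * (p j t * L (f j t) (y t) + (1 - p j t) * L (g t) (y t)))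
            ≤ w t j * (p j t * Real.exp (-η * L (f j t) (y t)) +
              (1 - p j t) * Real.exp (-η * L (g t) (y t))) := by
              exact mul_le_mul_of_nonneg_left hcvx (le_of_lt (wpos t j))
          _ = p j t * w t j * Real.exp (-η * L (f j t) (y t)) +
              (1 - p j t) * w t j * Real.exp (-η * L (g t) (y t)) := by ring
      have hmix' : ∑ j, p j t * w t j * Real.exp (-η * L (f j t) (y t)) ≤
          (∑ j, p j t * w t j) * Real.exp (-η * L (g t) (y t)) := by
        have H := hmix t
        have hS := hpos t
        have : ∑ j, (p j t * w t j / ∑ k, p k t * w t k) * Real.exp (-η * L (f j t) (y t)) =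
            (∑ j, p j t * w t j * Real.exp (-η * L (f j t) (y t))) / ∑ k, p k t * w t k := by
          rw [Finset.sum_div]
          exact Finset.sum_congr rfl fun j _ => by ring
        rw [this, div_le_iff₀ hS] at H
        linarith [H]
      calc ∑ j, w (t + 1) j
          ≤ ∑ j, (p j t * w t j * Real.exp (-η * L (f j t) (y t)) +
              (1 - p j t) * w t j * Real.exp (-η * L (g t) (y t))) :=
            Finset.sum_le_sum fun j _ => step1 j
        _ = (∑ j, p j t * w t j * Real.exp (-η * L (f j t) (y t))) +
            (∑ j, (1 - p j t) * w t j) * Real.exp (-η * L (g t) (y t)) := by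
            rw [Finset.sum_add_distrib, Finset.sum_mul]
        _ ≤ (∑ j, p j t * w t j) * Real.exp (-η * L (g t) (y t)) +
            (∑ j, (1 - p j t) * w t j) * Real.exp (-η * L (g t) (y t)) := by
            exact add_le_add hmix' (le_refl _)
        _ = (∑ j, w t j) * Real.exp (-η * L (g t) (y t)) := by
            rw [← add_mul, ← Finset.sum_add_distrib]
            congr 1
            exact Finset.sum_congr rfl fun j _ => by ring
        _ ≤ Real.exp (-η * ∑ s ∈ range t, L (g s) (y s)) *
            Real.exp (-η * L (g t) (y t)) := by
            exact mul_le_mul_of_nonneg_right ih (le_of_lt (Real.exp_pos _))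
        _ = Real.exp (-η * ∑ s ∈ range (t + 1), L (g s) (y s)) := by
            rw [← Real.exp_add, sum_range_succ]; ring_nf
  -- combine
  have hkey : w T i ≤ Real.exp (-η * ∑ s ∈ range T, L (g s) (y s)) :=
    le_trans (Finset.single_le_sum (fun j _ => le_of_lt (wpos T j)) (mem_univ i)) (hsum T)
  rw [hclosed T] at hkey
  set A := ∑ s ∈ range T, (p i s * L (f i s) (y s) + (1 - p i s) * L (g s) (y s)) with hA
  set B := ∑ s ∈ range T, L (g s) (y s) with hB
  have hlog : Real.log ((1 / N) * Real.exp (-η * A)) ≤ Real.log (Real.exp (-η * B)) :=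
    Real.log_le_log (by positivity) hkey
  rw [Real.log_mul (by positivity) (ne_of_gt (Real.exp_pos _)), Real.log_exp,
    Real.log_exp, one_div, Real.log_inv] at hlog
  have hBA : ∑ t ∈ Finset.range T, p i t * (L (g t) (y t) - L (f i t) (y t)) = B - A := by
    rw [hA, hB, ← Finset.sum_sub_distrib]
    exact Finset.sum_congr rfl fun t _ => by ring
  rw [hBA, le_div_iff₀ hη]
  nlinarith [hlog]
end

section
/- Piecewise-constant approximation bound for CRPS: let F be a probability distribution function on [a,b], let a = z_0 < z_1 < … < z_d = b be a uniform grid with Δ = (b-a)/d, and define F_d(u) = F(z_i) for z_{i-1} < u ≤ z_i. Then |CRPS(F,y) - CRPS(F_d,y)| ≤ 2Δ for every y ∈ [a,b]. -/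
open MeasureTheory Finset

/-- Heaviside function: 0 for x < 0 and 1 for x ≥ 0. -/
noncomputable def Heav (x : ℝ) : ℝ := if x < 0 then 0 else 1

/-- Continuous Ranked Probability Score on the interval [a,b]. -/
noncomputable def CRPS (a b : ℝ) (F : ℝ → ℝ) (y : ℝ) : ℝ :=
  ∫ u in a..b, (F u - Heav (u - y)) ^ 2

/-- A probability distribution function on [a,b]: nondecreasing, right-continuous,
with values in [0,1], F(a)=0 and F(b)=1. -/
def IsPDF (a b : ℝ) (F : ℝ → ℝ) : Prop :=
  MonotoneOn F (Set.Icc a b) ∧ (∀ x ∈ Set.Icc a b, F x ∈ Set.Icc (0:ℝ) 1) ∧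
  F a = 0 ∧ F b = 1 ∧ ∀ x ∈ Set.Ico a b, ContinuousWithinAt F (Set.Ici x) x

lemma Heav_nonneg (x : ℝ) : 0 ≤ Heav x := by unfold Heav; split_ifs <;> norm_num

lemma Heav_le_one (x : ℝ) : Heav x ≤ 1 := by unfold Heav; split_ifs <;> norm_num

lemma Heav_sq (x : ℝ) : Heav x ^ 2 = Heav x := by unfold Heav; split_ifs <;> norm_num

lemma Heav_mono : Monotone Heav := by
  intro s t hst
  unfold Heav
  split_ifs with h1 h2 <;> try norm_num
  linarith

/-- squares of bounded integrable functions are integrable -/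
lemma sq_integrableOn {s : Set ℝ} (hs : MeasurableSet s) (f : ℝ → ℝ)
    (hf : IntegrableOn f s) (hbd : ∀ u ∈ s, |f u| ≤ 1) :
    IntegrableOn (fun u => (f u) ^ 2) s := by
  have hsm : AEStronglyMeasurable (fun u => (f u) ^ 2) (volume.restrict s) := by
    have := hf.aestronglyMeasurable.mul hf.aestronglyMeasurable
    simpa [Pi.mul_def, sq] using this
  refine Integrable.mono hf hsm ?_
  refine (ae_restrict_iff' hs).mpr (Filter.Eventually.of_forall fun u hu => ?_)
  have h1 := hbd u hu
  have h2 := abs_nonneg (f u)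
  rw [Real.norm_eq_abs, Real.norm_eq_abs]
  rw [abs_pow]
  nlinarith [sq_abs (f u)]

/-- Piecewise-constant approximation: |CRPS(F,y) - CRPS(F_d,y)| ≤ 2Δ where
Δ = (b-a)/d and F_d is the upper piecewise-constant approximation on the grid. -/
theorem crps_grid_approx (a b : ℝ) (hab : a < b) (F : ℝ → ℝ) (hF : IsPDF a b F)
    (d : ℕ) (hd : 0 < d) (Fd : ℝ → ℝ)
    (hFd : ∀ i : ℕ, i < d →
      ∀ u ∈ Set.Ioc (a + i * ((b - a) / d)) (a + (i + 1) * ((b - a) / d)),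
        Fd u = F (a + (i + 1) * ((b - a) / d)))
    (y : ℝ) (hy : y ∈ Set.Icc a b) :
    |CRPS a b F y - CRPS a b Fd y| ≤ 2 * ((b - a) / d) := by
  obtain ⟨hmono, hrange, hFa, hFb, -⟩ := hF
  set Δ : ℝ := (b - a) / d with hΔdef
  have hd' : (0:ℝ) < d := by exact_mod_cast hd
  have hΔpos : 0 < Δ := div_pos (by linarith) hd'
  set z : ℕ → ℝ := fun i => a + i * Δ with hzdef
  have hz0 : z 0 = a := by simp [hzdef]
  have hzd : z d = b := by
    show a + (d:ℝ) * Δ = b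
    rw [hΔdef]
    field_simp
    ring
  have hzstep : ∀ i : ℕ, z (i + 1) - z i = Δ := by
    intro i; simp only [hzdef]; push_cast; ring
  have hzmono : Monotone z := by
    intro i j hij
    simp only [hzdef]
    have : (i:ℝ) ≤ j := by exact_mod_cast hij
    nlinarith
  have hzle : ∀ i : ℕ, z i ≤ z (i + 1) := fun i => hzmono (Nat.le_succ i)
  have hzmem : ∀ i, i ≤ d → z i ∈ Set.Icc a b := fun i hi =>
    ⟨by rw [← hz0]; exact hzmono (Nat.zero_le i), by rw [← hzd]; exact hzmono hi⟩
  -- the pieces cover (a, b]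
  have hcover : ∀ u ∈ Set.Ioc a b, ∃ i, i < d ∧ u ∈ Set.Ioc (z i) (z (i + 1)) := by
    intro u hu
    set k := ⌈(u - a) / Δ⌉₊ with hk
    have hpos : 0 < (u - a) / Δ := div_pos (by linarith [hu.1]) hΔpos
    have hk1 : 1 ≤ k := by
      rw [hk, Nat.one_le_ceil_iff]; exact hpos
    have hdΔ : (d:ℝ) * Δ = b - a := by rw [hΔdef]; field_simp
    have hkled : k ≤ d := by
      rw [hk, Nat.ceil_le, div_le_iff₀ hΔpos]
      linarith [hu.2]
    refine ⟨k - 1, by omega, ?_, ?_⟩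
    · have h1 : ((k - 1 : ℕ) : ℝ) < (u - a) / Δ := Nat.lt_ceil.mp (by omega)
      have h2 : ((k - 1 : ℕ) : ℝ) * Δ < u - a := by
        rw [← lt_div_iff₀ hΔpos]; exact h1
      simp only [hzdef]; linarith
    · have h1 : (u - a) / Δ ≤ (k : ℝ) := Nat.le_ceil _
      have h2 : u - a ≤ (k : ℝ) * Δ := by
        rw [← div_le_iff₀ hΔpos]; exact h1
      have h3 : ((k - 1 + 1 : ℕ) : ℝ) = (k : ℝ) := by
        congr 1; omega
      simp only [hzdef, h3]; linarith
  -- translate hFd to the grid notation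
  have hFd' : ∀ i, i < d → ∀ u ∈ Set.Ioc (z i) (z (i + 1)), Fd u = F (z (i + 1)) := by
    intro i hi u hu
    have e : z (i + 1) = a + ((i : ℝ) + 1) * ((b - a) / d) := by
      simp only [hzdef, hΔdef]; push_cast; ring
    have e0 : z i = a + (i : ℝ) * ((b - a) / d) := by simp only [hzdef, hΔdef]
    rw [e]
    exact hFd i hi u (by rw [← e0, ← e]; exact hu)
  -- basic bounds
  have hHb : ∀ u : ℝ, Heav (u - y) ∈ Set.Icc (0:ℝ) 1 :=
    fun u => ⟨Heav_nonneg _, Heav_le_one _⟩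
  -- integrability of F and Heav on subintervals
  have hHint : ∀ c e : ℝ, IntervalIntegrable (fun u => Heav (u - y)) volume c e := by
    intro c e
    exact (Heav_mono.comp (fun s t hst => by simp only; linarith : Monotone fun u : ℝ => u - y)).intervalIntegrable
  have hFint : ∀ i j : ℕ, i ≤ d → j ≤ d → IntervalIntegrable F volume (z i) (z j) := by
    intro i j hi hj
    apply MonotoneOn.intervalIntegrable
    apply hmono.mono
    exact Set.uIcc_subset_Icc (hzmem i hi) (hzmem j hj)
  -- integrability of Fd on each piece
  have hFdpiece : ∀ i, i < d → IntervalIntegrable Fd volume (z i) (z (i + 1)) := by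
    intro i hi
    apply (intervalIntegrable_const (c := F (z (i + 1)))).congr
    rw [Set.uIoc_of_le (hzle i)]
    intro u hu
    exact (hFd' i hi u hu).symm
  have hFdint : IntervalIntegrable Fd volume a b := by
    rw [← hz0, ← hzd]
    exact IntervalIntegrable.trans_iterate fun k hk => hFdpiece k hk
  -- integrability of the squared integrands
  have hφ1 : IntervalIntegrable (fun u => (F u - Heav (u - y)) ^ 2) volume a b := by
    rw [intervalIntegrable_iff_integrableOn_Ioc_of_le hab.le]
    apply sq_integrableOn measurableSet_Ioc
    · have := (hFint 0 d (Nat.zero_le d) le_rfl).sub (hHint (z 0) (z d))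
      rw [hz0, hzd] at this
      exact (intervalIntegrable_iff_integrableOn_Ioc_of_le hab.le).mp this
    · intro u hu
      have h1 := hrange u (Set.mem_Icc.mpr ⟨hu.1.le, hu.2⟩)
      have h2 := hHb u
      simp only [Set.mem_Icc] at h1 h2
      rw [abs_le]
      constructor <;> linarith [h1.1, h1.2, h2.1, h2.2]
  have hφ2piece : ∀ i, i < d →
      IntervalIntegrable (fun u => (Fd u - Heav (u - y)) ^ 2) volume (z i) (z (i + 1)) := by
    intro i hi
    set c := F (z (i + 1)) with hc
    have hcint : IntervalIntegrable (fun u => (c - Heav (u - y)) ^ 2) volume (z i) (z (i + 1)) := by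
      have he : (fun u => (c - Heav (u - y)) ^ 2)
          = fun u => c ^ 2 + (1 - 2 * c) * Heav (u - y) := by
        funext u
        linear_combination Heav_sq (u - y)
      rw [he]
      exact intervalIntegrable_const.add ((hHint (z i) (z (i + 1))).const_mul _)
    apply hcint.congr
    rw [Set.uIoc_of_le (hzle i)]
    intro u hu; beta_reduce
    rw [hFd' i hi u hu]
  have hφ2 : IntervalIntegrable (fun u => (Fd u - Heav (u - y)) ^ 2) volume a b := by
    rw [← hz0, ← hzd]
    exact IntervalIntegrable.trans_iterate fun k hk => hφ2piece k hk
  -- pointwise bound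
  have hptwise : ∀ u ∈ Set.Ioc a b,
      |(F u - Heav (u - y)) ^ 2 - (Fd u - Heav (u - y)) ^ 2| ≤ 2 * (Fd u - F u) := by
    intro u hu
    obtain ⟨i, hi, hui⟩ := hcover u hu
    have hFdu : Fd u = F (z (i + 1)) := hFd' i hi u hui
    have huI : u ∈ Set.Icc a b := Set.mem_Icc.mpr ⟨hu.1.le, hu.2⟩
    have hle : F u ≤ F (z (i + 1)) := hmono huI (hzmem (i + 1) (by omega)) hui.2
    have h1 := hrange u huI
    have h2 := hrange (z (i + 1)) (hzmem (i + 1) (by omega))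
    have h3 := hHb u
    simp only [Set.mem_Icc] at h1 h2 h3
    rw [hFdu, abs_le]
    constructor <;> nlinarith [h1.1, h1.2, h2.1, h2.2, h3.1, h3.2]
  -- the difference of the CRPS values
  have hdiff : CRPS a b F y - CRPS a b Fd y
      = ∫ u in a..b, ((F u - Heav (u - y)) ^ 2 - (Fd u - Heav (u - y)) ^ 2) := by
    rw [CRPS, CRPS, intervalIntegral.integral_sub hφ1 hφ2]
  rw [hdiff]
  -- chain of inequalities
  have step1 : |∫ u in a..b, ((F u - Heav (u - y)) ^ 2 - (Fd u - Heav (u - y)) ^ 2)|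
      ≤ ∫ u in a..b, |(F u - Heav (u - y)) ^ 2 - (Fd u - Heav (u - y)) ^ 2| :=
    intervalIntegral.abs_integral_le_integral_abs hab.le
  have step2 : ∫ u in a..b, |(F u - Heav (u - y)) ^ 2 - (Fd u - Heav (u - y)) ^ 2|
      ≤ ∫ u in a..b, 2 * (Fd u - F u) := by
    rw [intervalIntegral.integral_of_le hab.le, intervalIntegral.integral_of_le hab.le]
    apply setIntegral_mono_on
    · exact (intervalIntegrable_iff_integrableOn_Ioc_of_le hab.le).mp (hφ1.sub hφ2).abs
    · refine (intervalIntegrable_iff_integrableOn_Ioc_of_le hab.le).mp ?_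
      have hFab := hFint 0 d (Nat.zero_le d) le_rfl
      rw [hz0, hzd] at hFab
      exact (hFdint.sub hFab).const_mul 2
    · exact measurableSet_Ioc
    · exact hptwise
  -- compute/estimate the last integral
  have hFdval : ∀ i, i < d → ∫ u in (z i)..(z (i + 1)), Fd u = Δ * F (z (i + 1)) := by
    intro i hi
    have : ∫ u in (z i)..(z (i + 1)), Fd u = ∫ _ in (z i)..(z (i + 1)), F (z (i + 1)) := by
      apply intervalIntegral.integral_congr_ae
      rw [Set.uIoc_of_le (hzle i)]
      filter_upwards with u hu
      exact hFd' i hi u hu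
    rw [this, intervalIntegral.integral_const, smul_eq_mul, hzstep]
  have hFdsum : ∫ u in a..b, Fd u = ∑ i ∈ range d, Δ * F (z (i + 1)) := by
    rw [← hz0, ← hzd, ← intervalIntegral.sum_integral_adjacent_intervals
      (fun k hk => hFdpiece k hk)]
    exact Finset.sum_congr rfl fun i hi => hFdval i (mem_range.mp hi)
  have hFlow : ∑ i ∈ range d, Δ * F (z i) ≤ ∫ u in a..b, F u := by
    rw [← hz0, ← hzd, ← intervalIntegral.sum_integral_adjacent_intervals
      (fun k hk => hFint k (k + 1) (by omega) (by omega))]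
    apply Finset.sum_le_sum
    intro i hi
    have hi' := mem_range.mp hi
    have : Δ * F (z i) = ∫ _ in (z i)..(z (i + 1)), F (z i) := by
      rw [intervalIntegral.integral_const, smul_eq_mul, hzstep]
    rw [this]
    apply intervalIntegral.integral_mono_on (hzle i) intervalIntegrable_const
      (hFint i (i + 1) (by omega) (by omega))
    intro u hu
    have huab : u ∈ Set.Icc a b := by
      constructor
      · linarith [hu.1, (hzmem i (by omega)).1]
      · linarith [hu.2, (hzmem (i + 1) (by omega)).2]
    exact hmono (hzmem i (by omega)) huab hu.1
  have htele : ∑ i ∈ range d, Δ * F (z (i + 1)) - ∑ i ∈ range d, Δ * F (z i) = Δ := by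
    rw [← Finset.sum_sub_distrib, Finset.sum_range_sub (fun i => Δ * F (z i)), hz0, hzd,
      hFa, hFb]
    ring
  have step3 : ∫ u in a..b, 2 * (Fd u - F u) ≤ 2 * Δ := by
    have hFab := hFint 0 d (Nat.zero_le d) le_rfl
    rw [hz0, hzd] at hFab
    rw [intervalIntegral.integral_const_mul, intervalIntegral.integral_sub hFdint hFab]
    have : (∫ u in a..b, Fd u) - ∫ u in a..b, F u ≤ Δ := by
      rw [hFdsum]
      linarith [hFlow, htele]
    linarith
  calc |∫ u in a..b, ((F u - Heav (u - y)) ^ 2 - (Fd u - Heav (u - y)) ^ 2)|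
      ≤ ∫ u in a..b, |(F u - Heav (u - y)) ^ 2 - (Fd u - Heav (u - y)) ^ 2| := step1
    _ ≤ ∫ u in a..b, 2 * (Fd u - F u) := step2
    _ ≤ 2 * Δ := step3
end

section
/- The CRPS loss on probability distribution functions over [a,b] is (2/(b-a))-mixable: for any probability vector (q_1,…,q_N) and distribution functions F_1,…,F_N, the function F(u) = 1/2 - (1/4) ln( (Σ_i q_i e^{-2 F_i(u)^2}) / (Σ_i q_i e^{-2(1-F_i(u))^2}) ) satisfies exp(-(2/(b-a)) CRPS(F,y)) ≥ Σ_i q_i exp(-(2/(b-a)) CRPS(F_i,y)) for all y ∈ [a,b]. -/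
open MeasureTheory Finset

/-- Two-point Hoeffding lemma: `log((1-l) + l*exp x) ≤ l*x + x²/8` for `l ∈ [0,1]`. -/
lemma log_convex_comb_exp_le (l : ℝ) (hl0 : 0 ≤ l) (hl1 : l ≤ 1) (x : ℝ) :
    Real.log (1 - l + l * Real.exp x) ≤ l * x + x ^ 2 / 8 := by
  set D : ℝ → ℝ := fun t => 1 - l + l * Real.exp t with hD
  clear_value D
  have hDpos : ∀ t, 0 < D t := by
    intro t
    rcases eq_or_lt_of_le hl1 with h | h
    · simp [hD, ← h]; positivity
    · have : 0 < 1 - l := by linarith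
      have : 0 ≤ l * Real.exp t := by positivity
      simp only [hD]; linarith
  have hDderiv : ∀ t, HasDerivAt D (l * Real.exp t) t := by
    intro t
    rw [hD]
    simpa using ((Real.hasDerivAt_exp t).const_mul l).const_add (1 - l)
  -- φ' = l * exp t / D t
  set g : ℝ → ℝ := fun t => l + t / 4 - l * Real.exp t / D t with hg
  clear_value g
  have hφderiv : ∀ t, HasDerivAt (fun u => Real.log (D u)) (l * Real.exp t / D t) t := by
    intro t
    exact (hDderiv t).log (hDpos t).ne'
  -- g has derivative 1/4 - l*(1-l)*exp t / (D t)^2 ≥ 0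
  have hgderiv : ∀ t, HasDerivAt g (1/4 - l * (1 - l) * Real.exp t / (D t)^2) t := by
    intro t
    have h1 : HasDerivAt (fun u => l * Real.exp u / D u)
        ((l * Real.exp t * D t - l * Real.exp t * (l * Real.exp t)) / (D t)^2) t :=
      ((Real.hasDerivAt_exp t).const_mul l).div (hDderiv t) (hDpos t).ne'
    have h2 : HasDerivAt (fun u : ℝ => l + u / 4) (1/4) t := by
      simpa using (hasDerivAt_id t).div_const (4:ℝ) |>.const_add l
    have h3 := h2.sub h1
    convert h3 using 1
    rotate_right
    have : l * Real.exp t * D t - l * Real.exp t * (l * Real.exp t)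
        = l * (1-l) * Real.exp t := by simp only [hD]; ring
    · rw [this]
    · rfl
    · rfl
    · rw [hg]; rfl
  have hgmono : Monotone g := by
    have hdiff : Differentiable ℝ g := fun t => (hgderiv t).differentiableAt
    apply monotone_of_deriv_nonneg hdiff
    intro t
    rw [(hgderiv t).deriv]
    have hAM : 4 * (l * (1 - l) * Real.exp t) ≤ (D t)^2 := by
      have h := sq_nonneg ((1 - l) - l * Real.exp t)
      have hDt : D t = (1-l) + l * Real.exp t := by simp only [hD]
      rw [hDt]
      nlinarith [Real.exp_pos t, mul_nonneg hl0 (Real.exp_pos t).le]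
    have hD2 : 0 < (D t)^2 := pow_pos (hDpos t) 2
    rw [sub_nonneg, div_le_iff₀ hD2]
    linarith [hAM]
  have hg0 : g 0 = 0 := by
    simp [hg, hD]
  -- ψ t = l*t + t²/8 - log (D t), ψ' = g
  set ψ : ℝ → ℝ := fun t => l * t + t^2/8 - Real.log (D t) with hψ
  have hψderiv : ∀ t, HasDerivAt ψ (g t) t := by
    intro t
    have h1 : HasDerivAt (fun u : ℝ => l * u + u^2/8) (l + t/4) t := by
      have := ((hasDerivAt_id t).const_mul l).add (((hasDerivAt_pow 2 t)).div_const 8)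
      convert this using 1
      · rfl
      · rfl
      · rfl
      · push_cast; ring
    have h2 := h1.sub (hφderiv t)
    rw [hg]
    exact h2
  have hψ0 : ψ 0 = 0 := by simp [hψ, hD]
  have key : 0 ≤ ψ x := by
    rcases le_total 0 x with hx | hx
    · have hmono : MonotoneOn ψ (Set.Ici 0) := by
        apply monotoneOn_of_deriv_nonneg (convex_Ici 0)
        · exact fun t _ => (hψderiv t).continuousAt.continuousWithinAt
        · exact fun t _ => (hψderiv t).differentiableAt.differentiableWithinAt
        · intro t ht
          rw [(hψderiv t).deriv]
          rw [interior_Ici] at ht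
          have := hgmono (le_of_lt ht)
          rwa [hg0] at this
      have := hmono (Set.self_mem_Ici) (Set.mem_Ici.2 hx) hx
      rwa [hψ0] at this
    · have hanti : AntitoneOn ψ (Set.Iic 0) := by
        apply antitoneOn_of_deriv_nonpos (convex_Iic 0)
        · exact fun t _ => (hψderiv t).continuousAt.continuousWithinAt
        · exact fun t _ => (hψderiv t).differentiableAt.differentiableWithinAt
        · intro t ht
          rw [(hψderiv t).deriv]
          rw [interior_Iic] at ht
          have := hgmono (le_of_lt ht)
          rwa [hg0] at this
      have := hanti (Set.mem_Iic.2 hx) (Set.self_mem_Iic) hx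
      rwa [hψ0] at this
  have : Real.log (D x) ≤ l * x + x^2/8 := by
    simp only [hψ] at key; linarith
  simpa [hD] using this

/-- tangent/supporting inequality for the exponentiated square loss curve -/
lemma support_ineq (G p : ℝ) (hG0 : 0 ≤ G) (hG1 : G ≤ 1) :
    (1 - G) * Real.exp (2*G^2 - 2*p^2) + G * Real.exp (2*(1-G)^2 - 2*(1-p)^2) ≤ 1 := by
  set x : ℝ := 4 * (p - G) with hx
  have hpos : 0 < 1 - G + G * Real.exp x := by
    rcases lt_or_eq_of_le hG1 with h | h
    · have := mul_nonneg hG0 (Real.exp_pos x).le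
      linarith
    · rw [h]; simpa using Real.exp_pos x
  have key : 1 - G + G * Real.exp x ≤ Real.exp (G * x + x^2/8) :=
    (Real.log_le_iff_le_exp hpos).mp (log_convex_comb_exp_le G hG0 hG1 x)
  have e1 : 2*G^2 - 2*p^2 = -(G*x + x^2/8) := by rw [hx]; ring
  have e2 : 2*(1-G)^2 - 2*(1-p)^2 = x + -(G*x + x^2/8) := by rw [hx]; ring
  calc (1 - G) * Real.exp (2*G^2 - 2*p^2) + G * Real.exp (2*(1-G)^2 - 2*(1-p)^2)
      = (1 - G + G * Real.exp x) * Real.exp (-(G*x + x^2/8)) := by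
        rw [e1, e2, Real.exp_add]; ring
    _ ≤ Real.exp (G*x + x^2/8) * Real.exp (-(G*x + x^2/8)) :=
        mul_le_mul_of_nonneg_right key (Real.exp_pos _).le
    _ = 1 := by
        rw [← Real.exp_add, show G*x + x^2/8 + -(G*x + x^2/8) = 0 by ring, Real.exp_zero]

/-- pointwise 2-mixability of square loss via Vovk's substitution function -/
lemma mix_bound {N : ℕ} (q p : Fin N → ℝ) (hq0 : ∀ i, 0 ≤ q i) (hq1 : ∑ i, q i = 1)
    (hp : ∀ i, p i ∈ Set.Icc (0:ℝ) 1) (S0 S1 G : ℝ)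
    (hS0 : S0 = ∑ i, q i * Real.exp (-2 * (p i)^2))
    (hS1 : S1 = ∑ i, q i * Real.exp (-2 * (1 - p i)^2))
    (hG : G = 1/2 - (1/4) * Real.log (S0 / S1)) :
    (0 ≤ G ∧ G ≤ 1) ∧ S0 ≤ Real.exp (-2 * G^2) ∧ S1 ≤ Real.exp (-2 * (1-G)^2) := by
  have hS0pos : Real.exp (-2 : ℝ) ≤ S0 := by
    rw [hS0]
    calc Real.exp (-2:ℝ) = ∑ i, q i * Real.exp (-2:ℝ) := by
          rw [← Finset.sum_mul, hq1, one_mul]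
      _ ≤ ∑ i, q i * Real.exp (-2 * (p i)^2) := by
          apply Finset.sum_le_sum; intro i _
          apply mul_le_mul_of_nonneg_left _ (hq0 i)
          apply Real.exp_le_exp.mpr
          nlinarith [(hp i).1, (hp i).2]
  have hS1pos : Real.exp (-2 : ℝ) ≤ S1 := by
    rw [hS1]
    calc Real.exp (-2:ℝ) = ∑ i, q i * Real.exp (-2:ℝ) := by
          rw [← Finset.sum_mul, hq1, one_mul]
      _ ≤ ∑ i, q i * Real.exp (-2 * (1 - p i)^2) := by
          apply Finset.sum_le_sum; intro i _
          apply mul_le_mul_of_nonneg_left _ (hq0 i)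
          apply Real.exp_le_exp.mpr
          nlinarith [(hp i).1, (hp i).2]
  have hS0p : 0 < S0 := lt_of_lt_of_le (Real.exp_pos _) hS0pos
  have hS1p : 0 < S1 := lt_of_lt_of_le (Real.exp_pos _) hS1pos
  -- ratio bounds
  have hr1 : S1 ≤ Real.exp 2 * S0 := by
    rw [hS0, hS1, Finset.mul_sum]
    apply Finset.sum_le_sum; intro i _
    rw [show Real.exp 2 * (q i * Real.exp (-2 * (p i)^2)) =
        q i * (Real.exp 2 * Real.exp (-2 * (p i)^2)) by ring, ← Real.exp_add]
    apply mul_le_mul_of_nonneg_left _ (hq0 i)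
    apply Real.exp_le_exp.mpr
    nlinarith [(hp i).1, (hp i).2]
  have hr2 : S0 ≤ Real.exp 2 * S1 := by
    rw [hS0, hS1, Finset.mul_sum]
    apply Finset.sum_le_sum; intro i _
    rw [show Real.exp 2 * (q i * Real.exp (-2 * (1 - p i)^2)) =
        q i * (Real.exp 2 * Real.exp (-2 * (1 - p i)^2)) by ring, ← Real.exp_add]
    apply mul_le_mul_of_nonneg_left _ (hq0 i)
    apply Real.exp_le_exp.mpr
    nlinarith [(hp i).1, (hp i).2]
  have hlogle : Real.log (S0 / S1) ≤ 2 := by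
    rw [Real.log_div hS0p.ne' hS1p.ne']
    have h1 : Real.log S0 ≤ Real.log (Real.exp 2 * S1) := Real.log_le_log hS0p hr2
    rw [Real.log_mul (Real.exp_pos 2).ne' hS1p.ne', Real.log_exp] at h1
    linarith
  have hlogge : -2 ≤ Real.log (S0 / S1) := by
    rw [Real.log_div hS0p.ne' hS1p.ne']
    have h1 : Real.log S1 ≤ Real.log (Real.exp 2 * S0) := Real.log_le_log hS1p hr1
    rw [Real.log_mul (Real.exp_pos 2).ne' hS0p.ne', Real.log_exp] at h1
    linarith
  have hG0 : 0 ≤ G := by rw [hG]; linarith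
  have hG1 : G ≤ 1 := by rw [hG]; linarith
  -- relation S1 = S0 * exp (4G - 2)
  have hrel : S1 = S0 * Real.exp (4*G - 2) := by
    have h4 : 4*G - 2 = - Real.log (S0 / S1) := by rw [hG]; ring
    rw [h4, Real.exp_neg, Real.exp_log (div_pos hS0p hS1p)]
    field_simp
  -- summed support inequality
  have hsum : (1-G) * Real.exp (2*G^2) * S0 + G * Real.exp (2*(1-G)^2) * S1 ≤ 1 := by
    have heq : (1-G) * Real.exp (2*G^2) * S0 + G * Real.exp (2*(1-G)^2) * S1
        = ∑ i, q i * ((1-G) * Real.exp (2*G^2 - 2*(p i)^2) +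
            G * Real.exp (2*(1-G)^2 - 2*(1-p i)^2)) := by
      rw [hS0, hS1, Finset.mul_sum, Finset.mul_sum, ← Finset.sum_add_distrib]
      apply Finset.sum_congr rfl; intro i _
      rw [show 2*G^2 - 2*(p i)^2 = 2*G^2 + (-2 * (p i)^2) by ring,
        show 2*(1-G)^2 - 2*(1-p i)^2 = 2*(1-G)^2 + (-2 * (1 - p i)^2) by ring,
        Real.exp_add, Real.exp_add]
      ring
    rw [heq]
    calc ∑ i, q i * ((1-G) * Real.exp (2*G^2 - 2*(p i)^2) +
            G * Real.exp (2*(1-G)^2 - 2*(1-p i)^2))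
        ≤ ∑ i, q i := by
          apply Finset.sum_le_sum; intro i _
          have := mul_le_mul_of_nonneg_left (support_ineq G (p i) hG0 hG1) (hq0 i)
          simpa using this
      _ = 1 := hq1
  have hE : Real.exp (2*(1-G)^2) * Real.exp (4*G - 2) = Real.exp (2*G^2) := by
    rw [← Real.exp_add]; congr 1; ring
  have hsum2 : Real.exp (2*G^2) * S0 ≤ 1 := by
    calc Real.exp (2*G^2) * S0
        = (1-G) * Real.exp (2*G^2) * S0 + G * Real.exp (2*(1-G)^2) * S1 := by
          rw [hrel, show G * Real.exp (2*(1-G)^2) * (S0 * Real.exp (4*G-2)) =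
            G * (Real.exp (2*(1-G)^2) * Real.exp (4*G - 2)) * S0 by ring, hE]
          ring
      _ ≤ 1 := hsum
  have hE0 : (0:ℝ) < Real.exp (2*G^2) := Real.exp_pos _
  have hfin0 : S0 ≤ Real.exp (-2 * G^2) := by
    rw [show (-2 : ℝ) * G^2 = -(2*G^2) by ring, Real.exp_neg, ← one_div]
    exact (le_div_iff₀ hE0).mpr (by linarith [hsum2])
  have hfin1 : S1 ≤ Real.exp (-2 * (1-G)^2) := by
    calc S1 = S0 * Real.exp (4*G-2) := hrel
      _ ≤ Real.exp (-2*G^2) * Real.exp (4*G-2) :=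
          mul_le_mul_of_nonneg_right hfin0 (Real.exp_pos _).le
      _ = Real.exp (-2*(1-G)^2) := by rw [← Real.exp_add]; congr 1; ring
  exact ⟨⟨hG0, hG1⟩, hfin0, hfin1⟩


set_option maxHeartbeats 2000000 in
lemma jensen_exp_int (a b : ℝ) (hab : a < b) {N : ℕ} (q : Fin N → ℝ)
    (hq0 : ∀ i, 0 ≤ q i) (hq1 : ∑ i, q i = 1)
    (φ : Fin N → ℝ → ℝ) (hφm : ∀ i, Measurable (φ i))
    (hφb : ∀ i u, φ i u ∈ Set.Icc (-2 : ℝ) 0) :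
    ∑ i, q i * Real.exp ((b-a)⁻¹ * ∫ u in Set.Ioc a b, φ i u) ≤
      Real.exp ((b-a)⁻¹ * ∫ u in Set.Ioc a b, Real.log (∑ i, q i * Real.exp (φ i u))) := by
  have hba : (0:ℝ) < b - a := by linarith
  set c : ℝ := (b-a)⁻¹ with hc
  have hcb : c * (b - a) = 1 := inv_mul_cancel₀ hba.ne'
  set s : Set ℝ := Set.Ioc a b with hs
  have hsm : MeasurableSet s := measurableSet_Ioc
  have hμs : volume s ≠ ⊤ := by
    rw [hs, Real.volume_Ioc]; exact ENNReal.ofReal_ne_top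
  have hμsr : (volume s).toReal = b - a := by
    rw [hs, Real.volume_Ioc, ENNReal.toReal_ofReal hba.le]
  -- integrability of the φ i
  have hφint : ∀ i, IntegrableOn (φ i) s := by
    intro i
    apply Measure.integrableOn_of_bounded (M := 2) hμs (hφm i).aestronglyMeasurable
    filter_upwards with u
    have := hφb i u
    rw [Real.norm_eq_abs, abs_le]
    constructor <;> linarith [this.1, this.2]
  -- S and Φ
  set S : ℝ → ℝ := fun u => ∑ i, q i * Real.exp (φ i u) with hS
  have hSlb : ∀ u, Real.exp (-2:ℝ) ≤ S u := by
    intro u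
    calc Real.exp (-2:ℝ) = ∑ i, q i * Real.exp (-2:ℝ) := by
          rw [← Finset.sum_mul, hq1, one_mul]
      _ ≤ S u := by
          apply Finset.sum_le_sum; intro i _
          exact mul_le_mul_of_nonneg_left (Real.exp_le_exp.mpr (hφb i u).1) (hq0 i)
  have hSub : ∀ u, S u ≤ 1 := by
    intro u
    calc S u ≤ ∑ i, q i := by
          apply Finset.sum_le_sum; intro i _
          have : Real.exp (φ i u) ≤ 1 := by
            rw [Real.exp_le_one_iff]; exact (hφb i u).2
          simpa using mul_le_mul_of_nonneg_left this (hq0 i)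
      _ = 1 := hq1
  have hSpos : ∀ u, 0 < S u := fun u => lt_of_lt_of_le (Real.exp_pos _) (hSlb u)
  have hSm : Measurable S := by
    apply Finset.measurable_sum
    intro i _
    exact ((Real.measurable_exp.comp (hφm i)).const_mul (q i))
  set Φ : ℝ → ℝ := fun u => Real.log (S u) with hΦ
  have hΦm : Measurable Φ := Real.measurable_log.comp hSm
  have hΦb : ∀ u, Φ u ∈ Set.Icc (-2:ℝ) 0 := by
    intro u
    constructor
    · have := Real.log_le_log (Real.exp_pos _) (hSlb u)
      rwa [Real.log_exp] at this
    · have := Real.log_le_log (hSpos u) (hSub u)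
      rwa [Real.log_one] at this
  have hΦint : IntegrableOn Φ s := by
    apply Measure.integrableOn_of_bounded (M := 2) hμs hΦm.aestronglyMeasurable
    filter_upwards with u
    rw [Real.norm_eq_abs, abs_le]
    constructor <;> linarith [(hΦb u).1, (hΦb u).2]
  -- support of q
  set T : Finset (Fin N) := Finset.univ.filter (fun i => 0 < q i) with hT
  have hqT : ∀ i, i ∉ T → q i = 0 := by
    intro i hi
    simp only [hT, Finset.mem_filter, Finset.mem_univ, true_and, not_lt] at hi
    linarith [hq0 i]
  have hTne : T.Nonempty := by
    by_contra h
    rw [Finset.not_nonempty_iff_eq_empty] at h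
    have : (∑ i, q i) = 0 := by
      apply Finset.sum_eq_zero
      intro i _
      exact hqT i (by simp [h])
    rw [hq1] at this; norm_num at this
  -- the weights
  set B : Fin N → ℝ := fun i => q i * Real.exp (c * ∫ u in s, φ i u) with hB
  have hBpos : ∀ i ∈ T, 0 < B i := by
    intro i hi
    simp only [hT, Finset.mem_filter] at hi
    exact mul_pos hi.2 (Real.exp_pos _)
  set Bs : ℝ := ∑ i ∈ T, B i with hBs
  have hBspos : 0 < Bs := Finset.sum_pos hBpos hTne
  have hBsuniv : ∑ i, B i = Bs := by
    rw [hBs]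
    exact (Finset.sum_subset (Finset.subset_univ T)
      (fun i _ hi => by simp [hB, hqT i hi])).symm
  set w : Fin N → ℝ := fun i => B i / Bs with hw
  have hw0 : ∀ i ∈ T, 0 ≤ w i := fun i hi => div_nonneg (hBpos i hi).le hBspos.le
  have hwpos : ∀ i ∈ T, 0 < w i := fun i hi => div_pos (hBpos i hi) hBspos
  have hw1 : ∑ i ∈ T, w i = 1 := by
    rw [hw]
    rw [← Finset.sum_div, ← hBs, div_self hBspos.ne']
  -- pointwise Jensen
  have hpt : ∀ u, ∑ i ∈ T, w i * (Real.log (q i) - Real.log (w i) + φ i u) ≤ Φ u := by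
    intro u
    have hz : ∀ i ∈ T, (0:ℝ) < q i * Real.exp (φ i u) / w i := by
      intro i hi
      simp only [hT, Finset.mem_filter] at hi
      exact div_pos (mul_pos hi.2 (Real.exp_pos _)) (hwpos i (by simp [hT, hi.2]))
    have hgm := Real.geom_mean_le_arith_mean_weighted T w
      (fun i => q i * Real.exp (φ i u) / w i) hw0 hw1 (fun i hi => (hz i hi).le)
    have hsum_eq : ∑ i ∈ T, w i * (q i * Real.exp (φ i u) / w i) = S u := by
      have h1 : ∑ i ∈ T, w i * (q i * Real.exp (φ i u) / w i)
          = ∑ i ∈ T, q i * Real.exp (φ i u) :=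
        Finset.sum_congr rfl (fun i hi => mul_div_cancel₀ _ (hwpos i hi).ne')
      rw [h1, hS, Finset.sum_subset (Finset.subset_univ T)
        (fun i _ hi => by simp [hqT i hi])]
    rw [hsum_eq] at hgm
    have hprodpos : 0 < ∏ i ∈ T, (q i * Real.exp (φ i u) / w i) ^ (w i) := by
      apply Finset.prod_pos
      intro i hi
      exact Real.rpow_pos_of_pos (hz i hi) _
    have hlog := Real.log_le_log hprodpos hgm
    rw [Real.log_prod (fun i hi => (Real.rpow_pos_of_pos (hz i hi) _).ne')] at hlog
    calc ∑ i ∈ T, w i * (Real.log (q i) - Real.log (w i) + φ i u)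
        = ∑ i ∈ T, Real.log ((q i * Real.exp (φ i u) / w i) ^ (w i)) := by
          apply Finset.sum_congr rfl
          intro i hi
          simp only [hT, Finset.mem_filter] at hi
          rw [Real.log_rpow (hz i (by simp [hT, hi.2])),
            Real.log_div (mul_pos hi.2 (Real.exp_pos _)).ne'
              (hwpos i (by simp [hT, hi.2])).ne',
            Real.log_mul hi.2.ne' (Real.exp_pos _).ne', Real.log_exp]
          ring
      _ ≤ Real.log (S u) := hlog
  -- integrate
  set K : ℝ := ∑ i ∈ T, w i * (Real.log (q i) - Real.log (w i)) with hK
  have hconst : ∀ C : ℝ, IntegrableOn (fun _ : ℝ => C) s :=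
    fun C => integrableOn_const hμs
  have hterm : ∀ i, IntegrableOn
      (fun u => w i * (Real.log (q i) - Real.log (w i) + φ i u)) s := by
    intro i
    have h1 : IntegrableOn (fun u => (Real.log (q i) - Real.log (w i)) + φ i u) s :=
      (hconst (Real.log (q i) - Real.log (w i))).add (hφint i)
    exact h1.const_mul (w i)
  have hρint : IntegrableOn (fun u => ∑ i ∈ T, w i * (Real.log (q i) - Real.log (w i) + φ i u)) s :=
    MeasureTheory.integrable_finset_sum _ (fun i _ => hterm i)
  have hintmono : ∫ u in s, (∑ i ∈ T, w i * (Real.log (q i) - Real.log (w i) + φ i u))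
      ≤ ∫ u in s, Φ u :=
    setIntegral_mono_on hρint hΦint hsm (fun u _ => hpt u)
  have hintval : ∫ u in s, (∑ i ∈ T, w i * (Real.log (q i) - Real.log (w i) + φ i u))
      = ∑ i ∈ T, w i * ((Real.log (q i) - Real.log (w i)) * (b-a) + ∫ u in s, φ i u) := by
    rw [MeasureTheory.integral_finset_sum _ (fun i _ => hterm i)]
    apply Finset.sum_congr rfl
    intro i hi
    rw [MeasureTheory.integral_const_mul]
    congr 1
    rw [MeasureTheory.integral_add (hconst _) (hφint i)]
    rw [MeasureTheory.setIntegral_const, measureReal_def, hμsr, smul_eq_mul]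
    ring
  -- conclude: log Bs ≤ c * ∫ Φ
  have hlogBs : Real.log Bs ≤ c * ∫ u in s, Φ u := by
    have h1 : c * ∫ u in s, (∑ i ∈ T, w i * (Real.log (q i) - Real.log (w i) + φ i u))
        ≤ c * ∫ u in s, Φ u := by
      apply mul_le_mul_of_nonneg_left hintmono
      positivity
    have h2 : c * ∫ u in s, (∑ i ∈ T, w i * (Real.log (q i) - Real.log (w i) + φ i u))
        = Real.log Bs := by
      rw [hintval, Finset.mul_sum]
      have : ∀ i ∈ T, c * (w i * ((Real.log (q i) - Real.log (w i)) * (b-a) + ∫ u in s, φ i u))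
          = w i * Real.log Bs := by
        intro i hi
        simp only [hT, Finset.mem_filter] at hi
        have hBi : Real.log (B i) = Real.log (q i) + c * ∫ u in s, φ i u := by
          rw [hB]
          rw [Real.log_mul hi.2.ne' (Real.exp_pos _).ne', Real.log_exp]
        have hwi : Real.log (w i) = Real.log (B i) - Real.log Bs := by
          rw [hw]
          exact Real.log_div (hBpos i (by simp [hT, hi.2])).ne' hBspos.ne'
        have hX : Real.log (q i) - Real.log (w i)
            = Real.log Bs - c * ∫ u in s, φ i u := by
          rw [hwi, hBi]; ring
        rw [hX]
        calc c * (w i * ((Real.log Bs - c * ∫ u in s, φ i u) * (b-a) + ∫ u in s, φ i u))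
            = w i * ((c*(b-a)) * (Real.log Bs - c * ∫ u in s, φ i u)
                + c * ∫ u in s, φ i u) := by ring
          _ = w i * Real.log Bs := by rw [hcb]; ring
      rw [Finset.sum_congr rfl this, ← Finset.sum_mul, hw1, one_mul]
    linarith
  calc ∑ i, q i * Real.exp (c * ∫ u in s, φ i u) = Bs := hBsuniv
    _ = Real.exp (Real.log Bs) := (Real.exp_log hBspos).symm
    _ ≤ Real.exp (c * ∫ u in s, Φ u) := Real.exp_le_exp.mpr hlogBs

/-- CRPS is (2/(b-a))-mixable, with the explicit aggregation formula giving the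
learner's distribution function. -/
theorem crps_mixable (a b : ℝ) (hab : a < b) (N : ℕ)
    (F : Fin N → ℝ → ℝ) (hF : ∀ i, IsPDF a b (F i))
    (q : Fin N → ℝ) (hq0 : ∀ i, 0 ≤ q i) (hq1 : ∑ i, q i = 1) :
    ∀ y ∈ Set.Icc a b,
      ∑ i, q i * Real.exp (-(2 / (b - a)) * CRPS a b (F i) y) ≤
        Real.exp (-(2 / (b - a)) * CRPS a b
          (fun u => 1/2 - (1/4) * Real.log
            ((∑ i, q i * Real.exp (-2 * (F i u) ^ 2)) /
             (∑ i, q i * Real.exp (-2 * (1 - F i u) ^ 2)))) y) := by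
  intro y _
  have hba : (0:ℝ) < b - a := sub_pos.2 hab
  set c : ℝ := (b - a)⁻¹ with hc
  have hcpos : 0 < c := inv_pos.2 hba
  set s : Set ℝ := Set.Ioc a b with hs
  have hsm : MeasurableSet s := measurableSet_Ioc
  have hμs : volume s ≠ ⊤ := by rw [hs, Real.volume_Ioc]; exact ENNReal.ofReal_ne_top
  -- the clamping projection
  set π : ℝ → ℝ := fun u => max a (min b u) with hπ
  have hπmem : ∀ u, π u ∈ Set.Icc a b :=
    fun u => ⟨le_max_left _ _, max_le hab.le (min_le_left _ _)⟩
  have hπid : ∀ u ∈ Set.Icc a b, π u = u := by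
    intro u hu
    rw [hπ]
    simp only [min_eq_right hu.2, max_eq_right hu.1]
  have hπmono : Monotone π := fun u v huv =>
    max_le_max le_rfl (min_le_min le_rfl huv)
  -- clamped distribution functions
  set Ft : Fin N → ℝ → ℝ := fun i u => F i (π u) with hFt
  have hFtmono : ∀ i, Monotone (Ft i) :=
    fun i u v huv => (hF i).1 (hπmem u) (hπmem v) (hπmono huv)
  have hFtmem : ∀ i u, Ft i u ∈ Set.Icc (0:ℝ) 1 :=
    fun i u => (hF i).2.1 _ (hπmem u)
  have hFtmeas : ∀ i, Measurable (Ft i) := fun i => (hFtmono i).measurable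
  have hFteq : ∀ i, ∀ u ∈ s, Ft i u = F i u := by
    intro i u hu
    rw [hFt]
    simp only []
    rw [hπid u (Set.mem_Icc.mpr ⟨hu.1.le, hu.2⟩)]
  -- the Heaviside outcome
  set h : ℝ → ℝ := fun u => Heav (u - y) with hHe
  have hh01 : ∀ u, h u = 0 ∨ h u = 1 := by
    intro u
    by_cases hcond : u - y < 0
    · left; simp [hHe, Heav, hcond]; linarith
    · right; simp [hHe, Heav, hcond]; linarith
  have hhmem : ∀ u, h u ∈ Set.Icc (0:ℝ) 1 := by
    intro u
    rcases hh01 u with h0 | h1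
    · rw [h0]; exact ⟨le_rfl, zero_le_one⟩
    · rw [h1]; exact ⟨zero_le_one, le_rfl⟩
  have hhmeas : Measurable h := by
    have : h = fun u : ℝ => if u - y < 0 then (0:ℝ) else 1 := rfl
    rw [this]
    exact Measurable.ite (measurableSet_lt (measurable_id.sub_const y) measurable_const)
      measurable_const measurable_const
  -- the losses
  set φ : Fin N → ℝ → ℝ := fun i u => -2 * (Ft i u - h u) ^ 2 with hφ
  have hφmeas : ∀ i, Measurable (φ i) :=
    fun i => ((((hFtmeas i).sub hhmeas).pow_const 2).const_mul (-2))
  have hφb : ∀ i u, φ i u ∈ Set.Icc (-2:ℝ) 0 := by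
    intro i u
    have h1 := hFtmem i u
    have h2 := hhmem u
    have hsq : (Ft i u - h u) ^ 2 ≤ 1 := by nlinarith [h1.1, h1.2, h2.1, h2.2]
    have hsq0 : 0 ≤ (Ft i u - h u) ^ 2 := sq_nonneg _
    constructor
    · rw [hφ]; simp only []; nlinarith
    · rw [hφ]; simp only []; nlinarith
  -- the aggregated predictor (clamped version)
  set Gt : ℝ → ℝ := fun u => 1/2 - (1/4) * Real.log
      ((∑ i, q i * Real.exp (-2 * (Ft i u) ^ 2)) /
       (∑ i, q i * Real.exp (-2 * (1 - Ft i u) ^ 2))) with hGt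
  have hmixu : ∀ u, ((0 ≤ Gt u ∧ Gt u ≤ 1) ∧
      (∑ i, q i * Real.exp (-2 * (Ft i u) ^ 2)) ≤ Real.exp (-2 * (Gt u) ^ 2) ∧
      (∑ i, q i * Real.exp (-2 * (1 - Ft i u) ^ 2)) ≤ Real.exp (-2 * (1 - Gt u) ^ 2)) := by
    intro u
    exact mix_bound q (fun i => Ft i u) hq0 hq1 (fun i => hFtmem i u) _ _ _ rfl rfl rfl
  have hGtmem : ∀ u, Gt u ∈ Set.Icc (0:ℝ) 1 := fun u => ⟨(hmixu u).1.1, (hmixu u).1.2⟩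
  have hGtmeas : Measurable Gt := by
    rw [hGt]
    apply Measurable.const_sub
    apply Measurable.const_mul
    apply Real.measurable_log.comp
    apply Measurable.div
    · exact Finset.measurable_sum _ (fun i _ =>
        ((Real.measurable_exp.comp (((hFtmeas i).pow_const 2).const_mul (-2))).const_mul (q i)))
    · exact Finset.measurable_sum _ (fun i _ =>
        ((Real.measurable_exp.comp ((((measurable_const.sub (hFtmeas i))).pow_const 2).const_mul (-2))).const_mul (q i)))
  -- the mixture S and its positivity
  set S : ℝ → ℝ := fun u => ∑ i, q i * Real.exp (φ i u) with hS
  have hSpos : ∀ u, 0 < S u := by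
    intro u
    have : Real.exp (-2:ℝ) ≤ S u := by
      calc Real.exp (-2:ℝ) = ∑ i, q i * Real.exp (-2:ℝ) := by
            rw [← Finset.sum_mul, hq1, one_mul]
        _ ≤ S u := Finset.sum_le_sum (fun i _ =>
            mul_le_mul_of_nonneg_left (Real.exp_le_exp.mpr (hφb i u).1) (hq0 i))
    linarith [Real.exp_pos (-2:ℝ)]
  have hSmeas : Measurable S :=
    Finset.measurable_sum _ (fun i _ => ((Real.measurable_exp.comp (hφmeas i)).const_mul (q i)))
  -- pointwise mixability bound
  have hpt : ∀ u, Real.log (S u) ≤ -2 * (Gt u - h u) ^ 2 := by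
    intro u
    rcases hh01 u with h0 | h1
    · have hSeq : S u = ∑ i, q i * Real.exp (-2 * (Ft i u) ^ 2) := by
        rw [hS]
        apply Finset.sum_congr rfl
        intro i _
        rw [hφ]
        simp only [h0, sub_zero]
      have := (hmixu u).2.1
      rw [← hSeq] at this
      rw [h0, sub_zero]
      exact (Real.log_le_iff_le_exp (hSpos u)).mpr this
    · have hSeq : S u = ∑ i, q i * Real.exp (-2 * (1 - Ft i u) ^ 2) := by
        rw [hS]
        apply Finset.sum_congr rfl
        intro i _
        rw [hφ]
        simp only [h1]
        rw [show (Ft i u - 1)^2 = (1 - Ft i u)^2 by ring]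
      have := (hmixu u).2.2
      rw [← hSeq] at this
      rw [h1, show (Gt u - 1)^2 = (1 - Gt u)^2 by ring]
      exact (Real.log_le_iff_le_exp (hSpos u)).mpr this
  -- integrability
  have hintφ : ∀ i, IntegrableOn (φ i) s := by
    intro i
    apply MeasureTheory.Measure.integrableOn_of_bounded (M := 2) hμs (hφmeas i).aestronglyMeasurable
    filter_upwards with u
    rw [Real.norm_eq_abs, abs_le]
    exact ⟨(hφb i u).1, le_trans (hφb i u).2 zero_le_two⟩
  have hlogSmeas : Measurable (fun u => Real.log (S u)) := by
    apply Measurable.log hSmeas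
  have hintlogS : IntegrableOn (fun u => Real.log (S u)) s := by
    apply MeasureTheory.Measure.integrableOn_of_bounded (M := 2) hμs
      hlogSmeas.aestronglyMeasurable
    filter_upwards with u
    rw [Real.norm_eq_abs, abs_le]
    constructor
    · have h1 : Real.exp (-2:ℝ) ≤ S u := by
        calc Real.exp (-2:ℝ) = ∑ i, q i * Real.exp (-2:ℝ) := by
              rw [← Finset.sum_mul, hq1, one_mul]
          _ ≤ S u := Finset.sum_le_sum (fun i _ =>
              mul_le_mul_of_nonneg_left (Real.exp_le_exp.mpr (hφb i u).1) (hq0 i))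
      have := Real.log_le_log (Real.exp_pos _) h1
      rwa [Real.log_exp] at this
    · have h2 : S u ≤ 1 := by
        calc S u ≤ ∑ i, q i := Finset.sum_le_sum (fun i _ => by
              have : Real.exp (φ i u) ≤ 1 := by
                rw [Real.exp_le_one_iff]; exact (hφb i u).2
              simpa using mul_le_mul_of_nonneg_left this (hq0 i))
          _ = 1 := hq1
      have := Real.log_le_log (hSpos u) h2
      rw [Real.log_one] at this
      linarith
  have hmG : Measurable (fun u => -2 * (Gt u - h u) ^ 2) := by
    apply Measurable.const_mul
    exact (hGtmeas.sub hhmeas).pow_const 2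
  have hintG : IntegrableOn (fun u => -2 * (Gt u - h u) ^ 2) s := by
    apply MeasureTheory.Measure.integrableOn_of_bounded (M := 2) hμs
      hmG.aestronglyMeasurable
    filter_upwards with u
    have h1 := hGtmem u
    have h2 := hhmem u
    rw [Real.norm_eq_abs, abs_le]
    constructor <;> nlinarith [h1.1, h1.2, h2.1, h2.2, sq_nonneg (Gt u - h u)]
  -- the Jensen inequality step
  have hjensen := jensen_exp_int a b hab q hq0 hq1 φ hφmeas hφb
  -- rewrite CRPS of experts
  have hCRPSi : ∀ i, -(2 / (b - a)) * CRPS a b (F i) y = c * ∫ u in s, φ i u := by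
    intro i
    have h1 : CRPS a b (F i) y = ∫ u in s, (F i u - Heav (u - y)) ^ 2 := by
      rw [CRPS, intervalIntegral.integral_of_le hab.le]
    have h2 : ∫ u in s, (F i u - Heav (u - y)) ^ 2 = ∫ u in s, (Ft i u - h u) ^ 2 := by
      apply MeasureTheory.setIntegral_congr_fun hsm
      intro u hu
      show (F i u - Heav (u - y)) ^ 2 = (Ft i u - h u) ^ 2
      rw [hFteq i u hu]
    have h3 : ∫ u in s, φ i u = ∫ u in s, (-2) * (Ft i u - h u) ^ 2 := rfl
    rw [h1, h2, h3, MeasureTheory.integral_const_mul]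
    rw [hc]
    field_simp
  -- rewrite CRPS of the aggregated forecaster
  have hCRPSG : -(2 / (b - a)) * CRPS a b
      (fun u => 1/2 - (1/4) * Real.log
        ((∑ i, q i * Real.exp (-2 * (F i u) ^ 2)) /
         (∑ i, q i * Real.exp (-2 * (1 - F i u) ^ 2)))) y
      = c * ∫ u in s, (-2) * (Gt u - h u) ^ 2 := by
    have h1 : CRPS a b (fun u => 1/2 - (1/4) * Real.log
        ((∑ i, q i * Real.exp (-2 * (F i u) ^ 2)) /
         (∑ i, q i * Real.exp (-2 * (1 - F i u) ^ 2)))) y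
        = ∫ u in s, ((fun u => 1/2 - (1/4) * Real.log
        ((∑ i, q i * Real.exp (-2 * (F i u) ^ 2)) /
         (∑ i, q i * Real.exp (-2 * (1 - F i u) ^ 2)))) u - Heav (u - y)) ^ 2 := by
      rw [CRPS, intervalIntegral.integral_of_le hab.le]
    have h2 : ∫ u in s, ((fun u => 1/2 - (1/4) * Real.log
        ((∑ i, q i * Real.exp (-2 * (F i u) ^ 2)) /
         (∑ i, q i * Real.exp (-2 * (1 - F i u) ^ 2)))) u - Heav (u - y)) ^ 2
        = ∫ u in s, (Gt u - h u) ^ 2 := by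
      apply MeasureTheory.setIntegral_congr_fun hsm
      intro u hu
      show (1/2 - (1/4) * Real.log
        ((∑ i, q i * Real.exp (-2 * (F i u) ^ 2)) /
         (∑ i, q i * Real.exp (-2 * (1 - F i u) ^ 2))) - Heav (u - y)) ^ 2
        = (Gt u - h u) ^ 2
      have e0 : (∑ i, q i * Real.exp (-2 * (F i u) ^ 2))
          = ∑ i, q i * Real.exp (-2 * (Ft i u) ^ 2) :=
        Finset.sum_congr rfl (fun i _ => by rw [hFteq i u hu])
      have e1 : (∑ i, q i * Real.exp (-2 * (1 - F i u) ^ 2))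
          = ∑ i, q i * Real.exp (-2 * (1 - Ft i u) ^ 2) :=
        Finset.sum_congr rfl (fun i _ => by rw [hFteq i u hu])
      rw [e0, e1]
    rw [h1, h2, MeasureTheory.integral_const_mul]
    rw [hc]
    field_simp
  -- chain of inequalities
  have hchain1 : c * (∫ u in s, Real.log (S u)) ≤ c * ∫ u in s, (-2) * (Gt u - h u) ^ 2 := by
    apply mul_le_mul_of_nonneg_left _ hcpos.le
    exact MeasureTheory.setIntegral_mono_on hintlogS hintG hsm (fun u _ => hpt u)
  calc ∑ i, q i * Real.exp (-(2 / (b - a)) * CRPS a b (F i) y)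
      = ∑ i, q i * Real.exp (c * ∫ u in s, φ i u) := by
        exact Finset.sum_congr rfl (fun i _ => by rw [hCRPSi i])
    _ ≤ Real.exp (c * ∫ u in s, Real.log (∑ i, q i * Real.exp (φ i u))) := hjensen
    _ ≤ Real.exp (-(2 / (b - a)) * CRPS a b
          (fun u => 1/2 - (1/4) * Real.log
            ((∑ i, q i * Real.exp (-2 * (F i u) ^ 2)) /
             (∑ i, q i * Real.exp (-2 * (1 - F i u) ^ 2)))) y) := by
        apply Real.exp_le_exp.mpr
        rw [hCRPSG]
        exact hchain1
end

section
/- The aggregation formula preserves distribution functions: if F_1,…,F_N are probability distribution functions on [a,b] and (q_1,…,q_N) is a probability vector, then F(u) = 1/2 - (1/4) ln( (Σ_i q_i e^{-2 F_i(u)^2}) / (Σ_i q_i e^{-2(1-F_i(u))^2}) ) takes values in [0,1], is nondecreasing in u, and satisfies F(a) = 0 and F(b) = 1. -/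
open MeasureTheory Finset

/-- The AA aggregation formula maps probability distribution functions to a
probability distribution function: values in [0,1], nondecreasing, G(a)=0, G(b)=1. -/
theorem crps_aggregation_is_pdf (a b : ℝ) (hab : a < b) (N : ℕ)
    (F : Fin N → ℝ → ℝ) (hF : ∀ i, IsPDF a b (F i))
    (q : Fin N → ℝ) (hq0 : ∀ i, 0 ≤ q i) (hq1 : ∑ i, q i = 1)
    (G : ℝ → ℝ)
    (hG : ∀ u, G u = 1/2 - (1/4) * Real.log
      ((∑ i, q i * Real.exp (-2 * (F i u) ^ 2)) /
       (∑ i, q i * Real.exp (-2 * (1 - F i u) ^ 2)))) :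
    (∀ u ∈ Set.Icc a b, G u ∈ Set.Icc (0:ℝ) 1) ∧
    MonotoneOn G (Set.Icc a b) ∧ G a = 0 ∧ G b = 1 := by
  set A : ℝ → ℝ := fun u => ∑ i, q i * Real.exp (-2 * (F i u) ^ 2) with hAdef
  set B : ℝ → ℝ := fun u => ∑ i, q i * Real.exp (-2 * (1 - F i u) ^ 2) with hBdef
  have hrange : ∀ i, ∀ u ∈ Set.Icc a b, 0 ≤ F i u ∧ F i u ≤ 1 := by
    intro i u hu
    obtain ⟨-, h2, -⟩ := hF i
    exact ⟨(h2 u hu).1, (h2 u hu).2⟩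
  have hAlb : ∀ u ∈ Set.Icc a b, Real.exp (-2) ≤ A u := by
    intro u hu
    calc Real.exp (-2) = ∑ i, q i * Real.exp (-2) := by
          rw [← Finset.sum_mul, hq1, one_mul]
      _ ≤ A u := by
          apply Finset.sum_le_sum
          intro i _
          apply mul_le_mul_of_nonneg_left _ (hq0 i)
          apply Real.exp_le_exp.2
          have := hrange i u hu
          nlinarith [this.1, this.2]
  have hAub : ∀ u ∈ Set.Icc a b, A u ≤ 1 := by
    intro u hu
    calc A u ≤ ∑ i, q i * 1 := by
          apply Finset.sum_le_sum
          intro i _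
          apply mul_le_mul_of_nonneg_left _ (hq0 i)
          rw [← Real.exp_zero]
          apply Real.exp_le_exp.2
          nlinarith [(hrange i u hu).1]
      _ = 1 := by simp [hq1]
  have hBlb : ∀ u ∈ Set.Icc a b, Real.exp (-2) ≤ B u := by
    intro u hu
    calc Real.exp (-2) = ∑ i, q i * Real.exp (-2) := by
          rw [← Finset.sum_mul, hq1, one_mul]
      _ ≤ B u := by
          apply Finset.sum_le_sum
          intro i _
          apply mul_le_mul_of_nonneg_left _ (hq0 i)
          apply Real.exp_le_exp.2
          have := hrange i u hu
          nlinarith [this.1, this.2]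
  have hBub : ∀ u ∈ Set.Icc a b, B u ≤ 1 := by
    intro u hu
    calc B u ≤ ∑ i, q i * 1 := by
          apply Finset.sum_le_sum
          intro i _
          apply mul_le_mul_of_nonneg_left _ (hq0 i)
          rw [← Real.exp_zero]
          apply Real.exp_le_exp.2
          nlinarith [(hrange i u hu).1, (hrange i u hu).2]
      _ = 1 := by simp [hq1]
  have hexp2 : (0:ℝ) < Real.exp (-2) := Real.exp_pos _
  have hApos : ∀ u ∈ Set.Icc a b, 0 < A u := fun u hu => lt_of_lt_of_le hexp2 (hAlb u hu)
  have hBpos : ∀ u ∈ Set.Icc a b, 0 < B u := fun u hu => lt_of_lt_of_le hexp2 (hBlb u hu)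
  have hGval : ∀ u, G u = 1/2 - (1/4) * Real.log (A u / B u) := hG
  have ha : a ∈ Set.Icc a b := ⟨le_refl a, le_of_lt hab⟩
  have hb : b ∈ Set.Icc a b := ⟨le_of_lt hab, le_refl b⟩
  refine ⟨?_, ?_, ?_, ?_⟩
  · intro u hu
    have h1 : A u / B u ≤ Real.exp 2 := by
      have : A u / B u ≤ 1 / Real.exp (-2) :=
        div_le_div₀ zero_le_one (hAub u hu) hexp2 (hBlb u hu)
      rwa [one_div, ← Real.exp_neg, neg_neg] at this
    have h2 : Real.exp (-2) ≤ A u / B u := by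
      have : Real.exp (-2) / 1 ≤ A u / B u :=
        div_le_div₀ (le_of_lt (hApos u hu)) (hAlb u hu) (hBpos u hu) (hBub u hu)
      rwa [div_one] at this
    have hlog1 : Real.log (A u / B u) ≤ 2 := by
      have := Real.log_le_log (lt_of_lt_of_le hexp2 h2) h1
      rwa [Real.log_exp] at this
    have hlog2 : (-2:ℝ) ≤ Real.log (A u / B u) := by
      have := Real.log_le_log hexp2 h2
      rwa [Real.log_exp] at this
    rw [hGval u]
    constructor <;> [nlinarith; nlinarith]
  · intro u hu v hv huv
    have hAmono : A v ≤ A u := by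
      apply Finset.sum_le_sum
      intro i _
      apply mul_le_mul_of_nonneg_left _ (hq0 i)
      apply Real.exp_le_exp.2
      have hm : F i u ≤ F i v := (hF i).1 hu hv huv
      have h1 := hrange i u hu
      nlinarith [h1.1]
    have hBmono : B u ≤ B v := by
      apply Finset.sum_le_sum
      intro i _
      apply mul_le_mul_of_nonneg_left _ (hq0 i)
      apply Real.exp_le_exp.2
      have hm : F i u ≤ F i v := (hF i).1 hu hv huv
      have h2 := hrange i v hv
      nlinarith [h2.2]
    have hdiv : A v / B v ≤ A u / B u :=
      div_le_div₀ (le_of_lt (hApos u hu)) hAmono (hBpos u hu) hBmono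
    have hpos : 0 < A v / B v := div_pos (hApos v hv) (hBpos v hv)
    have hlog : Real.log (A v / B v) ≤ Real.log (A u / B u) :=
      Real.log_le_log hpos hdiv
    rw [hGval u, hGval v]
    linarith
  · have hFa : ∀ i, F i a = 0 := fun i => (hF i).2.2.1
    have : A a = 1 ∧ B a = Real.exp (-2) := by
      constructor
      · simp only [hAdef, hFa]
        simp [hq1]
      · simp only [hBdef, hFa]
        rw [← Finset.sum_mul]
        norm_num [hq1]
    rw [hGval a, this.1, this.2, Real.log_div one_ne_zero (Real.exp_ne_zero _),
      Real.log_one, Real.log_exp]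
    norm_num
  · have hFb : ∀ i, F i b = 1 := fun i => (hF i).2.2.2.1
    have : A b = Real.exp (-2) ∧ B b = 1 := by
      constructor
      · simp only [hAdef, hFb]
        rw [← Finset.sum_mul]
        norm_num [hq1]
      · simp only [hBdef, hFb]
        simp [hq1]
    rw [hGval b, this.1, this.2, div_one, Real.log_exp]
    norm_num
end

section
/- Regret bound for Algorithm 3 (AA with CRPS): with initial weights w_{i,1} = 1/N, updates w_{i,t+1} = w_{i,t} e^{-(2/(b-a)) CRPS(F_{i,t}, y_t)}, and learner's forecast F_t given by the AA substitution formula F_t(u) = 1/2 - (1/4) ln( (Σ_i w*_{i,t} e^{-2 F_{i,t}(u)^2})/(Σ_i w*_{i,t} e^{-2(1-F_{i,t}(u))^2}) ), for every T: Σ_{t=1}^T CRPS(F_t, y_t) ≤ min_{1≤i≤N} Σ_{t=1}^T CRPS(F_{i,t}, y_t) + ((b-a)/2) ln N. -/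
open MeasureTheory Finset

lemma hoeff_pos {α β : ℝ} (hα : 0 < α) (hβ : 0 < β) (hs : α + β = 2) (δ : ℝ) :
    α * Real.exp (β * δ) + β * Real.exp (-α * δ) ≤ 2 * Real.exp (δ^2 / 2) := by
  set h : ℝ → ℝ := fun x => α * Real.exp (β * x) + β * Real.exp (-α * x) with hh
  have hpos : ∀ x, 0 < h x := fun x => by positivity
  set φ : ℝ → ℝ := fun x => Real.log (h x) - x^2/2 with hφ
  set N : ℝ → ℝ := fun x => α * β * Real.exp (β * x) - β * α * Real.exp (-α * x) with hNdef
  have d1 : ∀ x, HasDerivAt (fun x : ℝ => β * x) β x := fun x => by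
    simpa using (hasDerivAt_id x).const_mul β
  have d2 : ∀ x, HasDerivAt (fun x : ℝ => -α * x) (-α) x := fun x => by
    simpa using (hasDerivAt_id x).const_mul (-α)
  have dh : ∀ x, HasDerivAt h (N x) x := by
    intro x
    have := ((d1 x).exp.const_mul α).add ((d2 x).exp.const_mul β)
    refine this.congr_deriv ?_
    simp only [N]; ring
  set dφ : ℝ → ℝ := fun x => N x / h x - x with hdφ
  have dφh : ∀ x, HasDerivAt φ (dφ x) x := by
    intro x
    have hl : HasDerivAt (fun x => Real.log (h x)) (N x / h x) x :=
      (dh x).log (hpos x).ne'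
    have hq : HasDerivAt (fun x : ℝ => x^2/2) x x := by
      simpa using (hasDerivAt_pow 2 x).div_const 2
    exact hl.sub hq
  set N' : ℝ → ℝ := fun x => α * β * (β * Real.exp (β * x)) - β * α * (-α * Real.exp (-α * x))
    with hN'def
  have dN : ∀ x, HasDerivAt N (N' x) x := by
    intro x
    have := (((d1 x).exp.const_mul (α*β)).sub ((d2 x).exp.const_mul (β*α)))
    refine this.congr_deriv ?_
    simp only [N']; ring
  have ddφ : ∀ x, HasDerivAt dφ ((N' x * h x - N x * N x) / (h x)^2 - 1) x := by
    intro x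
    exact ((dN x).div (dh x) (hpos x).ne').sub (hasDerivAt_id x)
  have hdd_nonpos : ∀ x, (N' x * h x - N x * N x) / (h x)^2 - 1 ≤ 0 := by
    intro x
    have hP : 0 < Real.exp (β * x) := Real.exp_pos _
    have hQ : 0 < Real.exp (-α * x) := Real.exp_pos _
    have key : N' x * h x - N x * N x ≤ (h x)^2 := by
      have expand : N' x * h x - N x * N x
          = α * β * (α + β)^2 * (Real.exp (β * x) * Real.exp (-α * x)) := by
        simp only [hN'def, hNdef, hh]; ring
      have h2 : (h x)^2 ≥ 4 * (α * β * (Real.exp (β * x) * Real.exp (-α * x))) := by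
        simp only [hh]
        nlinarith [sq_nonneg (α * Real.exp (β * x) - β * Real.exp (-α * x))]
      rw [expand, hs]
      nlinarith
    have h1 : (N' x * h x - N x * N x) / (h x)^2 ≤ 1 :=
      (div_le_one (by positivity : (0:ℝ) < (h x)^2)).mpr key
    linarith
  have hanti : Antitone dφ :=
    antitone_of_deriv_nonpos (fun x => (ddφ x).differentiableAt)
      (fun x => by rw [(ddφ x).deriv]; exact hdd_nonpos x)
  have hdφ0 : dφ 0 = 0 := by
    simp [hdφ, hNdef, mul_comm]
  have hcont : Continuous φ := by
    have : Differentiable ℝ φ := fun x => (dφh x).differentiableAt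
    exact this.continuous
  have hmax : φ δ ≤ φ 0 := by
    rcases le_total 0 δ with hδ | hδ
    · have ha : AntitoneOn φ (Set.Ici 0) := by
        apply antitoneOn_of_deriv_nonpos (convex_Ici 0) hcont.continuousOn
          (fun x _ => (dφh x).differentiableAt.differentiableWithinAt)
        intro x hx
        rw [(dφh x).deriv]
        have : dφ x ≤ dφ 0 := hanti (le_of_lt (by simpa [interior_Ici] using hx))
        linarith [hdφ0 ▸ this]
      exact ha Set.self_mem_Ici hδ hδ
    · have hm : MonotoneOn φ (Set.Iic 0) := by
        apply monotoneOn_of_deriv_nonneg (convex_Iic 0) hcont.continuousOn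
          (fun x _ => (dφh x).differentiableAt.differentiableWithinAt)
        intro x hx
        rw [(dφh x).deriv]
        have : dφ 0 ≤ dφ x := hanti (le_of_lt (by simpa [interior_Iic] using hx))
        linarith [hdφ0 ▸ this]
      exact hm hδ Set.self_mem_Iic hδ
  have hφ0 : φ 0 = Real.log 2 := by
    simp [hφ, hh, hs]
  have : Real.log (h δ) ≤ Real.log 2 + δ^2/2 := by
    have := hmax; rw [hφ0] at this; simp only [hφ] at this; linarith
  calc h δ ≤ Real.exp (Real.log 2 + δ^2/2) := by
        rw [← Real.exp_log (hpos δ)]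
        exact Real.exp_le_exp.mpr this
    _ = 2 * Real.exp (δ^2/2) := by
        rw [Real.exp_add, Real.exp_log two_pos]

lemma hoeff {α β : ℝ} (hα : 0 ≤ α) (hβ : 0 ≤ β) (hs : α + β = 2) (δ : ℝ) :
    α * Real.exp (β * δ) + β * Real.exp (-α * δ) ≤ 2 * Real.exp (δ^2 / 2) := by
  have he : (1:ℝ) ≤ Real.exp (δ^2/2) := by
    rw [← Real.exp_zero]; exact Real.exp_le_exp.mpr (by positivity)
  rcases eq_or_lt_of_le hα with h0 | hα'
  · have hβ2 : β = 2 := by linarith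
    rw [← h0, hβ2]; simp; nlinarith [Real.exp_pos (δ^2/2)]
  rcases eq_or_lt_of_le hβ with h0 | hβ'
  · have hα2 : α = 2 := by linarith
    rw [← h0, hα2]; simp; nlinarith [Real.exp_pos (δ^2/2)]
  exact hoeff_pos hα' hβ' hs δ

/-- tangent-type inequality for the square-loss exp-curve -/
lemma star {τ : ℝ} (hτ : τ ∈ Set.Icc (-1:ℝ) 1) (t : ℝ) :
    (1+τ) * Real.exp (-(1-t)^2/2) + (1-τ) * Real.exp (2*τ - (1+t)^2/2)
      ≤ 2 * Real.exp (-(1-τ)^2/2) := by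
  obtain ⟨h1, h2⟩ := hτ
  set δ := t - τ with hδ
  have key := hoeff (by linarith : (0:ℝ) ≤ 1+τ) (by linarith : (0:ℝ) ≤ 1-τ)
    (by ring) δ
  have hc : 0 < Real.exp (-(1-τ)^2/2 - δ^2/2) := Real.exp_pos _
  have hmul := mul_le_mul_of_nonneg_right key hc.le
  have e1 : Real.exp ((1-τ)*δ) * Real.exp (-(1-τ)^2/2 - δ^2/2)
      = Real.exp (-(1-t)^2/2) := by
    rw [← Real.exp_add]; congr 1; rw [hδ]; ring
  have e2 : Real.exp (-(1+τ)*δ) * Real.exp (-(1-τ)^2/2 - δ^2/2)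
      = Real.exp (2*τ - (1+t)^2/2) := by
    rw [← Real.exp_add]; congr 1; rw [hδ]; ring
  have e3 : Real.exp (δ^2/2) * Real.exp (-(1-τ)^2/2 - δ^2/2)
      = Real.exp (-(1-τ)^2/2) := by
    rw [← Real.exp_add]; congr 1; ring
  have expand : (1+τ) * Real.exp (-(1-t)^2/2) + (1-τ) * Real.exp (2*τ-(1+t)^2/2)
      = ((1+τ)*Real.exp ((1-τ)*δ) + (1-τ)*Real.exp (-(1+τ)*δ))
        * Real.exp (-(1-τ)^2/2 - δ^2/2) := by
    rw [← e1, ← e2]; ring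
  have expand2 : 2 * Real.exp (δ^2/2) * Real.exp (-(1-τ)^2/2 - δ^2/2)
      = 2 * Real.exp (-(1-τ)^2/2) := by rw [← e3]; ring
  rw [expand, ← expand2]; exact hmul

/-- Mixability of the square loss with the AA substitution value. -/
lemma mixability {N : ℕ} (W : Fin N → ℝ) (hW : ∀ i, 0 ≤ W i) (hW1 : ∑ i, W i = 1)
    (p : Fin N → ℝ) (hp : ∀ i, p i ∈ Set.Icc (0:ℝ) 1) :
    (1/2 - (1/4) * Real.log ((∑ i, W i * Real.exp (-2 * (p i)^2)) /
        (∑ i, W i * Real.exp (-2 * (1 - p i)^2))))^2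
      ≤ -(1/2) * Real.log (∑ i, W i * Real.exp (-2 * (p i)^2)) ∧
    (1 - (1/2 - (1/4) * Real.log ((∑ i, W i * Real.exp (-2 * (p i)^2)) /
        (∑ i, W i * Real.exp (-2 * (1 - p i)^2)))))^2
      ≤ -(1/2) * Real.log (∑ i, W i * Real.exp (-2 * (1 - p i)^2)) := by
  set A := ∑ i, W i * Real.exp (-2 * (p i)^2) with hA
  set B := ∑ i, W i * Real.exp (-2 * (1 - p i)^2) with hB
  have hex : ∃ i, W i ≠ 0 := by
    by_contra hc
    push_neg at hc
    rw [Finset.sum_eq_zero (fun i _ => by simp [hc i])] at hW1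
    exact one_ne_zero hW1.symm
  obtain ⟨i₀, hi₀⟩ := hex
  have hi₀' : 0 < W i₀ := lt_of_le_of_ne (hW i₀) (Ne.symm hi₀)
  have hApos : 0 < A := by
    apply Finset.sum_pos' (fun i _ => mul_nonneg (hW i) (Real.exp_pos _).le)
    exact ⟨i₀, Finset.mem_univ _, mul_pos hi₀' (Real.exp_pos _)⟩
  have hBpos : 0 < B := by
    apply Finset.sum_pos' (fun i _ => mul_nonneg (hW i) (Real.exp_pos _).le)
    exact ⟨i₀, Finset.mem_univ _, mul_pos hi₀' (Real.exp_pos _)⟩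
  -- ratio bounds
  have hBA1 : B ≤ Real.exp 2 * A := by
    rw [hB, hA, Finset.mul_sum]
    apply Finset.sum_le_sum
    intro i _
    rw [← mul_assoc, mul_comm (Real.exp 2) (W i), mul_assoc, ← Real.exp_add]
    apply mul_le_mul_of_nonneg_left _ (hW i)
    apply Real.exp_le_exp.mpr
    have := (hp i).1; have := (hp i).2
    nlinarith
  have hBA2 : Real.exp (-2) * A ≤ B := by
    rw [hB, hA, Finset.mul_sum]
    apply Finset.sum_le_sum
    intro i _
    rw [← mul_assoc, mul_comm (Real.exp (-2)) (W i), mul_assoc, ← Real.exp_add]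
    apply mul_le_mul_of_nonneg_left _ (hW i)
    apply Real.exp_le_exp.mpr
    have := (hp i).1; have := (hp i).2
    nlinarith
  set τ := Real.log (B/A) / 2 with hτdef
  have hBeA : B = Real.exp (2*τ) * A := by
    have hlog : Real.exp (2*τ) = B / A := by
      rw [hτdef, show 2*(Real.log (B/A)/2) = Real.log (B/A) from by ring,
        Real.exp_log (by positivity)]
    rw [hlog]
    field_simp
  have hτmem : τ ∈ Set.Icc (-1:ℝ) 1 := by
    constructor
    · have : Real.exp (-2) ≤ B / A := by
        rw [le_div_iff₀ hApos]; linarith [hBA2]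
      have := Real.log_le_log (by positivity) this
      rw [Real.log_exp] at this
      rw [hτdef]; linarith
    · have : B / A ≤ Real.exp 2 := by
        rw [div_le_iff₀ hApos]; linarith [hBA1]
      have := Real.log_le_log (by positivity) this
      rw [Real.log_exp] at this
      rw [hτdef]; linarith
  -- summed tangent inequality
  have hsum : (1+τ) * B + (1-τ) * (Real.exp (2*τ) * A) ≤ 2 * Real.exp (-(1-τ)^2/2) := by
    have hterm : ∀ i, (1+τ) * (W i * Real.exp (-2*(1-p i)^2))
        + (1-τ) * (Real.exp (2*τ) * (W i * Real.exp (-2*(p i)^2)))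
        ≤ W i * (2 * Real.exp (-(1-τ)^2/2)) := by
      intro i
      have hstar := star hτmem (2 * p i - 1)
      have e1 : Real.exp (-(1-(2*p i-1))^2/2) = Real.exp (-2*(1-p i)^2) := by
        congr 1; ring
      have e2 : Real.exp (2*τ - (1+(2*p i-1))^2/2) = Real.exp (2*τ) * Real.exp (-2*(p i)^2) := by
        rw [← Real.exp_add]; congr 1; ring
      rw [e1, e2] at hstar
      have := mul_le_mul_of_nonneg_left hstar (hW i)
      calc (1+τ) * (W i * Real.exp (-2*(1-p i)^2))
            + (1-τ) * (Real.exp (2*τ) * (W i * Real.exp (-2*(p i)^2)))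
          = W i * ((1+τ) * Real.exp (-2*(1-p i)^2)
            + (1-τ) * (Real.exp (2*τ) * Real.exp (-2*(p i)^2))) := by ring
        _ ≤ W i * (2 * Real.exp (-(1-τ)^2/2)) := by
            apply mul_le_mul_of_nonneg_left _ (hW i)
            calc (1+τ) * Real.exp (-2*(1-p i)^2)
                + (1-τ) * (Real.exp (2*τ) * Real.exp (-2*(p i)^2)) ≤
                2 * Real.exp (-(1-τ)^2/2) := by
                  convert hstar using 2
            _ = 2 * Real.exp (-(1-τ)^2/2) := rfl
    calc (1+τ) * B + (1-τ) * (Real.exp (2*τ) * A)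
        = ∑ i, ((1+τ) * (W i * Real.exp (-2*(1-p i)^2))
          + (1-τ) * (Real.exp (2*τ) * (W i * Real.exp (-2*(p i)^2)))) := by
          simp only [hA, hB, Finset.mul_sum]
          rw [← Finset.sum_add_distrib]
      _ ≤ ∑ i, W i * (2 * Real.exp (-(1-τ)^2/2)) := Finset.sum_le_sum (fun i _ => hterm i)
      _ = 2 * Real.exp (-(1-τ)^2/2) := by
          rw [← Finset.sum_mul, hW1, one_mul]
  -- conclude A ≤ exp(-(1+τ)²/2), B ≤ exp(-(1-τ)²/2)
  have hBbound : B ≤ Real.exp (-(1-τ)^2/2) := by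
    rw [hBeA] at hsum ⊢
    nlinarith [Real.exp_pos (2*τ), hApos]
  have hAbound : A ≤ Real.exp (-(1+τ)^2/2) := by
    have : Real.exp (2*τ) * A ≤ Real.exp (-(1-τ)^2/2) := hBeA ▸ hBbound
    have h2 := mul_le_mul_of_nonneg_left this (Real.exp_pos (-(2*τ))).le
    rw [← mul_assoc, ← Real.exp_add] at h2
    simp only [neg_add_cancel, Real.exp_zero, one_mul] at h2
    rw [← Real.exp_add] at h2
    rw [show -(1+τ)^2/2 = -(2*τ) + -(1-τ)^2/2 by ring]; exact h2
  -- the substitution value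
  have hq : 1/2 - (1/4) * Real.log (A/B) = 1/2 + τ/2 := by
    have : Real.log (A/B) = -Real.log (B/A) := by
      rw [← Real.log_inv]; congr 1; field_simp
    rw [this, hτdef]; ring
  rw [hq]
  constructor
  · have hlog : Real.log A ≤ -(1+τ)^2/2 := by
      have := Real.log_le_log hApos hAbound
      rwa [Real.log_exp] at this
    nlinarith
  · have hlog : Real.log B ≤ -(1-τ)^2/2 := by
      have := Real.log_le_log hBpos hBbound
      rwa [Real.log_exp] at this
    nlinarith

lemma lse_convex {N : ℕ} (W : Fin N → ℝ) (hW : ∀ i, 0 ≤ W i) (hW1 : ∑ i, W i = 1) :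
    ConvexOn ℝ Set.univ (fun x : Fin N → ℝ => Real.log (∑ i, W i * Real.exp (x i))) := by
  have hex : ∃ i₀, 0 < W i₀ := by
    by_contra hc
    push_neg at hc
    have : ∀ i, W i = 0 := fun i => le_antisymm (hc i) (hW i)
    rw [Finset.sum_eq_zero (fun i _ => by simp [this i])] at hW1
    exact one_ne_zero hW1.symm
  obtain ⟨i₀, hi₀⟩ := hex
  have hpos : ∀ x : Fin N → ℝ, 0 < ∑ i, W i * Real.exp (x i) := by
    intro x
    apply Finset.sum_pos' (fun i _ => mul_nonneg (hW i) (Real.exp_pos _).le)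
    exact ⟨i₀, Finset.mem_univ _, mul_pos hi₀ (Real.exp_pos _)⟩
  refine ⟨convex_univ, ?_⟩
  intro x _ y _ lam mu hlam hmu hlm
  set X := ∑ i, W i * Real.exp (x i) with hX
  set Y := ∑ i, W i * Real.exp (y i) with hY
  have hXpos := hpos x
  have hYpos := hpos y
  have key : ∑ i, W i * Real.exp (lam * x i + mu * y i) ≤ X ^ lam * Y ^ mu := by
    have hXYpos : 0 < X ^ lam * Y ^ mu := by
      apply mul_pos <;> exact Real.rpow_pos_of_pos (by assumption) _
    rw [← div_le_one hXYpos, Finset.sum_div]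
    calc ∑ i, W i * Real.exp (lam * x i + mu * y i) / (X ^ lam * Y ^ mu)
        = ∑ i, W i * ((Real.exp (x i) / X) ^ lam * (Real.exp (y i) / Y) ^ mu) := by
          apply Finset.sum_congr rfl
          intro i _
          rw [Real.div_rpow (Real.exp_pos _).le hXpos.le,
            Real.div_rpow (Real.exp_pos _).le hYpos.le,
            ← Real.exp_mul, ← Real.exp_mul]
          rw [div_mul_div_comm, ← Real.exp_add]
          rw [← hX, ← hY]
          ring_nf
      _ ≤ ∑ i, W i * (lam * (Real.exp (x i) / X) + mu * (Real.exp (y i) / Y)) := by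
          apply Finset.sum_le_sum
          intro i _
          exact mul_le_mul_of_nonneg_left
            (Real.geom_mean_le_arith_mean2_weighted hlam hmu
              (by positivity) (by positivity) hlm) (hW i)
      _ = lam * ((∑ i, W i * Real.exp (x i)) / X) + mu * ((∑ i, W i * Real.exp (y i)) / Y) := by
          rw [Finset.sum_congr rfl (fun i _ => by ring :
            ∀ i ∈ Finset.univ, W i * (lam * (Real.exp (x i) / X) + mu * (Real.exp (y i) / Y))
              = lam * (W i * Real.exp (x i)) / X + mu * (W i * Real.exp (y i)) / Y),
            Finset.sum_add_distrib, ← Finset.sum_div, ← Finset.sum_div,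
            ← Finset.mul_sum, ← Finset.mul_sum]
          ring
      _ = 1 := by
          rw [← hX, ← hY, div_self hXpos.ne', div_self hYpos.ne']
          linarith
  have hcoe : (∑ i, W i * Real.exp ((lam • x + mu • y) i))
      = ∑ i, W i * Real.exp (lam * x i + mu * y i) :=
    Finset.sum_congr rfl (fun i _ => by simp)
  have hlog := Real.log_le_log (hpos _) (le_of_eq_of_le hcoe key)
  calc Real.log (∑ i, W i * Real.exp ((lam • x + mu • y) i))
      ≤ Real.log (X ^ lam * Y ^ mu) := hlog
    _ = lam * Real.log X + mu * Real.log Y := by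
        rw [Real.log_mul (by positivity) (by positivity),
          Real.log_rpow hXpos, Real.log_rpow hYpos]
    _ = lam • Real.log X + mu • Real.log Y := by simp

lemma heav_mem (x : ℝ) : Heav x = 0 ∨ Heav x = 1 := by
  unfold Heav; split <;> simp

lemma heav_measurable : Measurable Heav := by
  unfold Heav
  exact Measurable.ite (measurableSet_lt measurable_id measurable_const)
    measurable_const measurable_const

/-- Regret bound for Algorithm 3 (AA applied to CRPS): the learner's cumulative
CRPS is at most every expert's cumulative CRPS plus ((b-a)/2) ln N. -/
theorem crps_aa_regret (a b : ℝ) (hab : a < b) (N : ℕ) (hN : 0 < N)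
    (F : Fin N → ℕ → ℝ → ℝ) (hF : ∀ i t, IsPDF a b (F i t))
    (y : ℕ → ℝ) (hy : ∀ t, y t ∈ Set.Icc a b)
    (w : ℕ → Fin N → ℝ)
    (hw0 : ∀ i, w 0 i = 1 / N)
    (hwt : ∀ t i, w (t + 1) i = w t i *
      Real.exp (-(2 / (b - a)) * CRPS a b (F i t) (y t)))
    (Fl : ℕ → ℝ → ℝ)
    (hFl : ∀ t u, Fl t u = 1/2 - (1/4) * Real.log
      ((∑ i, (w t i / ∑ j, w t j) * Real.exp (-2 * (F i t u) ^ 2)) /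
       (∑ i, (w t i / ∑ j, w t j) * Real.exp (-2 * (1 - F i t u) ^ 2)))) :
    ∀ (T : ℕ) (i : Fin N),
      ∑ t ∈ Finset.range T, CRPS a b (Fl t) (y t) ≤
        ∑ t ∈ Finset.range T, CRPS a b (F i t) (y t) +
          ((b - a) / 2) * Real.log N := by
  have hba : (0:ℝ) < b - a := by linarith
  -- positivity of weights
  have hwpos : ∀ t i, 0 < w t i := by
    intro t
    induction t with
    | zero => intro i; rw [hw0 i]; positivity
    | succ t ih => intro i; rw [hwt t i]; exact mul_pos (ih i) (Real.exp_pos _)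
  set S : ℕ → ℝ := fun t => ∑ j, w t j with hSdef
  have hSpos : ∀ t, 0 < S t := by
    intro t
    apply Finset.sum_pos (fun j _ => hwpos t j)
    exact Finset.univ_nonempty_iff.mpr (Fin.pos_iff_nonempty.mp hN)
  have hwT : ∀ (T : ℕ) (i : Fin N), w T i = (1/N) * Real.exp (-(2/(b-a)) * ∑ t ∈ Finset.range T, CRPS a b (F i t) (y t)) := by
    intro T i
    induction T with
    | zero => simp [hw0 i]
    | succ T ih =>
      rw [hwt T i, ih, Finset.sum_range_succ, mul_assoc, ← Real.exp_add]
      congr 2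
      ring
  -- per-round inequality
  have key : ∀ t, CRPS a b (Fl t) (y t) ≤
      ((b - a)/2) * (Real.log (S t) - Real.log (S (t+1))) := by
    intro t
    set Wst : Fin N → ℝ := fun i => w t i / S t with hWst
    have hWstnn : ∀ i, 0 ≤ Wst i := fun i => le_of_lt (div_pos (hwpos t i) (hSpos t))
    have hWst1 : ∑ i, Wst i = 1 := by
      rw [hWst, ← Finset.sum_div]
      exact div_self (hSpos t).ne'
    set H : ℝ → ℝ := fun u => Heav (u - y t) with hHdef
    set L : Fin N → ℝ → ℝ := fun i u => (F i t u - H u)^2 with hLdef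
    set g : ℝ → ℝ := fun u => ∑ i, Wst i * Real.exp (-2 * L i u) with hgdef
    set μ : Measure ℝ := volume.restrict (Set.Ioc a b) with hμdef
    -- pointwise mixability
    have hpt : ∀ u ∈ Set.Icc a b, (Fl t u - H u)^2 ≤ -(1/2) * Real.log (g u) := by
      intro u hu
      have hmix := mixability Wst hWstnn hWst1 (fun i => F i t u)
        (fun i => (hF i t).2.1 u hu)
      have hFlu : Fl t u = 1/2 - (1/4) * Real.log
          ((∑ i, Wst i * Real.exp (-2 * (F i t u)^2)) /
           (∑ i, Wst i * Real.exp (-2 * (1 - F i t u)^2))) := hFl t u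
      by_cases hcase : u - y t < 0
      · have hH : H u = 0 := by show Heav (u - y t) = 0; unfold Heav; rw [if_pos hcase]
        have hg : g u = ∑ i, Wst i * Real.exp (-2 * (F i t u)^2) := by
          rw [hgdef]
          apply Finset.sum_congr rfl
          intro i _
          congr 2
          rw [hLdef]; simp [hH]
        rw [hH, hg, sub_zero, hFlu]
        exact hmix.1
      · have hH : H u = 1 := by show Heav (u - y t) = 1; unfold Heav; rw [if_neg hcase]
        have hg : g u = ∑ i, Wst i * Real.exp (-2 * (1 - F i t u)^2) := by
          rw [hgdef]
          apply Finset.sum_congr rfl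
          intro i _
          congr 1
          rw [hLdef]; simp only [hH]
          congr 1
          ring
        rw [hH, hg, hFlu]
        have : (1/2 - (1/4) * Real.log
          ((∑ i, Wst i * Real.exp (-2 * (F i t u)^2)) /
           (∑ i, Wst i * Real.exp (-2 * (1 - F i t u)^2))) - 1)^2
           = (1 - (1/2 - (1/4) * Real.log
          ((∑ i, Wst i * Real.exp (-2 * (F i t u)^2)) /
           (∑ i, Wst i * Real.exp (-2 * (1 - F i t u)^2)))))^2 := by ring
        rw [this]
        exact hmix.2
    -- positivity of normalized weights and g
    have hne : (Finset.univ : Finset (Fin N)).Nonempty :=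
      Finset.univ_nonempty_iff.mpr (Fin.pos_iff_nonempty.mp hN)
    have hWstpos : ∀ i, 0 < Wst i := fun i => div_pos (hwpos t i) (hSpos t)
    have hgpos : ∀ u, 0 < g u := fun u =>
      Finset.sum_pos (fun i _ => mul_pos (hWstpos i) (Real.exp_pos _)) hne
    -- generic bounds for weighted averages of exp(-2 s) with s ∈ [0,1]
    have havg_bd : ∀ (s : Fin N → ℝ), (∀ i, s i ∈ Set.Icc (0:ℝ) 1) →
        Real.exp (-2) ≤ (∑ i, Wst i * Real.exp (-2 * s i)) ∧
        (∑ i, Wst i * Real.exp (-2 * s i)) ≤ 1 := by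
      intro s hs
      constructor
      · calc Real.exp (-2) = ∑ i, Wst i * Real.exp (-2) := by
              rw [← Finset.sum_mul, hWst1, one_mul]
          _ ≤ ∑ i, Wst i * Real.exp (-2 * s i) := by
              apply Finset.sum_le_sum
              intro i _
              apply mul_le_mul_of_nonneg_left _ (hWstnn i)
              apply Real.exp_le_exp.mpr
              nlinarith [(hs i).1, (hs i).2]
      · calc (∑ i, Wst i * Real.exp (-2 * s i)) ≤ ∑ i, Wst i * 1 := by
              apply Finset.sum_le_sum
              intro i _
              apply mul_le_mul_of_nonneg_left _ (hWstnn i)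
              rw [← Real.exp_zero]
              apply Real.exp_le_exp.mpr
              nlinarith [(hs i).1, (hs i).2]
          _ = 1 := by rw [← Finset.sum_mul, hWst1]; ring
    -- bounds for L and g
    have hLbd : ∀ u ∈ Set.Icc a b, ∀ i, L i u ∈ Set.Icc (0:ℝ) 1 := by
      intro u hu i
      have hf01 := (hF i t).2.1 u hu
      have h0 := hf01.1; have h1 := hf01.2
      rcases heav_mem (u - y t) with h | h <;>
      · have hHu : H u = Heav (u - y t) := rfl
        constructor
        · rw [hLdef]; positivity
        · rw [hLdef]; simp only [hHu, h]; nlinarith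
    have hgbd : ∀ u ∈ Set.Icc a b,
        Real.exp (-2) ≤ g u ∧ g u ≤ 1 := fun u hu =>
      havg_bd (fun i => L i u) (fun i => hLbd u hu i)
    have hlogbd : ∀ u ∈ Set.Icc a b, -2 ≤ Real.log (g u) ∧ Real.log (g u) ≤ 0 := by
      intro u hu
      constructor
      · have := Real.log_le_log (Real.exp_pos _) (hgbd u hu).1
        rwa [Real.log_exp] at this
      · exact Real.log_nonpos (hgpos u).le (hgbd u hu).2
    -- measurability
    have hmF : ∀ i, AEMeasurable (fun u => F i t u) μ := fun i =>
      aemeasurable_restrict_of_monotoneOn measurableSet_Ioc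
        ((hF i t).1.mono Set.Ioc_subset_Icc_self)
    have hmH : Measurable H := heav_measurable.comp (measurable_id.sub measurable_const)
    have hmL : ∀ i, AEMeasurable (L i) μ := by
      intro i
      have h1 := (hmF i).sub hmH.aemeasurable
      have : L i = fun u => (F i t u - H u) * (F i t u - H u) := by
        funext u; rw [hLdef]; ring
      rw [this]
      exact h1.mul h1
    have hmg : AEMeasurable g μ := by
      apply Finset.aemeasurable_fun_sum
      intro i _
      exact aemeasurable_const.mul (Real.measurable_exp.comp_aemeasurable ((hmL i).const_mul (-2)))
    have hmlog : AEMeasurable (fun u => Real.log (g u)) μ :=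
      Real.measurable_log.comp_aemeasurable hmg
    -- finite measure instances
    haveI hfinμ : IsFiniteMeasure μ := by
      constructor
      rw [hμdef, Measure.restrict_apply_univ, Real.volume_Ioc]
      exact ENNReal.ofReal_lt_top
    haveI hμne : NeZero μ := by
      constructor
      intro h
      have h1 : μ Set.univ = 0 := by rw [h]; rfl
      rw [hμdef, Measure.restrict_apply_univ, Real.volume_Ioc] at h1
      rw [ENNReal.ofReal_eq_zero] at h1
      linarith
    -- integrability
    have haeIcc : ∀ᵐ u ∂μ, u ∈ Set.Icc a b := by
      rw [hμdef]
      filter_upwards [ae_restrict_mem measurableSet_Ioc] with u hu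
      exact Set.Ioc_subset_Icc_self hu
    have hintL : ∀ i, Integrable (L i) μ := by
      intro i
      apply Integrable.mono' (integrable_const (1:ℝ)) (hmL i).aestronglyMeasurable
      filter_upwards [haeIcc] with u hu
      rw [Real.norm_eq_abs, abs_of_nonneg (hLbd u hu i).1]
      exact (hLbd u hu i).2
    have hintlog : Integrable (fun u => Real.log (g u)) μ := by
      apply Integrable.mono' (integrable_const (2:ℝ)) hmlog.aestronglyMeasurable
      filter_upwards [haeIcc] with u hu
      rw [Real.norm_eq_abs, abs_le]
      exact ⟨(hlogbd u hu).1, by linarith [(hlogbd u hu).2]⟩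
    -- Fl bounds and integrability
    have hFl01 : ∀ u ∈ Set.Icc a b, 0 ≤ Fl t u ∧ Fl t u ≤ 1 := by
      intro u hu
      have hsq : ∀ i, (F i t u)^2 ∈ Set.Icc (0:ℝ) 1 := by
        intro i
        have := (hF i t).2.1 u hu
        constructor
        · positivity
        · nlinarith [this.1, this.2]
      have hsq' : ∀ i, (1 - F i t u)^2 ∈ Set.Icc (0:ℝ) 1 := by
        intro i
        have := (hF i t).2.1 u hu
        constructor
        · positivity
        · nlinarith [this.1, this.2]
      have hA := havg_bd (fun i => (F i t u)^2) hsq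
      have hB := havg_bd (fun i => (1 - F i t u)^2) hsq'
      have hApos : 0 < ∑ i, Wst i * Real.exp (-2 * (F i t u)^2) :=
        lt_of_lt_of_le (Real.exp_pos _) hA.1
      have hBpos : 0 < ∑ i, Wst i * Real.exp (-2 * (1 - F i t u)^2) :=
        lt_of_lt_of_le (Real.exp_pos _) hB.1
      have hlogA1 : -2 ≤ Real.log (∑ i, Wst i * Real.exp (-2 * (F i t u)^2)) := by
        have := Real.log_le_log (Real.exp_pos _) hA.1
        rwa [Real.log_exp] at this
      have hlogA2 : Real.log (∑ i, Wst i * Real.exp (-2 * (F i t u)^2)) ≤ 0 :=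
        Real.log_nonpos hApos.le hA.2
      have hlogB1 : -2 ≤ Real.log (∑ i, Wst i * Real.exp (-2 * (1 - F i t u)^2)) := by
        have := Real.log_le_log (Real.exp_pos _) hB.1
        rwa [Real.log_exp] at this
      have hlogB2 : Real.log (∑ i, Wst i * Real.exp (-2 * (1 - F i t u)^2)) ≤ 0 :=
        Real.log_nonpos hBpos.le hB.2
      have hdiv : Real.log ((∑ i, Wst i * Real.exp (-2 * (F i t u)^2)) /
          (∑ i, Wst i * Real.exp (-2 * (1 - F i t u)^2)))
          = Real.log (∑ i, Wst i * Real.exp (-2 * (F i t u)^2))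
            - Real.log (∑ i, Wst i * Real.exp (-2 * (1 - F i t u)^2)) :=
        Real.log_div hApos.ne' hBpos.ne'
      have hFlu : Fl t u = 1/2 - (1/4) * Real.log
          ((∑ i, Wst i * Real.exp (-2 * (F i t u)^2)) /
           (∑ i, Wst i * Real.exp (-2 * (1 - F i t u)^2))) := hFl t u
      rw [hFlu, hdiv]
      constructor <;> nlinarith
    have hmFl : AEMeasurable (Fl t) μ := by
      have hmA : AEMeasurable (fun u => ∑ i, Wst i * Real.exp (-2 * (F i t u)^2)) μ := by
        apply Finset.aemeasurable_fun_sum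
        intro i _
        have h2 : AEMeasurable (fun u => -2 * (F i t u)^2) μ := by
          have := ((hmF i).mul (hmF i)).const_mul (-2)
          have heq : (fun u => -2 * (F i t u)^2) = fun u => -2 * (F i t u * F i t u) := by
            funext u; ring
          rw [heq]; exact this
        exact aemeasurable_const.mul (Real.measurable_exp.comp_aemeasurable h2)
      have hmB : AEMeasurable (fun u => ∑ i, Wst i * Real.exp (-2 * (1 - F i t u)^2)) μ := by
        apply Finset.aemeasurable_fun_sum
        intro i _
        have h2 : AEMeasurable (fun u => -2 * (1 - F i t u)^2) μ := by
          have hsub := (aemeasurable_const (b := (1:ℝ))).sub (hmF i)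
          have := (hsub.mul hsub).const_mul (-2)
          have heq : (fun u => -2 * (1 - F i t u)^2)
              = fun u => -2 * ((1 - F i t u) * (1 - F i t u)) := by
            funext u; ring
          rw [heq]; exact this
        exact aemeasurable_const.mul (Real.measurable_exp.comp_aemeasurable h2)
      have heq : Fl t = fun u => 1/2 - (1/4) * Real.log
          ((∑ i, Wst i * Real.exp (-2 * (F i t u)^2)) /
           (∑ i, Wst i * Real.exp (-2 * (1 - F i t u)^2))) := funext (hFl t)
      rw [heq]
      exact aemeasurable_const.sub
        ((Real.measurable_log.comp_aemeasurable (hmA.div hmB)).const_mul (1/4))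
    have hintFl : Integrable (fun u => (Fl t u - H u)^2) μ := by
      have hm : AEMeasurable (fun u => (Fl t u - H u)^2) μ := by
        have h1 := hmFl.sub hmH.aemeasurable
        have heq : (fun u => (Fl t u - H u)^2)
            = fun u => (Fl t u - H u) * (Fl t u - H u) := by funext u; ring
        rw [heq]; exact h1.mul h1
      apply Integrable.mono' (integrable_const (1:ℝ)) hm.aestronglyMeasurable
      filter_upwards [haeIcc] with u hu
      rw [Real.norm_eq_abs, abs_of_nonneg (sq_nonneg _)]
      have h1 := (hFl01 u hu).1; have h2 := (hFl01 u hu).2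
      rcases heav_mem (u - y t) with h | h <;>
      · have hHu : H u = Heav (u - y t) := rfl
        rw [hHu, h]; nlinarith
    -- the vector function for Jensen
    set f : ℝ → (Fin N → ℝ) := fun u i => -2 * L i u with hfdef
    have hintf : Integrable f μ := by
      have heq : f = fun u => ∑ i, (-2 * L i u) • (Pi.single i (1:ℝ) : Fin N → ℝ) := by
        funext u
        funext j
        rw [hfdef]
        simp [Finset.sum_apply, Pi.single_apply]
      rw [heq]
      apply integrable_finset_sum
      intro i _
      exact ((hintL i).const_mul (-2)).smul_const _
    have hcontLSE : Continuous (fun x : Fin N → ℝ => Real.log (∑ i, Wst i * Real.exp (x i))) := by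
      apply Continuous.log
      · exact continuous_finset_sum _
          (fun i _ => continuous_const.mul (Real.continuous_exp.comp (continuous_apply i)))
      · intro x
        exact (Finset.sum_pos (fun i _ => mul_pos (hWstpos i) (Real.exp_pos _)) hne).ne'
    have hintlse : Integrable
        ((fun x : Fin N → ℝ => Real.log (∑ i, Wst i * Real.exp (x i))) ∘ f) μ := hintlog
    have hJ := (lse_convex Wst hWstnn hWst1).map_average_le hcontLSE.continuousOn
      isClosed_univ (Filter.Eventually.of_forall (fun x => Set.mem_univ _)) hintf hintlse
    -- compute the average of f
    have htoReal : (μ Set.univ).toReal = b - a := by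
      rw [hμdef, Measure.restrict_apply_univ, Real.volume_Ioc, ENNReal.toReal_ofReal hba.le]
    have hCRPSint : ∀ i, CRPS a b (F i t) (y t) = ∫ u, L i u ∂μ := by
      intro i
      rw [CRPS, intervalIntegral.integral_of_le hab.le]
    have havg_f : ∀ i, (⨍ u, f u ∂μ) i = -(2/(b-a)) * CRPS a b (F i t) (y t) := by
      intro i
      have h1 := (ContinuousLinearMap.proj (R := ℝ) (φ := fun _ : Fin N => ℝ) i).integral_comp_comm hintf
      have h2 : (∫ u, f u ∂μ) i = ∫ u, -2 * L i u ∂μ := by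
        have h1' := h1.symm
        simp only [ContinuousLinearMap.proj_apply] at h1'
        exact h1'
      rw [average_eq, Pi.smul_apply, measureReal_def, htoReal, h2, smul_eq_mul, integral_const_mul,
        ← hCRPSint i]
      rw [div_eq_mul_inv]
      ring
    have havg_vec : (fun i => Real.exp ((⨍ u, f u ∂μ) i))
        = fun i => Real.exp (-(2/(b-a)) * CRPS a b (F i t) (y t)) := by
      funext i; rw [havg_f i]
    have hJ2 : Real.log (∑ i, Wst i * Real.exp (-(2/(b-a)) * CRPS a b (F i t) (y t)))
        ≤ (b-a)⁻¹ * ∫ u, Real.log (g u) ∂μ := by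
      have hlhs : Real.log (∑ i, Wst i * Real.exp ((⨍ u, f u ∂μ) i))
          = Real.log (∑ i, Wst i * Real.exp (-(2/(b-a)) * CRPS a b (F i t) (y t))) := by
        congr 1
        apply Finset.sum_congr rfl
        intro i _
        rw [havg_f i]
      have hrhs : (⨍ u, Real.log (∑ i, Wst i * Real.exp (f u i)) ∂μ)
          = (b-a)⁻¹ * ∫ u, Real.log (g u) ∂μ := by
        rw [average_eq, measureReal_def, htoReal, smul_eq_mul]
      calc Real.log (∑ i, Wst i * Real.exp (-(2/(b-a)) * CRPS a b (F i t) (y t)))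
          = Real.log (∑ i, Wst i * Real.exp ((⨍ u, f u ∂μ) i)) := hlhs.symm
        _ ≤ ⨍ u, Real.log (∑ i, Wst i * Real.exp (f u i)) ∂μ := hJ
        _ = (b-a)⁻¹ * ∫ u, Real.log (g u) ∂μ := hrhs
    -- weight identity
    have hwid : (∑ i, Wst i * Real.exp (-(2/(b-a)) * CRPS a b (F i t) (y t)))
        = S (t+1) / S t := by
      have : S (t+1) = ∑ i, w t i * Real.exp (-(2/(b-a)) * CRPS a b (F i t) (y t)) := by
        rw [hSdef]
        exact Finset.sum_congr rfl (fun i _ => hwt t i)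
      rw [this, Finset.sum_div]
      apply Finset.sum_congr rfl
      intro i _
      rw [hWst]
      ring
    -- integral comparison
    have hinthalf : Integrable (fun u => -(1/2) * Real.log (g u)) μ := hintlog.const_mul _
    have hcomp : CRPS a b (Fl t) (y t) ≤ ∫ u, -(1/2) * Real.log (g u) ∂μ := by
      rw [CRPS, intervalIntegral.integral_of_le hab.le]
      have : (∫ u in Set.Ioc a b, (Fl t u - Heav (u - y t))^2)
          ≤ ∫ u in Set.Ioc a b, -(1/2) * Real.log (g u) := by
        apply setIntegral_mono_on hintFl hinthalf measurableSet_Ioc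
        intro u hu
        exact hpt u (Set.Ioc_subset_Icc_self hu)
      exact this
    -- put it together
    have hS1pos := hSpos (t+1)
    have hStpos := hSpos t
    calc CRPS a b (Fl t) (y t) ≤ ∫ u, -(1/2) * Real.log (g u) ∂μ := hcomp
      _ = -(1/2) * ∫ u, Real.log (g u) ∂μ := integral_const_mul _ _
      _ ≤ -(1/2) * ((b-a) * Real.log (S (t+1) / S t)) := by
          have h5 : (b-a) * Real.log (S (t+1)/S t) ≤ ∫ u, Real.log (g u) ∂μ := by
            have := mul_le_mul_of_nonneg_left hJ2 hba.le
            rw [hwid] at this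
            calc (b-a) * Real.log (S (t+1)/S t)
                ≤ (b-a) * ((b-a)⁻¹ * ∫ u, Real.log (g u) ∂μ) := this
              _ = ∫ u, Real.log (g u) ∂μ := by field_simp
          linarith
      _ = ((b-a)/2) * (Real.log (S t) - Real.log (S (t+1))) := by
          rw [Real.log_div hS1pos.ne' hStpos.ne']
          ring
  -- final assembly
  intro T i
  have hsum : ∑ t ∈ Finset.range T, CRPS a b (Fl t) (y t)
      ≤ ∑ t ∈ Finset.range T, ((b-a)/2) * (Real.log (S t) - Real.log (S (t+1))) :=
    Finset.sum_le_sum (fun t _ => key t)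
  have htel : ∑ t ∈ Finset.range T, ((b-a)/2) * (Real.log (S t) - Real.log (S (t+1)))
      = ((b-a)/2) * (Real.log (S 0) - Real.log (S T)) := by
    rw [← Finset.mul_sum, Finset.sum_range_sub' (fun t => Real.log (S t))]
  have hNne : (N:ℝ) ≠ 0 := Nat.cast_ne_zero.mpr hN.ne'
  have hS0 : S 0 = 1 := by
    rw [hSdef]
    simp only [hw0]
    rw [Finset.sum_const, Finset.card_univ, Fintype.card_fin, nsmul_eq_mul]
    field_simp
  have hwTS : w T i ≤ S T := by
    rw [hSdef]
    exact Finset.single_le_sum (fun j _ => (hwpos T j).le) (Finset.mem_univ i)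
  have hlogS : Real.log (S T) ≥ -Real.log N - (2/(b-a)) * ∑ t ∈ Finset.range T, CRPS a b (F i t) (y t) := by
    have h1 := Real.log_le_log (hwpos T i) hwTS
    have h2 : Real.log (w T i) = -Real.log N
        - (2/(b-a)) * ∑ t ∈ Finset.range T, CRPS a b (F i t) (y t) := by
      rw [hwT T i, Real.log_mul (by positivity) (Real.exp_ne_zero _), Real.log_exp,
        one_div, Real.log_inv]
      ring
    linarith
  have hfinal : ((b-a)/2) * (Real.log (S 0) - Real.log (S T))
      ≤ ∑ t ∈ Finset.range T, CRPS a b (F i t) (y t) + ((b-a)/2) * Real.log N := by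
    rw [hS0, Real.log_one]
    have h3 : ((b-a)/2) * (0 - Real.log (S T))
        ≤ ((b-a)/2) * (Real.log N + (2/(b-a)) * ∑ t ∈ Finset.range T, CRPS a b (F i t) (y t)) := by
      apply mul_le_mul_of_nonneg_left _ (by positivity)
      linarith
    have h4 : ((b-a)/2) * (Real.log N + (2/(b-a)) * ∑ t ∈ Finset.range T, CRPS a b (F i t) (y t))
        = ∑ t ∈ Finset.range T, CRPS a b (F i t) (y t) + ((b-a)/2) * Real.log N := by
      field_simp
      ring
    linarith
  linarith [hsum, htel ▸ hsum, hfinal]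
end

section
/- Exponential concavity of CRPS: for 0 < η ≤ 1/(2(b-a)), the map F ↦ exp(-η CRPS(F,y)) is concave on the convex set of probability distribution functions on [a,b], for each fixed y ∈ [a,b]. In particular, for a probability vector (q_1,…,q_N) and distribution functions F_1,…,F_N, the weighted average F = Σ_i q_i F_i satisfies exp(-η CRPS(F,y)) ≥ Σ_i q_i exp(-η CRPS(F_i,y)) for all y. -/
open MeasureTheory Finset

/-- Concavity of `x ↦ exp (-κ x²)` on `[-1,1]` for `0 < κ ≤ 1/2`. -/
lemma expsq_concave {κ : ℝ} (hκ0 : 0 < κ) (hκ : κ ≤ 1/2) :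
    ConcaveOn ℝ (Set.Icc (-1:ℝ) 1) (fun x => Real.exp (-κ * x^2)) := by
  have hder : ∀ x : ℝ, HasDerivAt (fun x => Real.exp (-κ * x^2))
      (Real.exp (-κ * x^2) * (-κ * (2*x))) x := by
    intro x
    have h1 : HasDerivAt (fun x : ℝ => -κ * x^2) (-κ * (2*x)) x := by
      simpa [mul_comm, mul_assoc, mul_left_comm] using ((hasDerivAt_pow 2 x).const_mul (-κ))
    exact h1.exp
  have hder2 : ∀ x : ℝ, HasDerivAt (fun x => Real.exp (-κ * x^2) * (-κ * (2*x)))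
      (Real.exp (-κ * x^2) * (4*κ^2*x^2 - 2*κ)) x := by
    intro x
    have h1 : HasDerivAt (fun x : ℝ => -κ * (2*x)) (-κ * 2) x := by
      simpa [mul_assoc] using (hasDerivAt_id x).const_mul (-κ * 2)
    have := (hder x).mul h1
    exact this.congr_deriv (by ring)
  refine concaveOn_of_hasDerivWithinAt2_nonpos (convex_Icc _ _)
    (f' := fun x => Real.exp (-κ * x^2) * (-κ * (2*x)))
    (f'' := fun x => Real.exp (-κ * x^2) * (4*κ^2*x^2 - 2*κ))
    (Continuous.continuousOn (by continuity)) (fun x _ => (hder x).hasDerivWithinAt)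
    (fun x _ => (hder2 x).hasDerivWithinAt) ?_
  intro x hx
  rw [interior_Icc] at hx
  have hx2 : x^2 ≤ 1 := by nlinarith [hx.1, hx.2]
  have he : 0 < Real.exp (-κ * x^2) := Real.exp_pos _
  have h1 : 4*κ^2*x^2 - 2*κ ≤ 0 := by
    nlinarith [mul_le_mul_of_nonneg_left hx2 (by positivity : (0:ℝ) ≤ 4*κ^2)]
  exact mul_nonpos_iff.2 (Or.inl ⟨he.le, h1⟩)

/-- Jensen step for the geometric mean. -/
lemma log_mix_ge {t s m₁ m₂ p q : ℝ} (ht : 0 < t) (hs : 0 < s) :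
    t * Real.exp m₁ / (t * Real.exp m₁ + s * Real.exp m₂) * (p - m₁)
      + s * Real.exp m₂ / (t * Real.exp m₁ + s * Real.exp m₂) * (q - m₂)
      + Real.log (t * Real.exp m₁ + s * Real.exp m₂)
      ≤ Real.log (t * Real.exp p + s * Real.exp q) := by
  set α := t * Real.exp m₁ with hα'
  set β := s * Real.exp m₂ with hβ'
  have hα : 0 < α := by positivity
  have hβ : 0 < β := by positivity
  have hαβ : 0 < α + β := by linarith
  set X := (α + β) * Real.exp p / Real.exp m₁ with hX'
  set Y := (α + β) * Real.exp q / Real.exp m₂ with hY'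
  have hX : 0 < X := by positivity
  have hY : 0 < Y := by positivity
  have key := strictConcaveOn_log_Ioi.concaveOn.2 (Set.mem_Ioi.2 hX) (Set.mem_Ioi.2 hY)
    (le_of_lt (by positivity : (0:ℝ) < α/(α+β))) (le_of_lt (by positivity : (0:ℝ) < β/(α+β)))
    (by field_simp)
  have hmix : (α/(α+β)) • X + (β/(α+β)) • Y = t * Real.exp p + s * Real.exp q := by
    rw [smul_eq_mul, smul_eq_mul, hX', hY', hα', hβ']
    field_simp [Real.exp_ne_zero]
  have hlogX : Real.log X = Real.log (α + β) + (p - m₁) := by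
    rw [hX', Real.log_div (by positivity) (Real.exp_ne_zero _), Real.log_mul hαβ.ne'
      (Real.exp_ne_zero _), Real.log_exp, Real.log_exp]
    ring
  have hlogY : Real.log Y = Real.log (α + β) + (q - m₂) := by
    rw [hY', Real.log_div (by positivity) (Real.exp_ne_zero _), Real.log_mul hαβ.ne'
      (Real.exp_ne_zero _), Real.log_exp, Real.log_exp]
    ring
  rw [hmix] at key
  rw [smul_eq_mul, smul_eq_mul, hlogX, hlogY] at key
  have hc : α/(α+β) + β/(α+β) = 1 := by field_simp
  have heq : α/(α+β)*(p-m₁) + β/(α+β)*(q-m₂) + Real.log (α+β)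
      = α/(α+β)*(Real.log (α+β)+(p-m₁)) + β/(α+β)*(Real.log (α+β)+(q-m₂))
        - (α/(α+β)+β/(α+β) - 1) * Real.log (α+β) := by ring
  rw [heq, hc]
  simpa using key

/-- The set of PDFs on `[a,b]` is convex. -/
lemma pdf_convex (a b : ℝ) : Convex ℝ {F : ℝ → ℝ | IsPDF a b F} := by
  rintro F ⟨hFm, hFv, hFa, hFb, hFc⟩ G ⟨hGm, hGv, hGa, hGb, hGc⟩ t s ht hs hts
  have happ : ∀ x, (t • F + s • G) x = t * F x + s * G x := fun x => rfl
  refine ⟨?_, ?_, ?_, ?_, ?_⟩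
  · intro x hx z hz hxz
    rw [happ, happ]
    have h1 := hFm hx hz hxz
    have h2 := hGm hx hz hxz
    nlinarith
  · intro x hx
    rw [happ]
    have h1 := hFv x hx
    have h2 := hGv x hx
    constructor
    · nlinarith [h1.1, h2.1]
    · nlinarith [h1.2, h2.2]
  · rw [happ, hFa, hGa]; ring
  · rw [happ, hFb, hGb]; linarith
  · intro x hx
    exact ((hFc x hx).const_smul t).add ((hGc x hx).const_smul s)

lemma crps_two (a b : ℝ) (hab : a < b) (η : ℝ) (hη0 : 0 < η) (hη : η ≤ 1 / (2*(b-a)))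
    (y : ℝ) {F G : ℝ → ℝ} (hF : IsPDF a b F) (hG : IsPDF a b G)
    {t s : ℝ} (ht : 0 < t) (hs : 0 < s) (hts : t + s = 1) :
    t * Real.exp (-η * CRPS a b F y) + s * Real.exp (-η * CRPS a b G y)
      ≤ Real.exp (-η * CRPS a b (t • F + s • G) y) := by
  have hba : (0:ℝ) < b - a := sub_pos.2 hab
  set κ := η * (b - a) with hκdef
  have hκ0 : 0 < κ := mul_pos hη0 hba
  have hκ : κ ≤ 1/2 := by
    have h2 := (le_div_iff₀ (by positivity : (0:ℝ) < 2*(b-a))).1 hη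
    rw [hκdef]; nlinarith
  set Fm : ℝ → ℝ := t • F + s • G with hFmdef
  have hFmpdf : IsPDF a b Fm := pdf_convex a b hF hG ht.le hs.le hts
  -- the normalized measure
  set M : Measure ℝ := (ENNReal.ofReal (b-a))⁻¹ • (volume.restrict (Set.Ioc a b)) with hM
  have hc0 : (ENNReal.ofReal (b-a))⁻¹ ≠ 0 := by
    simp [ENNReal.inv_ne_zero]
  haveI : IsProbabilityMeasure M := by
    constructor
    rw [hM]
    simp only [Measure.smul_apply, Measure.restrict_apply MeasurableSet.univ,
      Set.univ_inter, Real.volume_Ioc, smul_eq_mul]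
    rw [ENNReal.inv_mul_cancel (by simp [hab]) ENNReal.ofReal_ne_top]
  have hmemae : ∀ᵐ u ∂M, u ∈ Set.Ioc a b := by
    rw [hM, Measure.ae_ennreal_smul_measure_iff hc0]
    exact ae_restrict_mem measurableSet_Ioc
  have hHeav : Measurable Heav := by
    unfold Heav
    exact Measurable.ite measurableSet_Iio measurable_const measurable_const
  -- measurability and integrability
  have meas_l : ∀ {K : ℝ → ℝ}, IsPDF a b K →
      AEMeasurable (fun u => -κ * (K u - Heav (u - y))^2) M := by
    intro K hK
    have h1 : AEMeasurable K (volume.restrict (Set.Ioc a b)) :=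
      aemeasurable_restrict_of_monotoneOn measurableSet_Ioc
        (hK.1.mono Set.Ioc_subset_Icc_self)
    have h1' : AEMeasurable K M := by rw [hM]; exact h1.smul_measure _
    have h2 : AEMeasurable (fun u => Heav (u - y)) M :=
      (hHeav.comp (measurable_id.sub measurable_const)).aemeasurable
    exact ((h1'.sub h2).pow_const 2).const_mul _
  have hbound : ∀ {K : ℝ → ℝ}, IsPDF a b K → ∀ u ∈ Set.Ioc a b,
      (K u - Heav (u - y))^2 ≤ 1 := by
    intro K hK u hu
    have h1 := hK.2.1 u (Set.Ioc_subset_Icc_self hu)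
    have h2 : Heav (u - y) = 0 ∨ Heav (u - y) = 1 := by unfold Heav; split <;> simp
    rcases h2 with h | h <;> rw [h] <;> nlinarith [h1.1, h1.2]
  have hint : ∀ {K : ℝ → ℝ}, IsPDF a b K →
      Integrable (fun u => -κ * (K u - Heav (u - y))^2) M := by
    intro K hK
    refine Integrable.mono' (integrable_const κ) (meas_l hK).aestronglyMeasurable ?_
    filter_upwards [hmemae] with u hu
    have h1 := hbound hK u hu
    have h0 : (0:ℝ) ≤ (K u - Heav (u - y))^2 := sq_nonneg _
    rw [Real.norm_eq_abs, abs_mul, abs_neg, abs_of_pos hκ0, abs_of_nonneg h0]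
    nlinarith
  -- value of the integral
  have hval : ∀ (K : ℝ → ℝ), ∫ u, -κ * (K u - Heav (u - y))^2 ∂M = -η * CRPS a b K y := by
    intro K
    rw [hM, integral_smul_measure, integral_const_mul]
    rw [ENNReal.toReal_inv, ENNReal.toReal_ofReal hba.le]
    rw [show CRPS a b K y = ∫ u in Set.Ioc a b, (K u - Heav (u - y))^2 by
      rw [CRPS, intervalIntegral.integral_of_le hab.le]]
    rw [smul_eq_mul, hκdef]
    field_simp
  -- abbreviations
  set m₁ : ℝ := -η * CRPS a b F y with hm₁
  set m₂ : ℝ := -η * CRPS a b G y with hm₂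
  set α : ℝ := t * Real.exp m₁ with hα'
  set β : ℝ := s * Real.exp m₂ with hβ'
  have hα : 0 < α := by positivity
  have hβ : 0 < β := by positivity
  have hαβ : 0 < α + β := by linarith
  -- pointwise inequality
  have hconc := expsq_concave hκ0 hκ
  have hpt : ∀ u ∈ Set.Ioc a b,
      α/(α+β) * ((-κ * (F u - Heav (u - y))^2) - m₁)
        + β/(α+β) * ((-κ * (G u - Heav (u - y))^2) - m₂) + Real.log (α+β)
      ≤ -κ * (Fm u - Heav (u - y))^2 := by
    intro u hu
    have hFu := hF.2.1 u (Set.Ioc_subset_Icc_self hu)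
    have hGu := hG.2.1 u (Set.Ioc_subset_Icc_self hu)
    have hH : Heav (u - y) = 0 ∨ Heav (u - y) = 1 := by unfold Heav; split <;> simp
    set x₁ : ℝ := F u - Heav (u - y) with hx₁'
    set x₂ : ℝ := G u - Heav (u - y) with hx₂'
    have hx₁ : x₁ ∈ Set.Icc (-1:ℝ) 1 := by
      rcases hH with h | h <;> rw [hx₁', h] <;>
        exact ⟨by linarith [hFu.1], by linarith [hFu.2]⟩
    have hx₂ : x₂ ∈ Set.Icc (-1:ℝ) 1 := by
      rcases hH with h | h <;> rw [hx₂', h] <;>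
        exact ⟨by linarith [hGu.1], by linarith [hGu.2]⟩
    have hmixval : Fm u - Heav (u - y) = t * x₁ + s * x₂ := by
      have : Fm u = t * F u + s * G u := rfl
      rw [this, hx₁', hx₂']
      have hs' : s = 1 - t := by linarith
      rw [hs']; ring
    have step1 := hconc.2 hx₁ hx₂ ht.le hs.le hts
    simp only [smul_eq_mul] at step1
    have step1' : t * Real.exp (-κ * x₁^2) + s * Real.exp (-κ * x₂^2)
        ≤ Real.exp (-κ * (Fm u - Heav (u - y))^2) := by
      rw [hmixval]; exact step1
    have hpos : 0 < t * Real.exp (-κ * x₁^2) + s * Real.exp (-κ * x₂^2) := by positivity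
    have step2 : Real.log (t * Real.exp (-κ * x₁^2) + s * Real.exp (-κ * x₂^2))
        ≤ -κ * (Fm u - Heav (u - y))^2 :=
      (Real.log_le_iff_le_exp hpos).2 step1'
    have step3 := log_mix_ge (m₁ := m₁) (m₂ := m₂) (p := -κ * x₁^2) (q := -κ * x₂^2) ht hs
    calc α/(α+β) * ((-κ * x₁^2) - m₁) + β/(α+β) * ((-κ * x₂^2) - m₂) + Real.log (α+β)
        ≤ Real.log (t * Real.exp (-κ * x₁^2) + s * Real.exp (-κ * x₂^2)) := step3
      _ ≤ -κ * (Fm u - Heav (u - y))^2 := step2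
  -- integrate
  have hint1 : Integrable (fun u => α/(α+β) * ((-κ * (F u - Heav (u - y))^2) - m₁)) M :=
    ((hint hF).sub (integrable_const m₁)).const_mul _
  have hint2 : Integrable (fun u => β/(α+β) * ((-κ * (G u - Heav (u - y))^2) - m₂)) M :=
    ((hint hG).sub (integrable_const m₂)).const_mul _
  have hint12 : Integrable (fun u => α/(α+β) * ((-κ * (F u - Heav (u - y))^2) - m₁)
      + β/(α+β) * ((-κ * (G u - Heav (u - y))^2) - m₂)) M := hint1.add hint2
  have hφint : Integrable (fun u => α/(α+β) * ((-κ * (F u - Heav (u - y))^2) - m₁)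
      + β/(α+β) * ((-κ * (G u - Heav (u - y))^2) - m₂) + Real.log (α+β)) M :=
    hint12.add (integrable_const _)
  have hmono := integral_mono_ae hφint (hint hFmpdf) (by
    filter_upwards [hmemae] with u hu
    exact hpt u hu)
  have hφval : ∫ u, (α/(α+β) * ((-κ * (F u - Heav (u - y))^2) - m₁)
      + β/(α+β) * ((-κ * (G u - Heav (u - y))^2) - m₂) + Real.log (α+β)) ∂M
      = Real.log (α+β) := by
    rw [integral_add hint12 (integrable_const _), integral_add hint1 hint2,
      integral_const_mul, integral_const_mul,
      integral_sub (hint hF) (integrable_const m₁), integral_sub (hint hG) (integrable_const m₂),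
      hval F, hval G]
    simp only [integral_const, probReal_univ, measure_univ, ENNReal.toReal_one, smul_eq_mul, one_mul]
    rw [hm₁, hm₂]; ring
  rw [hφval, hval Fm] at hmono
  have hfinal : α + β ≤ Real.exp (-η * CRPS a b Fm y) := by
    calc α + β = Real.exp (Real.log (α + β)) := (Real.exp_log hαβ).symm
      _ ≤ Real.exp (-η * CRPS a b Fm y) := Real.exp_le_exp.2 hmono
  exact hfinal

/-- Exponential concavity of CRPS: for 0 < η ≤ 1/(2(b-a)) the map
F ↦ exp(-η CRPS(F,y)) is concave on the convex set of probability distribution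
functions; in particular the weighted average satisfies the mixability inequality. -/
theorem crps_exp_concave (a b : ℝ) (hab : a < b) (η : ℝ)
    (hη0 : 0 < η) (hη : η ≤ 1 / (2 * (b - a))) (y : ℝ) (hy : y ∈ Set.Icc a b) :
    ConcaveOn ℝ {F : ℝ → ℝ | IsPDF a b F}
      (fun F => Real.exp (-η * CRPS a b F y)) ∧
    ∀ (N : ℕ) (q : Fin N → ℝ), (∀ i, 0 ≤ q i) → ∑ i, q i = 1 →
      ∀ F : Fin N → ℝ → ℝ, (∀ i, IsPDF a b (F i)) →
        ∑ i, q i * Real.exp (-η * CRPS a b (F i) y) ≤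
          Real.exp (-η * CRPS a b (fun u => ∑ i, q i * F i u) y) := by
  have hcc : ConcaveOn ℝ {F : ℝ → ℝ | IsPDF a b F}
      (fun F => Real.exp (-η * CRPS a b F y)) := by
    refine ⟨pdf_convex a b, ?_⟩
    intro F hF G hG t s ht hs hts
    rcases eq_or_lt_of_le ht with h0 | ht'
    · have hs1 : s = 1 := by linarith
      subst hs1
      rw [← h0]
      simp
    rcases eq_or_lt_of_le hs with h0 | hs'
    · have ht1 : t = 1 := by linarith
      subst ht1
      rw [← h0]
      simp
    simpa [smul_eq_mul] using crps_two a b hab η hη0 hη y hF hG ht' hs' hts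
  refine ⟨hcc, ?_⟩
  intro N q hq hsum F hFi
  have h := hcc.le_map_sum (t := Finset.univ) (w := q) (p := F)
    (fun i _ => hq i) hsum (fun i _ => hFi i)
  have heq : (∑ i, q i • F i) = (fun u => ∑ i, q i * F i u) := by
    funext u
    simp [Finset.sum_apply, smul_eq_mul]
  rw [heq] at h
  simpa [smul_eq_mul] using h
end

section
/- Regret bound for weighted-average aggregation of CRPS: with weights w_{i,1} = 1/N updated by w_{i,t+1} = w_{i,t} e^{-(1/(2(b-a))) CRPS(F_{i,t}, y_t)} and learner forecast F_t(u) = Σ_i w*_{i,t} F_{i,t}(u), for every T: Σ_{t=1}^T CRPS(F_t,y_t) ≤ min_{1≤i≤N} Σ_{t=1}^T CRPS(F_{i,t},y_t) + 2(b-a) ln N. -/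
open MeasureTheory Finset

lemma heav_mem_s19 (x : ℝ) : Heav x ∈ Set.Icc (0:ℝ) 1 := by
  unfold Heav; split <;> norm_num

lemma integrable_of_bound {a b : ℝ} {f : ℝ → ℝ}
    (hm : AEStronglyMeasurable f (volume.restrict (Set.Ioc a b))) {C : ℝ}
    (hb : ∀ u ∈ Set.Ioc a b, |f u| ≤ C) :
    Integrable f (volume.restrict (Set.Ioc a b)) := by
  refine ⟨hm, ?_⟩
  have : ∀ᵐ u ∂(volume.restrict (Set.Ioc a b)), ‖f u‖ ≤ C :=
    (ae_restrict_iff' measurableSet_Ioc).2 (ae_of_all _ (by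
      simpa [Real.norm_eq_abs] using hb))
  exact HasFiniteIntegral.of_bounded this

lemma pdf_aesm {a b : ℝ} (hab : a < b) {G : ℝ → ℝ} (hG : IsPDF a b G) :
    AEStronglyMeasurable G (volume.restrict (Set.Ioc a b)) := by
  have h1 : MonotoneOn G (Set.uIcc a b) := by
    rw [Set.uIcc_of_le hab.le]; exact hG.1
  have h2 : IntervalIntegrable G volume a b := h1.intervalIntegrable
  rw [intervalIntegrable_iff_integrableOn_Ioc_of_le hab.le] at h2
  exact h2.aestronglyMeasurable

/-- Concavity of `s ↦ exp(-η (A + 2Bs + Cs²))` on `[0,1]` under a derivative bound. -/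
lemma concave_exp_neg_quad (η A B C : ℝ) (hη : 0 < η)
    (h : ∀ s ∈ Set.Icc (0:ℝ) 1, η * (2*B + 2*C*s)^2 ≤ 2*C) :
    ConcaveOn ℝ (Set.Icc (0:ℝ) 1)
      (fun s => Real.exp (-η * (A + 2*B*s + C*s^2))) := by
  have hq : ∀ s : ℝ, HasDerivAt (fun s : ℝ => -η * (A + 2*B*s + C*s^2))
      (-η * (2*B + 2*C*s)) s := by
    intro s
    have h1 : HasDerivAt (fun s : ℝ => A + 2*B*s + C*s^2) (2*B + 2*C*s) s := by
      have h2 : HasDerivAt (fun s : ℝ => A + 2*B*s) (2*B) s := by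
        simpa using ((hasDerivAt_id s).const_mul (2*B)).const_add A
      have h3 : HasDerivAt (fun s : ℝ => C*s^2) (C*(2*s)) s := by
        simpa using (hasDerivAt_pow 2 s).const_mul C
      exact (h2.add h3).congr_deriv (by ring)
    simpa using h1.const_mul (-η)
  have hf : ∀ s : ℝ, HasDerivAt (fun s : ℝ => Real.exp (-η * (A + 2*B*s + C*s^2)))
      (Real.exp (-η * (A + 2*B*s + C*s^2)) * (-η * (2*B + 2*C*s))) s := fun s => (hq s).exp
  have hf2 : ∀ s : ℝ, HasDerivAt
      (fun s : ℝ => Real.exp (-η * (A + 2*B*s + C*s^2)) * (-η * (2*B + 2*C*s)))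
      (Real.exp (-η * (A + 2*B*s + C*s^2)) * (-η * (2*B + 2*C*s)) * (-η * (2*B + 2*C*s))
        + Real.exp (-η * (A + 2*B*s + C*s^2)) * (-η * (2*C))) s := by
    intro s
    have h4 : HasDerivAt (fun s : ℝ => -η * (2*B + 2*C*s)) (-η * (2*C)) s := by
      simpa using (((hasDerivAt_id s).const_mul (2*C)).const_add (2*B)).const_mul (-η)
    exact (hf s).mul h4
  refine concaveOn_of_hasDerivWithinAt2_nonpos (convex_Icc 0 1)
    (Continuous.continuousOn (by fun_prop))
    (fun s hs => ((hf s).hasDerivWithinAt))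
    (fun s hs => ((hf2 s).hasDerivWithinAt)) ?_
  intro s hs
  rw [interior_Icc] at hs
  have hs' : s ∈ Set.Icc (0:ℝ) 1 := ⟨hs.1.le, hs.2.le⟩
  have hE : (0:ℝ) < Real.exp (-η * (A + 2*B*s + C*s^2)) := Real.exp_pos _
  have key := h s hs'
  have key2 : η * (η * (2*B + 2*C*s)^2) ≤ η * (2*C) :=
    mul_le_mul_of_nonneg_left key hη.le
  nlinarith [mul_nonneg hE.le (sub_nonneg.mpr key2)]

/-- Cauchy–Schwarz via discriminant. -/
lemma integral_CS {μ : Measure ℝ} (f g : ℝ → ℝ)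
    (hf2 : Integrable (fun u => f u ^ 2) μ) (hg2 : Integrable (fun u => g u ^ 2) μ)
    (hfg : Integrable (fun u => f u * g u) μ) :
    (∫ u, f u * g u ∂μ) ^ 2 ≤ (∫ u, f u ^ 2 ∂μ) * (∫ u, g u ^ 2 ∂μ) := by
  have key : ∀ x : ℝ, 0 ≤ (∫ u, f u ^ 2 ∂μ) * (x * x) + (2 * ∫ u, f u * g u ∂μ) * x
      + (∫ u, g u ^ 2 ∂μ) := by
    intro x
    have h1 : Integrable (fun u => f u ^ 2 * (x*x) + (2 * (f u * g u)) * x) μ :=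
      ((hf2.mul_const _).add ((hfg.const_mul 2).mul_const x))
    have h2 : ∀ u, (x * f u + g u)^2 = f u ^ 2 * (x*x) + (2 * (f u * g u)) * x + g u ^ 2 := by
      intro u; ring
    have h3 : 0 ≤ ∫ u, (x * f u + g u)^2 ∂μ := integral_nonneg fun u => sq_nonneg _
    calc (0:ℝ) ≤ ∫ u, (x * f u + g u)^2 ∂μ := h3
      _ = ∫ u, (f u ^ 2 * (x*x) + (2 * (f u * g u)) * x + g u ^ 2) ∂μ := by
          congr 1; funext u; exact h2 u
      _ = (∫ u, (f u ^ 2 * (x*x) + (2 * (f u * g u)) * x) ∂μ) + ∫ u, g u ^ 2 ∂μ :=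
          integral_add h1 hg2
      _ = ((∫ u, f u ^ 2 * (x*x) ∂μ) + ∫ u, (2 * (f u * g u)) * x ∂μ) + ∫ u, g u ^ 2 ∂μ := by
          rw [integral_add (hf2.mul_const _) ((hfg.const_mul 2).mul_const x)]
      _ = (∫ u, f u ^ 2 ∂μ) * (x*x) + (2 * ∫ u, f u * g u ∂μ) * x + ∫ u, g u ^ 2 ∂μ := by
          rw [integral_mul_const, integral_mul_const, integral_const_mul]
  have := discrim_le_zero key
  rw [discrim] at this
  nlinarith [this]

lemma exp_integral_congr {μ : Measure ℝ} (η : ℝ) {f g : ℝ → ℝ} (h : ∀ u, f u = g u) :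
    Real.exp (-η * ∫ u, f u ∂μ) = Real.exp (-η * ∫ u, g u ∂μ) := by
  rw [integral_congr_ae (ae_of_all _ h)]

lemma mix_core (a b : ℝ) (hab : a < b) {N : ℕ} (G : Fin N → ℝ → ℝ)
    (hG : ∀ i, IsPDF a b (G i)) (y : ℝ)
    (p : Fin N → ℝ) (hp : ∀ i, 0 ≤ p i) (hp1 : ∑ i, p i = 1) :
    ∑ i, p i * Real.exp (-(1/(2*(b-a))) * CRPS a b (G i) y)
      ≤ Real.exp (-(1/(2*(b-a))) * CRPS a b (fun u => ∑ i, p i * G i u) y) := by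
  have hba : (0:ℝ) < b - a := by linarith
  set η : ℝ := 1/(2*(b-a)) with hηdef
  have hη : 0 < η := by positivity
  have hCR : ∀ (F : ℝ → ℝ), CRPS a b F y
      = ∫ u in Set.Ioc a b, (F u - Heav (u - y)) ^ 2 := by
    intro F; rw [CRPS, intervalIntegral.integral_of_le hab.le]
  set μ := volume.restrict (Set.Ioc a b) with hμdef
  have hHm : AEStronglyMeasurable (fun u => Heav (u - y)) μ :=
    (heav_measurable.comp (measurable_id.sub measurable_const)).aestronglyMeasurable
  have hGm : ∀ i, AEStronglyMeasurable (G i) μ := fun i => pdf_aesm hab (hG i)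
  have hsum : ∀ c : Fin N → ℝ, AEStronglyMeasurable (fun u => ∑ i, c i * G i u) μ :=
    fun c => Finset.aestronglyMeasurable_fun_sum _ fun i _ => (hGm i).const_mul (c i)
  have hmix : ∀ x ∈ stdSimplex ℝ (Fin N), ∀ u ∈ Set.Ioc a b,
      (∑ i, x i * G i u) ∈ Set.Icc (0:ℝ) 1 := by
    intro x hx u hu
    have hGu : ∀ i, G i u ∈ Set.Icc (0:ℝ) 1 := fun i => (hG i).2.1 u ⟨hu.1.le, hu.2⟩
    constructor
    · exact Finset.sum_nonneg fun i _ => mul_nonneg (hx.1 i) (hGu i).1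
    · calc ∑ i, x i * G i u ≤ ∑ i, x i :=
            Finset.sum_le_sum fun i _ => mul_le_of_le_one_right (hx.1 i) (hGu i).2
        _ = 1 := hx.2
  have habs : ∀ x ∈ stdSimplex ℝ (Fin N), ∀ u ∈ Set.Ioc a b,
      |(∑ i, x i * G i u) - Heav (u - y)| ≤ 1 := by
    intro x hx u hu
    have h1 := hmix x hx u hu
    have h2 := heav_mem_s19 (u - y)
    rw [abs_le]; constructor <;> [linarith [h1.1, h2.2]; linarith [h1.2, h2.1]]
  set g : (Fin N → ℝ) → ℝ := fun x =>
    Real.exp (-η * ∫ u, ((∑ i, x i * G i u) - Heav (u - y)) ^ 2 ∂μ) with hgdef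
  have hconc : ConcaveOn ℝ (stdSimplex ℝ (Fin N)) g := by
    refine ⟨convex_stdSimplex ℝ (Fin N), ?_⟩
    intro x hx z hz θ ρ hθ hρ hθρ
    set f : ℝ → ℝ := fun u => (∑ i, z i * G i u) - Heav (u - y) with hfdef
    set d : ℝ → ℝ := fun u => ∑ i, (x i - z i) * G i u with hddef
    have hfm : AEStronglyMeasurable f μ := (hsum z).sub hHm
    have hdm : AEStronglyMeasurable d μ := hsum _
    have hseg : ∀ s u : ℝ,
        (∑ i, (s * x i + (1-s) * z i) * G i u) - Heav (u - y) = f u + s * d u := by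
      intro s u
      have h1 : ∀ i ∈ Finset.univ, (s * x i + (1-s) * z i) * G i u
          = z i * G i u + s * ((x i - z i) * G i u) := fun i _ => by ring
      rw [Finset.sum_congr rfl h1, Finset.sum_add_distrib, ← Finset.mul_sum]
      simp only [hfdef, hddef]; ring
    have hsegmem : ∀ s : ℝ, s ∈ Set.Icc (0:ℝ) 1 →
        (fun i => s * x i + (1-s) * z i) ∈ stdSimplex ℝ (Fin N) := by
      intro s hs
      have := (convex_stdSimplex ℝ (Fin N)) hx hz hs.1 (by linarith [hs.2])
        (by ring : s + (1 - s) = 1)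
      simpa [Pi.add_def, Pi.smul_def, smul_eq_mul] using this
    have hseg_bd : ∀ s ∈ Set.Icc (0:ℝ) 1, ∀ u ∈ Set.Ioc a b, |f u + s * d u| ≤ 1 := by
      intro s hs u hu
      rw [← hseg s u]
      exact habs _ (hsegmem s hs) u hu
    have hf1 : ∀ u ∈ Set.Ioc a b, |f u| ≤ 1 := by
      intro u hu
      have := hseg_bd 0 ⟨le_refl 0, zero_le_one⟩ u hu
      simpa using this
    have hd2 : ∀ u ∈ Set.Ioc a b, |d u| ≤ 2 := by
      intro u hu
      have h1 := hseg_bd 1 ⟨zero_le_one, le_refl 1⟩ u hu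
      have h2 := hf1 u hu
      rw [abs_le] at *
      constructor <;> [linarith [h1.1, h2.2]; linarith [h1.2, h2.1]]
    have hfm2 : AEStronglyMeasurable (fun u => f u ^ 2) μ := by
      have h1 : (fun u => f u ^ 2) = fun u => f u * f u := funext fun u => pow_two (f u)
      rw [h1]; exact hfm.mul hfm
    have hdm2 : AEStronglyMeasurable (fun u => d u ^ 2) μ := by
      have h1 : (fun u => d u ^ 2) = fun u => d u * d u := funext fun u => pow_two (d u)
      rw [h1]; exact hdm.mul hdm
    have If2 : Integrable (fun u => f u ^ 2) μ :=
      integrable_of_bound hfm2 (C := 1) (fun u hu => by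
        rw [abs_pow]
        calc |f u| ^ 2 ≤ 1 ^ 2 := pow_le_pow_left₀ (abs_nonneg _) (hf1 u hu) 2
          _ = 1 := one_pow 2)
    have Ifd : Integrable (fun u => f u * d u) μ :=
      integrable_of_bound (hfm.mul hdm) (C := 2) (fun u hu => by
        rw [abs_mul]
        calc |f u| * |d u| ≤ 1 * 2 :=
          mul_le_mul (hf1 u hu) (hd2 u hu) (abs_nonneg _) zero_le_one
          _ = 2 := one_mul 2)
    have Id2 : Integrable (fun u => d u ^ 2) μ :=
      integrable_of_bound hdm2 (C := 4) (fun u hu => by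
        rw [abs_pow]
        calc |d u| ^ 2 ≤ 2 ^ 2 := pow_le_pow_left₀ (abs_nonneg _) (hd2 u hu) 2
          _ = 4 := by norm_num)
    set A := ∫ u, f u ^ 2 ∂μ with hAdef
    set B := ∫ u, f u * d u ∂μ with hBdef
    set C := ∫ u, d u ^ 2 ∂μ with hCdef
    have hC0 : 0 ≤ C := integral_nonneg fun u => sq_nonneg _
    have hquad : ∀ s : ℝ, ∫ u, (f u + s * d u) ^ 2 ∂μ = A + 2*B*s + C*s^2 := by
      intro s
      have hI2 : Integrable (fun u => (2*s) * (f u * d u) + (s^2) * (d u ^ 2)) μ :=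
        (Ifd.const_mul _).add (Id2.const_mul _)
      have h1 : (fun u => (f u + s * d u) ^ 2)
          = fun u => f u ^ 2 + ((2*s) * (f u * d u) + (s^2) * (d u ^ 2)) := by
        funext u; ring
      rw [h1, integral_add If2 hI2,
        integral_add (Ifd.const_mul _) (Id2.const_mul _),
        integral_const_mul, integral_const_mul]
      ring
    have hcond : ∀ s ∈ Set.Icc (0:ℝ) 1, η * (2*B + 2*C*s)^2 ≤ 2*C := by
      intro s hs
      have hfsm : AEStronglyMeasurable (fun u => f u + s * d u) μ :=
        hfm.add (hdm.const_mul s)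
      have hfsm2 : AEStronglyMeasurable (fun u => (f u + s * d u) ^ 2) μ := by
        have h1 : (fun u => (f u + s * d u) ^ 2)
            = fun u => (f u + s * d u) * (f u + s * d u) := funext fun u => pow_two _
        rw [h1]; exact hfsm.mul hfsm
      have Ifs2 : Integrable (fun u => (f u + s * d u) ^ 2) μ :=
        integrable_of_bound hfsm2 (C := 1) (fun u hu => by
          rw [abs_pow]
          calc |f u + s * d u| ^ 2 ≤ 1 ^ 2 :=
            pow_le_pow_left₀ (abs_nonneg _) (hseg_bd s hs u hu) 2
            _ = 1 := one_pow 2)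
      have Ifsd : Integrable (fun u => (f u + s * d u) * d u) μ :=
        integrable_of_bound (hfsm.mul hdm) (C := 2) (fun u hu => by
          rw [abs_mul]
          calc |f u + s * d u| * |d u| ≤ 1 * 2 :=
            mul_le_mul (hseg_bd s hs u hu) (hd2 u hu) (abs_nonneg _) zero_le_one
            _ = 2 := one_mul 2)
      have hCS := integral_CS (fun u => f u + s * d u) d Ifs2 Id2 Ifsd
      have hBC : ∫ u, (f u + s * d u) * d u ∂μ = B + C * s := by
        have h1 : (fun u => (f u + s * d u) * d u)
            = fun u => f u * d u + s * (d u ^ 2) := by funext u; ring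
        rw [h1, integral_add Ifd (Id2.const_mul _), integral_const_mul]
        ring
      have hfs2_le : ∫ u, (f u + s * d u) ^ 2 ∂μ ≤ b - a := by
        have h1 : ∫ u, (1:ℝ) ∂μ = b - a := by
          rw [integral_const]
          simp [hμdef, Real.volume_Ioc, ENNReal.toReal_ofReal hba.le, hab.le]
        calc ∫ u, (f u + s * d u) ^ 2 ∂μ ≤ ∫ u, (1:ℝ) ∂μ := by
              refine integral_mono_ae Ifs2 (integrable_const 1) ?_
              refine (ae_restrict_iff' measurableSet_Ioc).2 (ae_of_all _ fun u hu => ?_)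
              have h2 := hseg_bd s hs u hu
              simpa using (sq_le_one_iff_abs_le_one _).2 h2
          _ = b - a := h1
      have h4 : (B + C * s)^2 ≤ (b - a) * C := by
        calc (B + C * s)^2 = (∫ u, (f u + s * d u) * d u ∂μ)^2 := by rw [hBC]
          _ ≤ (∫ u, (f u + s * d u) ^ 2 ∂μ) * C := hCS
          _ ≤ (b - a) * C := mul_le_mul_of_nonneg_right hfs2_le hC0
      have h6 : 4 * η * ((b - a) * C) = 2 * C := by
        rw [hηdef]; field_simp; ring
      calc η * (2*B + 2*C*s)^2 = 4 * η * (B + C*s)^2 := by ring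
        _ ≤ 4 * η * ((b - a) * C) := by nlinarith [hη, h4]
        _ = 2 * C := h6
    have hφ := concave_exp_neg_quad η A B C hη hcond
    have hφval : ∀ s : ℝ, Real.exp (-η * (A + 2*B*s + C*s^2))
        = Real.exp (-η * ∫ u, (f u + s * d u) ^ 2 ∂μ) := by
      intro s; rw [hquad s]
    have key := hφ.2 (Set.mem_Icc.2 ⟨zero_le_one, le_refl 1⟩)
      (Set.mem_Icc.2 ⟨le_refl 0, zero_le_one⟩) hθ hρ hθρ
    have hθ1 : θ • (1:ℝ) + ρ • (0:ℝ) = θ := by simp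
    rw [hθ1] at key
    have hgx : g x = Real.exp (-η * (A + 2*B*1 + C*1^2)) := by
      rw [hφval 1]
      refine exp_integral_congr η fun u => ?_
      have h7 : (∑ i, x i * G i u) = ∑ i, (1 * x i + (1-1) * z i) * G i u :=
        Finset.sum_congr rfl fun i _ => by ring
      rw [h7, hseg 1 u]
    have hgz : g z = Real.exp (-η * (A + 2*B*0 + C*0^2)) := by
      rw [hφval 0]
      refine exp_integral_congr η fun u => ?_
      have h7 : (∑ i, z i * G i u) = ∑ i, (0 * x i + (1-0) * z i) * G i u :=
        Finset.sum_congr rfl fun i _ => by ring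
      rw [h7, hseg 0 u]
    have hgmid : g (θ • x + ρ • z) = Real.exp (-η * (A + 2*B*θ + C*θ^2)) := by
      rw [hφval θ]
      refine exp_integral_congr η fun u => ?_
      have hρθ : ρ = 1 - θ := by linarith
      have h7 : (∑ i, (θ • x + ρ • z) i * G i u)
          = ∑ i, (θ * x i + (1-θ) * z i) * G i u := by
        refine Finset.sum_congr rfl fun i _ => ?_
        simp [Pi.add_apply, Pi.smul_apply, smul_eq_mul, hρθ]
      rw [h7, hseg θ u]
    rw [hgx, hgz, hgmid]
    simpa [smul_eq_mul] using key
  have hsingle : ∀ i : Fin N, g (Pi.single i 1)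
      = Real.exp (-η * CRPS a b (G i) y) := by
    intro i
    rw [hCR]
    refine exp_integral_congr η fun u => ?_
    congr 2
    simp [Pi.single_apply]
  have hpsum : (∑ i, p i • (Pi.single i (1:ℝ) : Fin N → ℝ)) = p := by
    funext j
    simp [Pi.single_apply, Finset.sum_apply, mul_ite]
  have hjensen := hconc.le_map_sum (t := Finset.univ) (w := p)
    (p := fun i => (Pi.single i (1:ℝ) : Fin N → ℝ)) (fun i _ => hp i) (by simpa using hp1)
    (fun i _ => single_mem_stdSimplex ℝ i)
  rw [hpsum] at hjensen
  have hgp : g p = Real.exp (-η * CRPS a b (fun u => ∑ i, p i * G i u) y) := by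
    rw [hCR]
  calc ∑ i, p i * Real.exp (-η * CRPS a b (G i) y)
      = ∑ i, p i • g ((Pi.single i (1:ℝ) : Fin N → ℝ)) := by
        refine Finset.sum_congr rfl fun i _ => ?_
        rw [hsingle i, smul_eq_mul]
    _ ≤ g p := hjensen
    _ = Real.exp (-η * CRPS a b (fun u => ∑ i, p i * G i u) y) := hgp

/-- Regret bound for weighted-average (WA) aggregation of CRPS: the learner's
cumulative CRPS is at most every expert's cumulative CRPS plus 2(b-a) ln N. -/
theorem crps_wa_regret (a b : ℝ) (hab : a < b) (N : ℕ) (hN : 0 < N)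
    (F : Fin N → ℕ → ℝ → ℝ) (hF : ∀ i t, IsPDF a b (F i t))
    (y : ℕ → ℝ) (hy : ∀ t, y t ∈ Set.Icc a b)
    (w : ℕ → Fin N → ℝ)
    (hw0 : ∀ i, w 0 i = 1 / N)
    (hwt : ∀ t i, w (t + 1) i = w t i *
      Real.exp (-(1 / (2 * (b - a))) * CRPS a b (F i t) (y t)))
    (Fl : ℕ → ℝ → ℝ)
    (hFl : ∀ t u, Fl t u = ∑ i, (w t i / ∑ j, w t j) * F i t u) :
    ∀ (T : ℕ) (i : Fin N),
      ∑ t ∈ Finset.range T, CRPS a b (Fl t) (y t) ≤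
        ∑ t ∈ Finset.range T, CRPS a b (F i t) (y t) +
          2 * (b - a) * Real.log N := by
  intro T i
  have hba : (0:ℝ) < b - a := by linarith
  have hNR : (0:ℝ) < N := by exact_mod_cast hN
  set η : ℝ := 1 / (2 * (b - a)) with hηdef
  have hη : 0 < η := by positivity
  set ℓ : Fin N → ℕ → ℝ := fun i t => CRPS a b (F i t) (y t) with hℓdef
  set W : ℕ → ℝ := fun t => ∑ j, w t j with hWdef
  have hpos : ∀ t i, 0 < w t i := by
    intro t
    induction t with
    | zero => intro i; rw [hw0 i]; positivity
    | succ t ih => intro i; rw [hwt t i]; exact mul_pos (ih i) (Real.exp_pos _)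
  haveI : Nonempty (Fin N) := Fin.pos_iff_nonempty.mp hN
  have hW : ∀ t, 0 < W t := fun t =>
    Finset.sum_pos (fun j _ => hpos t j) Finset.univ_nonempty
  -- closed form for weights
  have hwT : ∀ (T : ℕ) (i : Fin N),
      w T i = (1 / N) * Real.exp (-η * ∑ t ∈ Finset.range T, ℓ i t) := by
    intro T
    induction T with
    | zero => intro i; simp [hw0 i]
    | succ T ih =>
        intro i
        rw [hwt T i, ih i, Finset.sum_range_succ, mul_assoc, ← Real.exp_add]
        congr 2
        ring
  -- per-round inequality
  have hstep : ∀ t, CRPS a b (Fl t) (y t) ≤ (Real.log (W t) - Real.log (W (t+1))) / η := by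
    intro t
    set p : Fin N → ℝ := fun i => w t i / W t with hpdef
    have hp : ∀ i, 0 ≤ p i := fun i => div_nonneg (hpos t i).le (hW t).le
    have hp1 : ∑ i, p i = 1 := by
      rw [hpdef]
      rw [← Finset.sum_div]
      exact div_self (hW t).ne'
    have hmc := mix_core a b hab (fun i => F i t) (fun i => hF i t) (y t) p hp hp1
    have hFlC : CRPS a b (Fl t) (y t)
        = CRPS a b (fun u => ∑ i, p i * F i t u) (y t) := by
      congr 1
      funext u
      rw [hFl t u]
    have hsum : ∑ i, p i * Real.exp (-η * ℓ i t) = W (t+1) / W t := by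
      rw [hpdef, hWdef]
      rw [Finset.sum_div]
      refine Finset.sum_congr rfl fun j _ => ?_
      rw [hwt t j]
      ring
    have hWre : 0 < W (t+1) / W t := div_pos (hW (t+1)) (hW t)
    have h1 : W (t+1) / W t ≤ Real.exp (-η * CRPS a b (Fl t) (y t)) := by
      rw [hFlC, ← hsum]
      exact hmc
    have h2 : Real.log (W (t+1) / W t) ≤ -η * CRPS a b (Fl t) (y t) := by
      calc Real.log (W (t+1) / W t) ≤ Real.log (Real.exp (-η * CRPS a b (Fl t) (y t))) :=
            Real.log_le_log hWre h1
        _ = -η * CRPS a b (Fl t) (y t) := Real.log_exp _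
    rw [Real.log_div (hW (t+1)).ne' (hW t).ne'] at h2
    rw [le_div_iff₀ hη]
    nlinarith [h2]
  -- telescoping
  have htel : ∑ t ∈ Finset.range T, CRPS a b (Fl t) (y t)
      ≤ (Real.log (W 0) - Real.log (W T)) / η := by
    calc ∑ t ∈ Finset.range T, CRPS a b (Fl t) (y t)
        ≤ ∑ t ∈ Finset.range T, (Real.log (W t) - Real.log (W (t+1))) / η :=
          Finset.sum_le_sum fun t _ => hstep t
      _ = (∑ t ∈ Finset.range T, (Real.log (W t) - Real.log (W (t+1)))) / η := by
          rw [Finset.sum_div]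
      _ = (Real.log (W 0) - Real.log (W T)) / η := by
          rw [Finset.sum_range_sub' (fun t => Real.log (W t))]
  have hW0 : W 0 = 1 := by
    rw [hWdef]
    simp only [hw0]
    rw [Finset.sum_const, Finset.card_univ, Fintype.card_fin, nsmul_eq_mul]
    field_simp
  have hWT : Real.log (w T i) ≤ Real.log (W T) :=
    Real.log_le_log (hpos T i) (Finset.single_le_sum (fun j _ => (hpos T j).le)
      (Finset.mem_univ i))
  have hlogw : Real.log (w T i) = -Real.log N - η * ∑ t ∈ Finset.range T, ℓ i t := by
    rw [hwT T i, Real.log_mul (by positivity) (Real.exp_pos _).ne',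
      Real.log_exp, one_div, Real.log_inv]
    ring
  have hfinal : (Real.log (W 0) - Real.log (W T)) / η
      ≤ ∑ t ∈ Finset.range T, ℓ i t + 2 * (b - a) * Real.log N := by
    rw [hW0, Real.log_one]
    have h3 : -Real.log (W T) ≤ Real.log N + η * ∑ t ∈ Finset.range T, ℓ i t := by
      have := hWT
      rw [hlogw] at this
      linarith
    rw [div_le_iff₀ hη]
    have h4 : (1:ℝ)/η = 2*(b-a) := by
      rw [hηdef]; field_simp
    have h5 : (∑ t ∈ Finset.range T, ℓ i t + 2 * (b - a) * Real.log N) * η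
        = η * ∑ t ∈ Finset.range T, ℓ i t + (2*(b-a)*η) * Real.log N := by ring
    have h6 : 2*(b-a)*η = 1 := by rw [hηdef]; field_simp
    rw [h5, h6]
    have hlogN : 0 ≤ Real.log N := Real.log_nonneg (by exact_mod_cast hN)
    linarith
  exact le_trans htel hfinal
end
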